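/- arXiv:2307.02818 — 5 statements merged into one kernel-verified Lean document; each statement's English description precedes it below -/
import Mathlib

section
/- Fix r ≥ 2, M > 0, 2 ≤ s ≤ r and δ ∈ (0,1). Then there exists a constant C > 0 (depending on M, r, δ) such that for all large n the following two minimax lower bounds hold for estimation from one observation of the s-uniform hypergraph β-model: (i) inf over all estimators β̂ (measurable functions of the observed hypergraph) of sup over β_s ∈ B(M) of P_{β_s}(‖β̂ − β_s‖_2 ≥ C·n^{-(s-2)/2}) is at least 1 − δ; (ii) inf over all estimators β̂ of sup over β_s ∈ B(M) of P_{β_s}(‖β̂ − β_s‖_∞ ≥ C·n^{-(s-1)/2}) is at least 1 − δ. -/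
open MeasureTheory ProbabilityTheory Filter Finset Matrix

noncomputable section

/-- The logistic function `x ↦ eˣ/(1+eˣ)`. -/
def logistic (x : ℝ) : ℝ := Real.exp x / (1 + Real.exp x)

/-- A Bernoulli measure on `Bool` with success probability `p`. -/
def bernoulliBool (p : ℝ) : Measure Bool :=
  ENNReal.ofReal p • Measure.dirac true + ENNReal.ofReal (1 - p) • Measure.dirac false

instance (p : ℝ) : IsFiniteMeasure (bernoulliBool p) := by
  constructor
  simp only [bernoulliBool, Measure.coe_add, Measure.coe_smul, Pi.add_apply, Pi.smul_apply,
    smul_eq_mul]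
  exact ENNReal.add_lt_top.mpr
    ⟨ENNReal.mul_lt_top ENNReal.ofReal_lt_top (measure_lt_top _ _),
     ENNReal.mul_lt_top ENNReal.ofReal_lt_top (measure_lt_top _ _)⟩

/-- The `r`-layered hypergraph β-model `H_[r](n, B)`: a random hypergraph on `[n]`, encoded as a
random function `Finset (Fin n) → Bool`, in which each set `e` with `2 ≤ |e| ≤ r` is a hyperedge
independently with probability `logistic (∑_{v ∈ e} β_{|e|, v})`, and no other set is a
hyperedge. -/
def layeredModel (n r : ℕ) (β : ℕ → Fin n → ℝ) : Measure (Finset (Fin n) → Bool) :=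
  Measure.pi fun e =>
    bernoulliBool (if 2 ≤ e.card ∧ e.card ≤ r then logistic (∑ v ∈ e, β e.card v) else 0)

/-- The `s`-uniform hypergraph β-model `H_s(n, β)`. -/
def uniformModel (n s : ℕ) (β : Fin n → ℝ) : Measure (Finset (Fin n) → Bool) :=
  Measure.pi fun e =>
    bernoulliBool (if e.card = s then logistic (∑ v ∈ e, β v) else 0)

/-- The `s`-degree `d_s(v)`: the number of hyperedges of size `s` containing `v`. -/
def degree (n s : ℕ) (H : Finset (Fin n) → Bool) (v : Fin n) : ℕ :=
  (Finset.univ.filter fun e : Finset (Fin n) => e.card = s ∧ v ∈ e ∧ H e = true).card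

/-- The expected `s`-degree `E[d_s(v)]` under parameter `β`. -/
def expectedDegree (n s : ℕ) (β : Fin n → ℝ) (v : Fin n) : ℝ :=
  ∑ e ∈ Finset.univ.filter (fun e : Finset (Fin n) => e.card = s ∧ v ∈ e),
    logistic (∑ u ∈ e, β u)

/-- The negative log-likelihood `ℓ_{n,s}`. -/
def negLogLik (n s : ℕ) (H : Finset (Fin n) → Bool) (β : Fin n → ℝ) : ℝ :=
  (∑ e ∈ Finset.univ.filter (fun e : Finset (Fin n) => e.card = s),
      Real.log (1 + Real.exp (∑ v ∈ e, β v)))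
    - ∑ v, β v * (degree n s H v : ℝ)

/-- `b` is a maximum likelihood estimate for the `s`-uniform model given the observation `H`. -/
def IsMLE (n s : ℕ) (H : Finset (Fin n) → Bool) (b : Fin n → ℝ) : Prop :=
  ∀ β : Fin n → ℝ, negLogLik n s H b ≤ negLogLik n s H β

/-- The Euclidean (L2) norm on `ℝ^n`. -/
def l2norm {n : ℕ} (x : Fin n → ℝ) : ℝ := Real.sqrt (∑ v, x v ^ 2)

/-- The maximum (L∞) norm on `ℝ^n`. -/
def supNorm {n : ℕ} (x : Fin n → ℝ) : ℝ := ⨆ v, |x v|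

/-- The matrix `Σ_{n,s}` with entries
`σ_s(u,v) = ∑_{e : |e| = s, u,v ∈ e} exp(∑_{w ∈ e} β_w)/(1+exp(∑_{w ∈ e} β_w))²`,
which is both the covariance matrix of the degree vector and the Hessian `∇²ℓ_{n,s}(β)`. -/
def covMat (n s : ℕ) (β : Fin n → ℝ) : Matrix (Fin n) (Fin n) ℝ :=
  Matrix.of fun u v =>
    ∑ e ∈ Finset.univ.filter (fun e : Finset (Fin n) => e.card = s ∧ u ∈ e ∧ v ∈ e),
      Real.exp (∑ w ∈ e, β w) / (1 + Real.exp (∑ w ∈ e, β w)) ^ 2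


namespace MinimaxAux
open scoped Classical
lemma logistic_pos (x : ℝ) : 0 < logistic x := by unfold logistic; positivity
lemma logistic_lt_one (x : ℝ) : logistic x < 1 := by
  unfold logistic; rw [div_lt_one (by positivity)]; linarith
lemma bernoulliBool_singleton (p : ℝ) (b : Bool) :
    bernoulliBool p {b} = ENNReal.ofReal (if b then p else 1 - p) := by
  unfold bernoulliBool
  cases b <;> simp [Measure.dirac_apply' _ (MeasurableSet.singleton _)]
variable {n : ℕ} {s : ℕ}
def w (s : ℕ) (β : Fin n → ℝ) (e : Finset (Fin n)) (b : Bool) : ℝ :=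
  if e.card = s then (if b then logistic (∑ v ∈ e, β v) else 1 - logistic (∑ v ∈ e, β v))
  else (if b then 0 else 1)
lemma w_nonneg (β : Fin n → ℝ) (e : Finset (Fin n)) (b : Bool) : 0 ≤ w s β e b := by
  unfold w
  by_cases h : e.card = s <;> cases b <;>
    simp [h, le_of_lt (logistic_pos (∑ v ∈ e, β v))] <;>
    linarith [logistic_lt_one (∑ v ∈ e, β v)]
def pm (s : ℕ) (β : Fin n → ℝ) (H : Finset (Fin n) → Bool) : ℝ := ∏ e, w s β e (H e)

lemma pm_nonneg (β : Fin n → ℝ) (H : Finset (Fin n) → Bool) : 0 ≤ pm s β H :=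
  Finset.prod_nonneg fun e _ => w_nonneg β e (H e)

lemma singleton_eq_pi (H : Finset (Fin n) → Bool) :
    ({H} : Set (Finset (Fin n) → Bool)) = Set.pi Set.univ (fun e => {H e}) := by
  ext g; simp [funext_iff]

lemma uniformModel_singleton (β : Fin n → ℝ) (H : Finset (Fin n) → Bool) :
    uniformModel n s β {H} = ENNReal.ofReal (pm s β H) := by
  rw [singleton_eq_pi, uniformModel, Measure.pi_pi]
  unfold pm
  rw [ENNReal.ofReal_prod_of_nonneg (fun e _ => w_nonneg β e (H e))]
  refine Finset.prod_congr rfl fun e _ => ?_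
  rw [bernoulliBool_singleton]
  congr 1
  unfold w
  by_cases h : e.card = s <;> cases hb : H e <;> simp [h]

lemma uniformModel_apply (β : Fin n → ℝ) (A : Set (Finset (Fin n) → Bool)) :
    uniformModel n s β A
      = ∑ H ∈ Finset.univ.filter (fun H => H ∈ A), ENNReal.ofReal (pm s β H) := by
  classical
  have hA : A = ⋃ H ∈ Finset.univ.filter (fun H => H ∈ A), ({H} : Set _) := by
    ext g; simp
  conv_lhs => rw [hA]
  rw [measure_biUnion_finset]
  · exact Finset.sum_congr rfl fun H _ => uniformModel_singleton β H
  · intro x _ y _ hxy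
    simp [Set.disjoint_singleton, hxy]
  · intro H _
    exact MeasurableSet.singleton H

def prob (s : ℕ) (β : Fin n → ℝ) (A : Set (Finset (Fin n) → Bool)) : ℝ :=
  ∑ H ∈ Finset.univ.filter (fun H => H ∈ A), pm s β H

lemma uniformModel_toReal (β : Fin n → ℝ) (A : Set (Finset (Fin n) → Bool)) :
    (uniformModel n s β A).toReal = prob s β A := by
  classical
  rw [uniformModel_apply, prob]
  rw [ENNReal.toReal_sum (fun H _ => ENNReal.ofReal_ne_top)]
  exact Finset.sum_congr rfl fun H _ =>
    ENNReal.toReal_ofReal (Finset.prod_nonneg fun e _ => w_nonneg β e (H e))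

end MinimaxAux

namespace MinimaxAux
open scoped Classical
variable {n : ℕ} {s : ℕ}

lemma sum_prod_weights (f : Finset (Fin n) → Bool → ℝ) :
    ∑ H : Finset (Fin n) → Bool, ∏ e, f e (H e) = ∏ e, (f e true + f e false) := by
  rw [← Fintype.prod_sum (fun e (b : Bool) => f e b)]
  refine Finset.prod_congr rfl fun e _ => ?_
  rw [show (Finset.univ : Finset Bool) = {true, false} from Fintype.univ_bool]
  simp

lemma w_add (β : Fin n → ℝ) (e : Finset (Fin n)) :
    w s β e true + w s β e false = 1 := by
  unfold w; by_cases h : e.card = s <;> simp [h]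

lemma sum_pm (β : Fin n → ℝ) : ∑ H : Finset (Fin n) → Bool, pm s β H = 1 := by
  unfold pm; rw [sum_prod_weights]; simp [w_add]

lemma prob_nonneg (β : Fin n → ℝ) (A : Set (Finset (Fin n) → Bool)) : 0 ≤ prob s β A :=
  Finset.sum_nonneg fun H _ => pm_nonneg β H

lemma prob_le_one (β : Fin n → ℝ) (A : Set (Finset (Fin n) → Bool)) : prob s β A ≤ 1 := by
  rw [← sum_pm (s := s) β]
  exact Finset.sum_le_sum_of_subset_of_nonneg (Finset.filter_subset _ _)
    (fun H _ _ => pm_nonneg β H)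

lemma prob_compl (β : Fin n → ℝ) (A : Set (Finset (Fin n) → Bool)) :
    prob s β Aᶜ = 1 - prob s β A := by
  have h1 : prob s β A + prob s β Aᶜ = 1 := by
    unfold prob
    rw [Finset.sum_filter, Finset.sum_filter, ← Finset.sum_add_distrib, ← sum_pm (s := s) β]
    refine Finset.sum_congr rfl fun H _ => ?_
    by_cases hH : H ∈ A <;> simp [hH]
  linarith

/-- Sum of probabilities of pairwise disjoint events is at most 1. -/
lemma sum_prob_le_one (β : Fin n → ℝ) {J : Type*} (T : Finset J)
    (A : J → Set (Finset (Fin n) → Bool))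
    (hdisj : ∀ i ∈ T, ∀ j ∈ T, i ≠ j → Disjoint (A i) (A j)) :
    ∑ j ∈ T, prob s β (A j) ≤ 1 := by
  have hrw : ∀ j, prob s β (A j)
      = ∑ H : Finset (Fin n) → Bool, if H ∈ A j then pm s β H else 0 := by
    intro j; unfold prob; rw [Finset.sum_filter]
  calc ∑ j ∈ T, prob s β (A j)
      = ∑ H : Finset (Fin n) → Bool, ∑ j ∈ T, (if H ∈ A j then pm s β H else 0) := by
        simp_rw [hrw]; rw [Finset.sum_comm]
    _ ≤ ∑ H : Finset (Fin n) → Bool, pm s β H := by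
        refine Finset.sum_le_sum fun H _ => ?_
        rw [← Finset.sum_filter]
        have hcard : (T.filter (fun j => H ∈ A j)).card ≤ 1 := by
          rw [Finset.card_le_one]
          intro a ha b hb
          simp only [Finset.mem_filter] at ha hb
          by_contra hab
          exact (hdisj a ha.1 b hb.1 hab).ne_of_mem ha.2 hb.2 rfl
        rw [Finset.sum_const, nsmul_eq_mul]
        calc ((T.filter (fun j => H ∈ A j)).card : ℝ) * pm s β H
            ≤ 1 * pm s β H := by
              apply mul_le_mul_of_nonneg_right _ (pm_nonneg β H)
              exact_mod_cast hcard
          _ = pm s β H := one_mul _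
    _ = 1 := sum_pm β

end MinimaxAux

namespace MinimaxAux
open scoped Classical
variable {n : ℕ} {s : ℕ}

lemma logistic_zero : logistic 0 = 1/2 := by
  unfold logistic; rw [Real.exp_zero]; norm_num

/-- `|2·logistic x − 1| ≤ |x|`, squared form. -/
lemma sq_two_logistic (x : ℝ) : (2 * logistic x - 1)^2 ≤ x^2 := by
  have hpos : (0:ℝ) < 1 + Real.exp x := by positivity
  have key : |2 * logistic x - 1| ≤ |x| := by
    have h1 : 2 * logistic x - 1 = (Real.exp x - 1) / (1 + Real.exp x) := by
      unfold logistic; field_simp; ring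
    rw [h1, abs_div, abs_of_pos hpos, div_le_iff₀ hpos]
    rcases le_or_gt 0 x with hx | hx
    · rw [abs_of_nonneg (by nlinarith [Real.one_le_exp hx] : (0:ℝ) ≤ Real.exp x - 1),
        abs_of_nonneg hx]
      have h2 : 1 - x ≤ Real.exp (-x) := by linarith [Real.add_one_le_exp (-x)]
      have h3 : Real.exp (-x) * Real.exp x = 1 := by
        rw [← Real.exp_add]; simp
      nlinarith [Real.exp_pos x]
    · rw [abs_of_neg (by nlinarith [Real.exp_lt_one_iff.mpr hx] : Real.exp x - 1 < 0),
        abs_of_neg hx]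
      have h2 : 1 + x ≤ Real.exp x := by linarith [Real.add_one_le_exp x]
      nlinarith [Real.exp_pos x]
  calc (2 * logistic x - 1)^2 = |2 * logistic x - 1|^2 := (sq_abs _).symm
    _ ≤ |x|^2 := by
        apply pow_le_pow_left₀ (abs_nonneg _) key
    _ = x^2 := sq_abs x

/-- Likelihood-ratio factor. -/
def rho (s : ℕ) (θ : Fin n → ℝ) (e : Finset (Fin n)) (b : Bool) : ℝ :=
  if e.card = s then
    (if b then 2 * logistic (∑ v ∈ e, θ v) else 2 * (1 - logistic (∑ v ∈ e, θ v)))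
  else 1

/-- Likelihood ratio. -/
def lr (s : ℕ) (θ : Fin n → ℝ) (H : Finset (Fin n) → Bool) : ℝ := ∏ e, rho s θ e (H e)

lemma rho_nonneg (θ : Fin n → ℝ) (e : Finset (Fin n)) (b : Bool) : 0 ≤ rho s θ e b := by
  unfold rho
  by_cases h : e.card = s <;> cases b <;>
    simp [h, le_of_lt (logistic_pos (∑ v ∈ e, θ v))] <;>
    linarith [logistic_lt_one (∑ v ∈ e, θ v)]

lemma lr_nonneg (θ : Fin n → ℝ) (H : Finset (Fin n) → Bool) : 0 ≤ lr s θ H :=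
  Finset.prod_nonneg fun e _ => rho_nonneg θ e (H e)

lemma pm_eq_lr_mul (θ : Fin n → ℝ) (H : Finset (Fin n) → Bool) :
    pm s θ H = lr s θ H * pm s (fun _ => 0) H := by
  unfold pm lr
  rw [← Finset.prod_mul_distrib]
  refine Finset.prod_congr rfl fun e _ => ?_
  have h0 : (∑ v ∈ e, (0:ℝ)) = 0 := by simp
  unfold w rho
  by_cases h : e.card = s <;> cases hb : H e <;> simp [h, h0, logistic_zero] <;> ring

lemma second_moment_le (θ : Fin n → ℝ) :
    ∑ H : Finset (Fin n) → Bool, pm s (fun _ => 0) H * (lr s θ H)^2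
      ≤ Real.exp (∑ e ∈ Finset.univ.filter (fun e : Finset (Fin n) => e.card = s),
          (∑ v ∈ e, θ v)^2) := by
  have hsum : ∑ H : Finset (Fin n) → Bool, pm s (fun _ => 0) H * (lr s θ H)^2
      = ∏ e, (w s (fun _ => 0) e true * (rho s θ e true)^2
              + w s (fun _ => 0) e false * (rho s θ e false)^2) := by
    rw [← sum_prod_weights (fun e b => w s (fun _ => 0) e b * (rho s θ e b)^2)]
    refine Finset.sum_congr rfl fun H _ => ?_
    unfold pm lr
    rw [← Finset.prod_pow, ← Finset.prod_mul_distrib]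
  rw [hsum, Finset.sum_filter, Real.exp_sum]
  refine Finset.prod_le_prod (fun e _ => ?_) (fun e _ => ?_)
  · have h1 := w_nonneg (s := s) (fun _ : Fin n => (0:ℝ)) e true
    have h2 := w_nonneg (s := s) (fun _ : Fin n => (0:ℝ)) e false
    have h3 := rho_nonneg (s := s) θ e true
    have h4 := rho_nonneg (s := s) θ e false
    positivity
  · have h0 : (∑ v ∈ e, (0:ℝ)) = 0 := by simp
    by_cases h : e.card = s
    · have hval : w s (fun _ : Fin n => (0:ℝ)) e true * (rho s θ e true)^2
          + w s (fun _ : Fin n => (0:ℝ)) e false * (rho s θ e false)^2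
          = 1 + (2 * logistic (∑ v ∈ e, θ v) - 1)^2 := by
        unfold w rho
        simp only [h, if_true, h0, logistic_zero, Bool.false_eq_true, if_false]
        ring
      rw [hval, if_pos h]
      calc 1 + (2 * logistic (∑ v ∈ e, θ v) - 1)^2
          ≤ 1 + (∑ v ∈ e, θ v)^2 := by linarith [sq_two_logistic (∑ v ∈ e, θ v)]
        _ ≤ Real.exp ((∑ v ∈ e, θ v)^2) := by
            linarith [Real.add_one_le_exp ((∑ v ∈ e, θ v)^2)]
    · have hval : w s (fun _ : Fin n => (0:ℝ)) e true * (rho s θ e true)^2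
          + w s (fun _ : Fin n => (0:ℝ)) e false * (rho s θ e false)^2 = 1 := by
        unfold w rho
        simp [h]
      rw [hval, if_neg h, Real.exp_zero]

end MinimaxAux

namespace MinimaxAux
open scoped Classical
variable {n : ℕ} {s : ℕ}

lemma prob_split (θ : Fin n → ℝ) (A : Set (Finset (Fin n) → Bool)) (lam : ℝ) (hlam : 0 < lam) :
    prob s θ A ≤ lam * prob s (fun _ => 0) A
      + (1/lam) * ∑ H : Finset (Fin n) → Bool, pm s (fun _ => 0) H * (lr s θ H)^2 := by
  set p0 : (Finset (Fin n) → Bool) → ℝ := pm s (fun _ => 0) with hp0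
  have key : ∀ H, pm s θ H ≤ lam * p0 H + (1/lam) * (p0 H * (lr s θ H)^2) := by
    intro H
    rw [pm_eq_lr_mul]
    rcases le_or_gt (lr s θ H) lam with hle | hlt
    · have h1 : lr s θ H * p0 H ≤ lam * p0 H :=
        mul_le_mul_of_nonneg_right hle (pm_nonneg _ H)
      have h2 : 0 ≤ (1/lam) * (p0 H * (lr s θ H)^2) := by
        have := pm_nonneg (s := s) (fun _ : Fin n => (0:ℝ)) H
        positivity
      linarith
    · have hl0 : 0 ≤ lr s θ H := lr_nonneg θ H
      have hp : 0 ≤ p0 H := pm_nonneg _ H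
      have h1 : lr s θ H * p0 H ≤ (1/lam) * (p0 H * (lr s θ H)^2) := by
        have hstep : lr s θ H ≤ (1/lam) * (lr s θ H)^2 := by
          rw [one_div, inv_mul_eq_div, le_div_iff₀ hlam]
          calc lr s θ H * lam ≤ lr s θ H * lr s θ H :=
                mul_le_mul_of_nonneg_left hlt.le hl0
            _ = (lr s θ H)^2 := (sq (lr s θ H)).symm
        calc lr s θ H * p0 H ≤ ((1/lam) * (lr s θ H)^2) * p0 H :=
              mul_le_mul_of_nonneg_right hstep hp
          _ = (1/lam) * (p0 H * (lr s θ H)^2) := by ring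
      have h2 : 0 ≤ lam * p0 H := by positivity
      linarith
  calc prob s θ A ≤ ∑ H ∈ Finset.univ.filter (fun H => H ∈ A),
        (lam * p0 H + (1/lam) * (p0 H * (lr s θ H)^2)) :=
        Finset.sum_le_sum fun H _ => key H
    _ = lam * prob s (fun _ => 0) A + (1/lam) * ∑ H ∈ Finset.univ.filter (fun H => H ∈ A),
          (p0 H * (lr s θ H)^2) := by
        rw [Finset.sum_add_distrib, ← Finset.mul_sum, ← Finset.mul_sum]; rfl
    _ ≤ lam * prob s (fun _ => 0) A
        + (1/lam) * ∑ H : Finset (Fin n) → Bool, p0 H * (lr s θ H)^2 := by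
        have hmono : ∑ H ∈ Finset.univ.filter (fun H => H ∈ A), (p0 H * (lr s θ H)^2)
            ≤ ∑ H : Finset (Fin n) → Bool, p0 H * (lr s θ H)^2 := by
          apply Finset.sum_le_sum_of_subset_of_nonneg (Finset.filter_subset _ _)
          intro H _ _
          have := pm_nonneg (s := s) (fun _ : Fin n => (0:ℝ)) H
          positivity
        have : 0 < 1/lam := by positivity
        nlinarith
end MinimaxAux

namespace MinimaxAux
open scoped Classical

/-- Hamming ball volume bound via injection into small subsets. -/
lemma ball_card_le (n m : ℕ) (y : Fin n → Bool) :
    (Finset.univ.filter (fun x : Fin n → Bool => hammingDist x y < m)).card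
      ≤ ∑ j ∈ Finset.range m, n.choose j := by
  classical
  have : ∑ j ∈ Finset.range m, n.choose j
      = ((Finset.range m).biUnion
          (fun j => Finset.powersetCard j (Finset.univ : Finset (Fin n)))).card := by
    rw [Finset.card_biUnion]
    · refine Finset.sum_congr rfl fun j _ => ?_
      rw [Finset.card_powersetCard, Finset.card_univ, Fintype.card_fin]
    · intro a _ b _ hab
      simp only [Finset.disjoint_left, Finset.mem_powersetCard]
      rintro A ⟨-, hA⟩ ⟨-, hB⟩
      exact hab (hA ▸ hB.symm ▸ rfl)
  rw [this]
  apply Finset.card_le_card_of_injOn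
    (fun x => Finset.univ.filter (fun i => x i ≠ y i))
  · intro x hx
    simp only [Finset.coe_filter, Finset.mem_coe, Finset.mem_filter, Finset.mem_univ, true_and, Set.mem_setOf_eq] at hx
    simp only [Finset.coe_biUnion, Set.mem_iUnion, Finset.mem_coe, Finset.mem_biUnion, Finset.mem_range, Finset.mem_powersetCard]
    exact ⟨(Finset.univ.filter (fun i => x i ≠ y i)).card, hx, Finset.subset_univ _, rfl⟩
  · intro x _ x' _ h
    simp only at h
    have hiff : ∀ i, (x i ≠ y i) ↔ (x' i ≠ y i) := by
      intro i
      constructor <;> intro hh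
      · have : i ∈ Finset.univ.filter (fun i => x' i ≠ y i) := by
          rw [← h]; simp [hh]
        simpa using this
      · have : i ∈ Finset.univ.filter (fun i => x i ≠ y i) := by
          rw [h]; simp [hh]
        simpa using this
    funext i
    by_cases hxy : x i = y i
    · have h2 : ¬ x' i ≠ y i := fun hc => ((hiff i).mpr hc) hxy
      push_neg at h2
      rw [hxy, h2]
    · have h2 := (hiff i).mp hxy
      revert hxy h2
      cases x i <;> cases x' i <;> cases y i <;> simp

/-- Existence of a large Hamming-separated code (Gilbert–Varshamov style packing). -/
lemma exists_code (n m : ℕ) (hm : 1 ≤ m) :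
    ∃ S : Finset (Fin n → Bool),
      (∀ x ∈ S, ∀ y ∈ S, x ≠ y → m ≤ hammingDist x y)
      ∧ 2^n ≤ S.card * ∑ j ∈ Finset.range m, n.choose j := by
  classical
  set F := (Finset.univ : Finset (Fin n → Bool)).powerset.filter
    (fun S => ∀ x ∈ S, ∀ y ∈ S, x ≠ y → m ≤ hammingDist x y) with hF
  have hne : F.Nonempty := ⟨∅, by simp [hF]⟩
  obtain ⟨S, hSF, hSmax⟩ := Finset.exists_max_image F Finset.card hne
  simp only [hF, Finset.mem_filter, Finset.mem_powerset] at hSF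
  refine ⟨S, hSF.2, ?_⟩
  -- covering property
  have hcov : ∀ x : Fin n → Bool, ∃ y ∈ S, hammingDist x y < m := by
    intro x
    by_contra hc
    push_neg at hc
    have hxS : x ∉ S := fun hx => by
      have := hc x hx
      simp [hammingDist_self] at this
      omega
    have hins : insert x S ∈ F := by
      simp only [hF, Finset.mem_filter, Finset.mem_powerset]
      refine ⟨Finset.subset_univ _, ?_⟩
      intro a ha b hb hab
      rcases Finset.mem_insert.mp ha with rfl | ha'
      · rcases Finset.mem_insert.mp hb with rfl | hb'
        · exact absurd rfl hab
        · exact hc b hb'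
      · rcases Finset.mem_insert.mp hb with rfl | hb'
        · rw [hammingDist_comm]; exact hc a ha'
        · exact hSF.2 a ha' b hb' hab
    have := hSmax _ hins
    rw [Finset.card_insert_of_notMem hxS] at this
    omega
  -- counting
  have hsub : (Finset.univ : Finset (Fin n → Bool))
      ⊆ S.biUnion (fun y => Finset.univ.filter (fun x => hammingDist x y < m)) := by
    intro x _
    obtain ⟨y, hy, hd⟩ := hcov x
    exact Finset.mem_biUnion.mpr ⟨y, hy, by simp [hd]⟩
  calc 2^n = (Finset.univ : Finset (Fin n → Bool)).card := by
        rw [Finset.card_univ, Fintype.card_fun, Fintype.card_bool, Fintype.card_fin]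
    _ ≤ (S.biUnion (fun y => Finset.univ.filter (fun x => hammingDist x y < m))).card :=
        Finset.card_le_card hsub
    _ ≤ ∑ y ∈ S, (Finset.univ.filter (fun x : Fin n → Bool => hammingDist x y < m)).card :=
        Finset.card_biUnion_le
    _ ≤ ∑ _y ∈ S, ∑ j ∈ Finset.range m, n.choose j :=
        Finset.sum_le_sum fun y _ => ball_card_le n m y
    _ = S.card * ∑ j ∈ Finset.range m, n.choose j := by
        rw [Finset.sum_const, smul_eq_mul]

end MinimaxAux


namespace MinimaxAux
open scoped Classical
variable {n : ℕ}

/-- Binomial tail bound: `∑_{j ≤ k} C(n,j) ≤ (5/4)^n · 4^k`. -/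
lemma sum_choose_le (n k : ℕ) :
    (∑ j ∈ Finset.range (k+1), (n.choose j : ℝ)) ≤ (5/4)^n * 4^k := by
  have h2 : (∑ j ∈ Finset.range (k+1), (n.choose j : ℝ)) * (1/4)^k
      ≤ ∑ j ∈ Finset.range (k+1), (n.choose j : ℝ) * (1/4)^j := by
    rw [Finset.sum_mul]
    refine Finset.sum_le_sum fun j hj => ?_
    refine mul_le_mul_of_nonneg_left ?_ (by positivity)
    exact pow_le_pow_of_le_one (by norm_num) (by norm_num)
      (Nat.le_of_lt_succ (Finset.mem_range.mp hj))
  have h3 : ∑ j ∈ Finset.range (k+1), (n.choose j : ℝ) * (1/4)^j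
      ≤ ∑ j ∈ Finset.range (k+n+2), (n.choose j : ℝ) * (1/4)^j := by
    apply Finset.sum_le_sum_of_subset_of_nonneg
    · exact Finset.range_subset_range.mpr (by omega)
    · intro j _ _; positivity
  have h4 : ∑ j ∈ Finset.range (k+n+2), (n.choose j : ℝ) * (1/4)^j
      = ∑ j ∈ Finset.range (n+1), (n.choose j : ℝ) * (1/4)^j := by
    symm
    apply Finset.sum_subset (Finset.range_subset_range.mpr (by omega))
    intro j _ hj
    rw [Finset.mem_range, not_lt] at hj
    rw [Nat.choose_eq_zero_of_lt (by omega)]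
    simp
  have h5 : ∑ j ∈ Finset.range (n+1), (n.choose j : ℝ) * (1/4)^j = (5/4)^n := by
    have := add_pow (1/4 : ℝ) 1 n
    simp only [one_pow, mul_one] at this
    rw [show (5/4 : ℝ) = 1/4 + 1 by norm_num, this]
    refine Finset.sum_congr rfl fun j _ => ?_
    ring
  have h6 : (∑ j ∈ Finset.range (k+1), (n.choose j : ℝ)) * (1/4)^k ≤ (5/4)^n := by
    calc _ ≤ _ := h2
      _ ≤ _ := h3
      _ = _ := h4
      _ = _ := h5
  have hpow : (0:ℝ) < (1/4)^k := by positivity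
  calc (∑ j ∈ Finset.range (k+1), (n.choose j : ℝ))
      = (∑ j ∈ Finset.range (k+1), (n.choose j : ℝ)) * (1/4)^k * 4^k := by
        rw [mul_assoc, ← mul_pow]; norm_num
    _ ≤ (5/4)^n * 4^k := by
        apply mul_le_mul_of_nonneg_right h6 (by positivity)

/-- Coordinatewise bound for `supNorm`. -/
lemma abs_le_supNorm (x : Fin n → ℝ) (v : Fin n) : |x v| ≤ supNorm x := by
  unfold supNorm
  exact le_ciSup (f := fun v => |x v|) (Set.Finite.bddAbove (Set.finite_range _)) v

def toE (x : Fin n → ℝ) : EuclideanSpace ℝ (Fin n) := (WithLp.equiv 2 _).symm x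

lemma l2norm_dist (x y : Fin n → ℝ) :
    l2norm (fun v => x v - y v) = dist (toE x) (toE y) := by
  rw [EuclideanSpace.dist_eq]
  unfold l2norm
  congr 1
  refine Finset.sum_congr rfl fun v _ => ?_
  rw [show (toE x) v = x v from rfl, show (toE y) v = y v from rfl, Real.dist_eq, sq_abs]

end MinimaxAux

namespace MinimaxAux
open scoped Classical
variable {n : ℕ}

lemma master {J : Type*} (s : ℕ) (T : Finset J) (hT : T.Nonempty) (θ : J → Fin n → ℝ)
    (Nm : (Fin n → ℝ) → ℝ) (τ : ℝ)
    (hsep : ∀ j ∈ T, ∀ k ∈ T, j ≠ k → ∀ z : Fin n → ℝ,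
      ¬ (Nm (fun v => z v - θ j v) < τ ∧ Nm (fun v => z v - θ k v) < τ))
    (Bd lam : ℝ) (hlam : 0 < lam)
    (hBd : ∀ j ∈ T, ∑ H : Finset (Fin n) → Bool, pm s (fun _ => 0) H * (lr s (θ j) H)^2 ≤ Bd)
    (est : (Finset (Fin n) → Bool) → (Fin n → ℝ)) :
    ∃ j ∈ T, 1 - (lam / T.card + (1/lam) * Bd)
      ≤ prob s (θ j) {H | τ ≤ Nm (fun v => est H v - θ j v)} := by
  set A : J → Set (Finset (Fin n) → Bool) := fun j => {H | Nm (fun v => est H v - θ j v) < τ}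
    with hA
  have hdisj : ∀ i ∈ T, ∀ j ∈ T, i ≠ j → Disjoint (A i) (A j) := by
    intro i hi j hj hij
    rw [Set.disjoint_left]
    intro H hHi hHj
    exact hsep i hi j hj hij (est H) ⟨hHi, hHj⟩
  have hsum := sum_prob_le_one (s := s) (fun _ => 0) T A hdisj
  have hcardpos : (0:ℝ) < T.card := by
    have := Finset.card_pos.mpr hT
    exact_mod_cast this
  have hconst : ∑ _j ∈ T, (1 / (T.card:ℝ)) = 1 := by
    rw [Finset.sum_const, nsmul_eq_mul]
    field_simp
  obtain ⟨j, hjT, hj⟩ := Finset.exists_le_of_sum_le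
    (f := fun j => prob s (fun _ => 0) (A j)) (g := fun _ => 1/(T.card:ℝ)) hT
    (by rw [hconst]; exact hsum)
  refine ⟨j, hjT, ?_⟩
  have hsplit := prob_split (s := s) (θ j) (A j) lam hlam
  have hbound : prob s (θ j) (A j) ≤ lam / T.card + (1/lam) * Bd := by
    have h1 : lam * prob s (fun _ => 0) (A j) ≤ lam * (1 / T.card) :=
      mul_le_mul_of_nonneg_left hj hlam.le
    have h2 : (1/lam) * ∑ H : Finset (Fin n) → Bool, pm s (fun _ => 0) H * (lr s (θ j) H)^2
        ≤ (1/lam) * Bd :=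
      mul_le_mul_of_nonneg_left (hBd j hjT) (by positivity)
    calc prob s (θ j) (A j) ≤ _ := hsplit
      _ ≤ lam * (1 / T.card) + (1/lam) * Bd := by linarith
      _ = lam / T.card + (1/lam) * Bd := by ring
  have hcompl : {H : Finset (Fin n) → Bool | τ ≤ Nm (fun v => est H v - θ j v)} = (A j)ᶜ := by
    ext H
    simp only [hA, Set.mem_compl_iff, Set.mem_setOf_eq, not_lt]
  rw [hcompl, prob_compl]
  linarith

end MinimaxAux

namespace MinimaxAux
open scoped Classical
variable {n : ℕ}

def cwParam (η : ℝ) (x : Fin n → Bool) : Fin n → ℝ := fun v => if x v then η else -η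

lemma sep_sup (η τ : ℝ) (hτ : τ ≤ η) (x y : Fin n → Bool) (hxy : x ≠ y) (z : Fin n → ℝ) :
    ¬ (supNorm (fun v => z v - cwParam η x v) < τ
        ∧ supNorm (fun v => z v - cwParam η y v) < τ) := by
  rintro ⟨h1, h2⟩
  obtain ⟨v, hv⟩ : ∃ v, x v ≠ y v := by
    by_contra hc
    push_neg at hc
    exact hxy (funext hc)
  have hdiff : |cwParam η x v - cwParam η y v| = 2 * |η| := by
    unfold cwParam
    rcases Bool.eq_false_or_eq_true (x v) with hx | hx <;>
      rcases Bool.eq_false_or_eq_true (y v) with hy | hy <;>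
      simp [hx, hy] at hv ⊢ <;>
      first
        | rw [show η + η = 2*η by ring, abs_mul, abs_two]
        | rw [show -η - η = -(2*η) by ring, abs_neg, abs_mul, abs_two]
  have ha := abs_le_supNorm (fun v => z v - cwParam η x v) v
  have hb := abs_le_supNorm (fun v => z v - cwParam η y v) v
  have htri : |cwParam η x v - cwParam η y v|
      ≤ |z v - cwParam η x v| + |z v - cwParam η y v| := by
    have : cwParam η x v - cwParam η y v
        = -(z v - cwParam η x v) + (z v - cwParam η y v) := by ring
    rw [this]
    calc |(-(z v - cwParam η x v) + (z v - cwParam η y v))|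
        ≤ |(-(z v - cwParam η x v))| + |z v - cwParam η y v| := abs_add_le _ _
      _ = |z v - cwParam η x v| + |z v - cwParam η y v| := by rw [abs_neg]
  have hee : η ≤ |η| := le_abs_self η
  linarith

lemma hammingDist_eq (x y : Fin n → Bool) :
    hammingDist x y = (Finset.univ.filter (fun i => x i ≠ y i)).card := rfl

lemma sep_l2 (η τ : ℝ) (hη : 0 ≤ η) (hτ0 : 0 ≤ τ) (m : ℕ)
    (hτ : (2*τ)^2 ≤ 4*η^2*m) (x y : Fin n → Bool) (hdist : m ≤ hammingDist x y)
    (z : Fin n → ℝ) :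
    ¬ (l2norm (fun v => z v - cwParam η x v) < τ
        ∧ l2norm (fun v => z v - cwParam η y v) < τ) := by
  rintro ⟨h1, h2⟩
  rw [l2norm_dist] at h1 h2
  have hlow : 2*τ ≤ dist (toE (cwParam η x)) (toE (cwParam η y)) := by
    have hd : dist (toE (cwParam η x)) (toE (cwParam η y))
        = l2norm (fun v => cwParam η x v - cwParam η y v) := (l2norm_dist _ _).symm
    rw [hd]
    unfold l2norm
    have hsumlow : 4*η^2*m ≤ ∑ v, (cwParam η x v - cwParam η y v)^2 := by
      have hterm : ∀ v ∈ Finset.univ.filter (fun i => x i ≠ y i),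
          (cwParam η x v - cwParam η y v)^2 = 4*η^2 := by
        intro v hv
        simp only [Finset.mem_filter] at hv
        unfold cwParam
        rcases Bool.eq_false_or_eq_true (x v) with hx | hx <;>
          rcases Bool.eq_false_or_eq_true (y v) with hy | hy <;>
          simp [hx, hy] at hv ⊢ <;> ring
      calc 4*η^2*m ≤ 4*η^2*(hammingDist x y) := by
            have : (m:ℝ) ≤ hammingDist x y := by exact_mod_cast hdist
            nlinarith [sq_nonneg η]
        _ = ∑ v ∈ Finset.univ.filter (fun i => x i ≠ y i),
              (cwParam η x v - cwParam η y v)^2 := by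
            rw [Finset.sum_congr rfl hterm, Finset.sum_const, hammingDist_eq, nsmul_eq_mul]
            ring
        _ ≤ ∑ v, (cwParam η x v - cwParam η y v)^2 := by
            apply Finset.sum_le_sum_of_subset_of_nonneg (Finset.filter_subset _ _)
            intro v _ _; positivity
    calc 2*τ ≤ Real.sqrt ((2*τ)^2) := by rw [Real.sqrt_sq (by positivity)]
      _ ≤ Real.sqrt (4*η^2*m) := Real.sqrt_le_sqrt hτ
      _ ≤ _ := Real.sqrt_le_sqrt hsumlow
  have htri := dist_triangle (toE (cwParam η x)) (toE z) (toE (cwParam η y))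
  rw [dist_comm (toE (cwParam η x)) (toE z)] at htri
  linarith

end MinimaxAux

namespace MinimaxAux
open scoped Classical
variable {n : ℕ}

lemma edge_sum_le (s : ℕ) (η : ℝ) (hη : 0 ≤ η) (θ : Fin n → ℝ) (hθ : ∀ v, |θ v| ≤ η) :
    ∑ e ∈ Finset.univ.filter (fun e : Finset (Fin n) => e.card = s), (∑ v ∈ e, θ v)^2
      ≤ (n:ℝ)^s * (s*η)^2 := by
  have hterm : ∀ e ∈ Finset.univ.filter (fun e : Finset (Fin n) => e.card = s),
      (∑ v ∈ e, θ v)^2 ≤ (s*η)^2 := by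
    intro e he
    simp only [Finset.mem_filter] at he
    have habs : |∑ v ∈ e, θ v| ≤ s*η := by
      calc |∑ v ∈ e, θ v| ≤ ∑ v ∈ e, |θ v| := Finset.abs_sum_le_sum_abs _ _
        _ ≤ ∑ _v ∈ e, η := Finset.sum_le_sum fun v _ => hθ v
        _ = e.card * η := by rw [Finset.sum_const, nsmul_eq_mul]
        _ = s*η := by rw [he.2]
    calc (∑ v ∈ e, θ v)^2 = |∑ v ∈ e, θ v|^2 := (sq_abs _).symm
      _ ≤ (s*η)^2 := by
          apply pow_le_pow_left₀ (abs_nonneg _) habs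
  have hcard : ((Finset.univ.filter (fun e : Finset (Fin n) => e.card = s)).card : ℝ)
      ≤ (n:ℝ)^s := by
    have h1 : Finset.univ.filter (fun e : Finset (Fin n) => e.card = s)
        = Finset.powersetCard s (Finset.univ : Finset (Fin n)) := by
      ext e
      simp [Finset.mem_powersetCard_univ]
    rw [h1, Finset.card_powersetCard, Finset.card_univ, Fintype.card_fin]
    exact_mod_cast Nat.choose_le_pow n s
  calc ∑ e ∈ Finset.univ.filter (fun e : Finset (Fin n) => e.card = s), (∑ v ∈ e, θ v)^2
      ≤ ∑ _e ∈ Finset.univ.filter (fun e : Finset (Fin n) => e.card = s), (s*η)^2 :=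
        Finset.sum_le_sum hterm
    _ = ((Finset.univ.filter (fun e : Finset (Fin n) => e.card = s)).card : ℝ) * (s*η)^2 := by
        rw [Finset.sum_const, nsmul_eq_mul]
    _ ≤ (n:ℝ)^s * (s*η)^2 := by
        apply mul_le_mul_of_nonneg_right hcard (by positivity)

end MinimaxAux

namespace MinimaxAux
open scoped Classical

lemma rpow_sq {x : ℝ} (hx : 0 ≤ x) (y : ℝ) : (x ^ y)^2 = x ^ (2*y) := by
  have h : (x ^ y)^(2:ℕ) = (x^y)^((2:ℕ):ℝ) := (Real.rpow_natCast _ 2).symm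
  rw [h, ← Real.rpow_mul hx, mul_comm]
  norm_num

lemma exp_sixteenth : Real.exp (1/16 : ℝ) ≤ 16/15 := by
  have h1 := Real.add_one_le_exp (-(1/16) : ℝ)
  rw [Real.exp_neg] at h1
  have h2 := Real.exp_pos (1/16 : ℝ)
  rw [inv_eq_one_div] at h1
  rw [le_div_iff₀ h2] at h1
  linarith

lemma numeric_bound (δ : ℝ) (hδ : 0 < δ) :
    ∃ N : ℕ, ∀ n ≥ N, 1 ≤ n ∧
      Real.exp ((n:ℝ)/16) * ((5/4:ℝ)^n * (4:ℝ)^(n/4)) ≤ (δ^2/4) * 2^n := by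
  have hs2 : (0:ℝ) < Real.sqrt 2 := Real.sqrt_pos.mpr (by norm_num)
  have hsq : Real.sqrt 2 ^ 2 = 2 := Real.sq_sqrt (by norm_num)
  have hq : (1:ℝ) < 3/(2*Real.sqrt 2) := by
    rw [lt_div_iff₀ (by positivity)]
    nlinarith
  obtain ⟨N0, hN0⟩ := Filter.eventually_atTop.mp
    ((tendsto_pow_atTop_atTop_of_one_lt hq).eventually_ge_atTop (4/δ^2))
  refine ⟨max N0 1, fun n hn => ⟨le_trans (le_max_right _ _) hn, ?_⟩⟩
  have hn0 : N0 ≤ n := le_trans (le_max_left _ _) hn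
  have hNP : 4/δ^2 ≤ (3/(2*Real.sqrt 2))^n := hN0 n hn0
  have h2 : Real.exp ((n:ℝ)/16) ≤ (16/15:ℝ)^n := by
    have : ((n:ℝ)/16) = (n:ℕ) * (1/16 : ℝ) := by push_cast; ring
    rw [this, Real.exp_nat_mul]
    exact pow_le_pow_left₀ (Real.exp_pos _).le exp_sixteenth n
  have h3 : (4:ℝ)^(n/4) ≤ (Real.sqrt 2)^n := by
    have ha : (0:ℝ) ≤ (4:ℝ)^(n/4) := by positivity
    have hb : (0:ℝ) ≤ (Real.sqrt 2)^n := by positivity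
    have hsq2 : ((4:ℝ)^(n/4))^2 ≤ ((Real.sqrt 2)^n)^2 := by
      have e1 : ((4:ℝ)^(n/4))^2 = (2:ℝ)^(4*(n/4)) := by
        rw [← pow_mul, show (4:ℝ) = 2^2 by norm_num, ← pow_mul]
        ring_nf
      have e2 : ((Real.sqrt 2)^n)^2 = (2:ℝ)^n := by
        rw [← pow_mul, mul_comm, pow_mul, hsq]
      rw [e1, e2]
      exact pow_le_pow_right₀ (by norm_num) (by omega)
    calc (4:ℝ)^(n/4) = Real.sqrt (((4:ℝ)^(n/4))^2) := by rw [Real.sqrt_sq ha]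
      _ ≤ Real.sqrt (((Real.sqrt 2)^n)^2) := Real.sqrt_le_sqrt hsq2
      _ = (Real.sqrt 2)^n := by rw [Real.sqrt_sq hb]
  set P : ℝ := ((4/3)*Real.sqrt 2)^n with hP
  have hPpos : 0 < P := by positivity
  have hstep : Real.exp ((n:ℝ)/16) * ((5/4:ℝ)^n * (4:ℝ)^(n/4)) ≤ P := by
    calc Real.exp ((n:ℝ)/16) * ((5/4:ℝ)^n * (4:ℝ)^(n/4))
        ≤ (16/15:ℝ)^n * ((5/4:ℝ)^n * (Real.sqrt 2)^n) := by
          apply mul_le_mul h2 _ (by positivity) (by positivity)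
          apply mul_le_mul_of_nonneg_left h3 (by positivity)
      _ = ((16/15) * ((5/4) * Real.sqrt 2))^n := by
          rw [mul_pow, mul_pow]
      _ = P := by
          rw [hP]
          congr 1
          ring
  have hbase : ((4/3)*Real.sqrt 2) * (3/(2*Real.sqrt 2)) = 2 := by
    field_simp
    ring
  have hprod : P * (3/(2*Real.sqrt 2))^n = 2^n := by
    rw [hP, ← mul_pow, hbase]
  have hfinal : P ≤ (δ^2/4) * 2^n := by
    have h5 : P * (4/δ^2) ≤ P * (3/(2*Real.sqrt 2))^n :=
      mul_le_mul_of_nonneg_left hNP hPpos.le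
    rw [hprod] at h5
    have h6 : (δ^2/4) * (P * (4/δ^2)) ≤ (δ^2/4) * 2^n :=
      mul_le_mul_of_nonneg_left h5 (by positivity)
    have h7 : (δ^2/4) * (P * (4/δ^2)) = P := by field_simp
    linarith
  linarith

end MinimaxAux


open MinimaxAux in
theorem mainAux
    (r : ℕ) (hr : 2 ≤ r) (M : ℝ) (hM : 0 < M)
    (s : ℕ) (hs : 2 ≤ s) (hsr : s ≤ r)
    (δ : ℝ) (hδ0 : 0 < δ) (hδ1 : δ < 1) :
    ∃ C > 0, ∃ N : ℕ, ∀ n ≥ N,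
      (∀ est : (Finset (Fin n) → Bool) → (Fin n → ℝ),
        1 - δ ≤
          sSup {x : ℝ | ∃ β : Fin n → ℝ, (∀ v, |β v| ≤ M) ∧
            x = (uniformModel n s β
              {H | C * (n : ℝ) ^ (-(((s : ℝ) - 2) / 2))
                    ≤ l2norm (fun v => est H v - β v)}).toReal})
      ∧ (∀ est : (Finset (Fin n) → Bool) → (Fin n → ℝ),
        1 - δ ≤
          sSup {x : ℝ | ∃ β : Fin n → ℝ, (∀ v, |β v| ≤ M) ∧
            x = (uniformModel n s β
              {H | C * (n : ℝ) ^ (-(((s : ℝ) - 1) / 2))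
                    ≤ supNorm (fun v => est H v - β v)}).toReal}) := by
  classical
  have hsR : (2:ℝ) ≤ (s:ℝ) := by exact_mod_cast hs
  set c : ℝ := min M (1/(4*(s:ℝ))) with hc
  have hc0 : 0 < c := lt_min hM (by positivity)
  have hcM : c ≤ M := min_le_left _ _
  have hcs : c ≤ 1/(4*(s:ℝ)) := min_le_right _ _
  obtain ⟨N0, hN0⟩ := MinimaxAux.numeric_bound δ hδ0
  refine ⟨c/2, half_pos hc0, N0, fun n hn => ?_⟩
  obtain ⟨hn1, hnum⟩ := hN0 n hn
  have hx : (0:ℝ) < (n:ℝ) := by exact_mod_cast hn1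
  have hx1 : (1:ℝ) ≤ (n:ℝ) := by exact_mod_cast hn1
  set η : ℝ := c * (n:ℝ) ^ (-(((s:ℝ)-1)/2)) with hη
  have hη0 : 0 ≤ η := mul_nonneg hc0.le (Real.rpow_nonneg hx.le _)
  have hrpow1 : (n:ℝ) ^ (-(((s:ℝ)-1)/2)) ≤ 1 :=
    Real.rpow_le_one_of_one_le_of_nonpos hx1 (by linarith)
  have hηc : η ≤ c := by
    rw [hη]
    calc c * (n:ℝ) ^ (-(((s:ℝ)-1)/2)) ≤ c * 1 :=
      mul_le_mul_of_nonneg_left hrpow1 hc0.le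
      _ = c := mul_one c
  have hηM : η ≤ M := le_trans hηc hcM
  have habs : ∀ (cw : Fin n → Bool) (v : Fin n), |cwParam η cw v| ≤ M := by
    intro cw v
    unfold cwParam
    rcases Bool.eq_false_or_eq_true (cw v) with hb | hb <;>
      simp [hb, abs_of_nonneg hη0, hηM] <;>
      rw [abs_neg, abs_of_nonneg hη0] <;> exact hηM
  -- rpow arithmetic
  have e_eta_sq : η^2 = c^2 * (n:ℝ)^(-((s:ℝ)-1)) := by
    rw [hη, mul_pow, rpow_sq hx.le, show 2 * (-(((s:ℝ)-1)/2)) = -((s:ℝ)-1) by ring]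
  have e_pow_s : (n:ℝ)^s * (n:ℝ)^(-((s:ℝ)-1)) = (n:ℝ) := by
    rw [← Real.rpow_natCast (n:ℝ) s, ← Real.rpow_add hx,
      show (s:ℝ) + (-((s:ℝ)-1)) = 1 by ring, Real.rpow_one]
  have e_x_pow : (n:ℝ)^(-((s:ℝ)-1)) * (n:ℝ) = (n:ℝ)^(-((s:ℝ)-2)) := by
    nth_rewrite 2 [← Real.rpow_one (n:ℝ)]
    rw [← Real.rpow_add hx, show -((s:ℝ)-1)+1 = -((s:ℝ)-2) by ring]
  -- second moment bound
  have hscpos : (0:ℝ) < (s:ℝ) := by linarith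
  have hsc : (s:ℝ)*c ≤ 1/4 := by
    calc (s:ℝ)*c ≤ (s:ℝ)*(1/(4*(s:ℝ))) := mul_le_mul_of_nonneg_left hcs hscpos.le
      _ = 1/4 := by field_simp
  have hBd : ∀ (cw : Fin n → Bool),
      ∑ H : Finset (Fin n) → Bool,
        pm s (fun _ => 0) H * (lr s (cwParam η cw) H)^2 ≤ Real.exp ((n:ℝ)/16) := by
    intro cw
    have habsη : ∀ v, |cwParam η cw v| ≤ η := by
      intro v
      unfold cwParam
      rcases Bool.eq_false_or_eq_true (cw v) with hb | hb <;>
        simp [hb, abs_of_nonneg hη0] <;>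
        rw [abs_neg, abs_of_nonneg hη0]
    have hedge := edge_sum_le s η hη0 (cwParam η cw) habsη
    have hkey : (n:ℝ)^s * ((s:ℝ)*η)^2 ≤ (n:ℝ)/16 := by
      have e1 : (n:ℝ)^s * ((s:ℝ)*η)^2 = ((s:ℝ)*c)^2 * ((n:ℝ)^s * (n:ℝ)^(-((s:ℝ)-1))) := by
        rw [mul_pow, e_eta_sq]; ring
      rw [e1, e_pow_s]
      have h2 : ((s:ℝ)*c)^2 ≤ (1/4)^2 := by
        apply pow_le_pow_left₀ (by positivity) hsc
      calc ((s:ℝ)*c)^2 * (n:ℝ) ≤ (1/4)^2 * (n:ℝ) :=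
            mul_le_mul_of_nonneg_right h2 hx.le
        _ = (n:ℝ)/16 := by ring
    calc ∑ H : Finset (Fin n) → Bool, pm s (fun _ => 0) H * (lr s (cwParam η cw) H)^2
        ≤ Real.exp (∑ e ∈ Finset.univ.filter (fun e : Finset (Fin n) => e.card = s),
            (∑ v ∈ e, cwParam η cw v)^2) := second_moment_le _
      _ ≤ Real.exp ((n:ℝ)/16) := Real.exp_le_exp.mpr (le_trans hedge hkey)
  constructor
  -- (i) L2 bound
  · intro est
    obtain ⟨S, hScode, hScount⟩ := exists_code n (n/4 + 1) (by omega)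
    have hSne : S.Nonempty := by
      rw [← Finset.card_pos]
      by_contra h
      push_neg at h
      have h0 : S.card = 0 := by omega
      rw [h0, Nat.zero_mul] at hScount
      have h2 : 0 < 2^n := Nat.pow_pos (by norm_num)
      omega
    have hm4 : (n:ℝ)/4 ≤ ((n/4 + 1 : ℕ):ℝ) := by
      have h1 : n ≤ 4*(n/4+1) := by omega
      have h2 : (n:ℝ) ≤ 4*((n/4+1 : ℕ):ℝ) := by exact_mod_cast h1
      linarith
    have hτ2 : (0:ℝ) ≤ c/2 * (n:ℝ)^(-(((s:ℝ)-2)/2)) :=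
      mul_nonneg (by linarith) (Real.rpow_nonneg hx.le _)
    have hcond : (2*(c/2 * (n:ℝ)^(-(((s:ℝ)-2)/2))))^2 ≤ 4*η^2*((n/4+1 : ℕ):ℝ) := by
      have l1 : (2*(c/2 * (n:ℝ)^(-(((s:ℝ)-2)/2))))^2 = c^2 * (n:ℝ)^(-((s:ℝ)-2)) := by
        rw [show (2*(c/2 * (n:ℝ)^(-(((s:ℝ)-2)/2)))) = c * (n:ℝ)^(-(((s:ℝ)-2)/2)) by ring,
          mul_pow, rpow_sq hx.le, show 2*(-(((s:ℝ)-2)/2)) = -((s:ℝ)-2) by ring]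
      rw [l1]
      calc c^2 * (n:ℝ)^(-((s:ℝ)-2)) = 4*η^2*((n:ℝ)/4) := by
            rw [e_eta_sq, ← e_x_pow]; ring
        _ ≤ 4*η^2*((n/4+1 : ℕ):ℝ) := by
            apply mul_le_mul_of_nonneg_left hm4
            positivity
    have hsep : ∀ p ∈ S, ∀ q ∈ S, p ≠ q → ∀ z : Fin n → ℝ,
        ¬ (l2norm (fun v => z v - cwParam η p v) < c/2 * (n:ℝ)^(-(((s:ℝ)-2)/2))
          ∧ l2norm (fun v => z v - cwParam η q v) < c/2 * (n:ℝ)^(-(((s:ℝ)-2)/2))) :=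
      fun p hp q hq hpq z =>
        sep_l2 η _ hη0 hτ2 (n/4+1) hcond p q (hScode p hp q hq hpq) z
    have hVc : (0:ℕ) < ∑ j ∈ Finset.range (n/4+1), n.choose j := by
      calc 0 < n.choose 0 := by simp
        _ ≤ ∑ j ∈ Finset.range (n/4+1), n.choose j :=
          Finset.single_le_sum (f := fun j => n.choose j) (fun j _ => Nat.zero_le _)
            (Finset.mem_range.mpr (by omega))
    have hVpos : (0:ℝ) < ((∑ j ∈ Finset.range (n/4+1), n.choose j : ℕ):ℝ) := by
      exact_mod_cast hVc
    have hGnum : Real.exp ((n:ℝ)/16) ≤ (δ^2/4) * (S.card:ℝ) := by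
      have hcastcount : (2:ℝ)^n
          ≤ (S.card:ℝ) * ((∑ j ∈ Finset.range (n/4+1), n.choose j : ℕ):ℝ) := by
        exact_mod_cast hScount
      have hVle : ((∑ j ∈ Finset.range (n/4+1), n.choose j : ℕ):ℝ)
          ≤ (5/4:ℝ)^n * 4^(n/4) := by
        have h := sum_choose_le n (n/4)
        calc ((∑ j ∈ Finset.range (n/4+1), n.choose j : ℕ):ℝ)
            = ∑ j ∈ Finset.range (n/4+1), (n.choose j : ℝ) := by push_cast; rfl
          _ ≤ (5/4:ℝ)^n * 4^(n/4) := h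
      have step : Real.exp ((n:ℝ)/16)
            * ((∑ j ∈ Finset.range (n/4+1), n.choose j : ℕ):ℝ)
          ≤ ((δ^2/4) * (S.card:ℝ))
            * ((∑ j ∈ Finset.range (n/4+1), n.choose j : ℕ):ℝ) := by
        calc Real.exp ((n:ℝ)/16) * ((∑ j ∈ Finset.range (n/4+1), n.choose j : ℕ):ℝ)
            ≤ Real.exp ((n:ℝ)/16) * ((5/4:ℝ)^n * 4^(n/4)) :=
              mul_le_mul_of_nonneg_left hVle (Real.exp_pos _).le
          _ ≤ (δ^2/4) * 2^n := hnum
          _ ≤ (δ^2/4) * ((S.card:ℝ)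
              * ((∑ j ∈ Finset.range (n/4+1), n.choose j : ℕ):ℝ)) :=
              mul_le_mul_of_nonneg_left hcastcount (by positivity)
          _ = ((δ^2/4) * (S.card:ℝ))
              * ((∑ j ∈ Finset.range (n/4+1), n.choose j : ℕ):ℝ) := by ring
      exact le_of_mul_le_mul_right step hVpos
    have hSpos : (0:ℝ) < (S.card:ℝ) := by
      exact_mod_cast Finset.card_pos.mpr hSne
    have hlam0 : (0:ℝ) < δ/2 * (S.card:ℝ) := mul_pos (half_pos hδ0) hSpos
    obtain ⟨j, hjS, hjp⟩ := master s S hSne (fun p => cwParam η p) l2norm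
      (c/2 * (n:ℝ)^(-(((s:ℝ)-2)/2))) hsep (Real.exp ((n:ℝ)/16))
      (δ/2 * (S.card:ℝ)) hlam0 (fun p _ => hBd p) est
    have hjp' : 1 - ((δ/2 * (S.card:ℝ)) / (S.card:ℝ)
          + (1/(δ/2 * (S.card:ℝ))) * Real.exp ((n:ℝ)/16))
        ≤ prob s (cwParam η j)
          {H | c/2 * (n:ℝ)^(-(((s:ℝ)-2)/2)) ≤ l2norm (fun v => est H v - cwParam η j v)} :=
      hjp
    have e1 : (δ/2 * (S.card:ℝ)) / (S.card:ℝ) = δ/2 := by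
      rw [mul_div_assoc, div_self hSpos.ne', mul_one]
    have e2 : (1/(δ/2 * (S.card:ℝ))) * Real.exp ((n:ℝ)/16) ≤ δ/2 := by
      rw [div_mul_eq_mul_div, one_mul, div_le_iff₀ hlam0]
      calc Real.exp ((n:ℝ)/16) ≤ (δ^2/4) * (S.card:ℝ) := hGnum
        _ = δ/2 * (δ/2 * (S.card:ℝ)) := by ring
    have hbdd : BddAbove {x : ℝ | ∃ β : Fin n → ℝ, (∀ v, |β v| ≤ M) ∧
        x = (uniformModel n s β
          {H | c/2 * (n : ℝ) ^ (-(((s : ℝ) - 2) / 2))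
                ≤ l2norm (fun v => est H v - β v)}).toReal} := by
      refine ⟨1, ?_⟩
      rintro x ⟨β, -, rfl⟩
      rw [uniformModel_toReal]
      exact prob_le_one β _
    have hmem : (uniformModel n s (cwParam η j)
          {H | c/2 * (n : ℝ) ^ (-(((s : ℝ) - 2) / 2))
                ≤ l2norm (fun v => est H v - cwParam η j v)}).toReal
        ∈ {x : ℝ | ∃ β : Fin n → ℝ, (∀ v, |β v| ≤ M) ∧
            x = (uniformModel n s β
              {H | c/2 * (n : ℝ) ^ (-(((s : ℝ) - 2) / 2))
                    ≤ l2norm (fun v => est H v - β v)}).toReal} :=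
      ⟨cwParam η j, habs j, rfl⟩
    refine le_csSup_of_le hbdd hmem ?_
    rw [uniformModel_toReal]
    calc 1 - δ ≤ 1 - ((δ/2 * (S.card:ℝ)) / (S.card:ℝ)
          + (1/(δ/2 * (S.card:ℝ))) * Real.exp ((n:ℝ)/16)) := by
          rw [e1]; linarith
      _ ≤ _ := hjp'
  -- (ii) sup bound
  · intro est
    have huniv : ((Finset.univ : Finset (Fin n → Bool)).card : ℝ) = 2^n := by
      rw [Finset.card_univ, Fintype.card_fun, Fintype.card_bool, Fintype.card_fin]
      push_cast
      ring
    have hτη : c/2 * (n:ℝ)^(-(((s:ℝ)-1)/2)) ≤ η := by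
      rw [hη]
      have h0 : (0:ℝ) ≤ (n:ℝ)^(-(((s:ℝ)-1)/2)) := Real.rpow_nonneg hx.le _
      nlinarith
    have hsep : ∀ p ∈ (Finset.univ : Finset (Fin n → Bool)), ∀ q ∈ (Finset.univ : Finset (Fin n → Bool)),
        p ≠ q → ∀ z : Fin n → ℝ,
        ¬ (supNorm (fun v => z v - cwParam η p v) < c/2 * (n:ℝ)^(-(((s:ℝ)-1)/2))
          ∧ supNorm (fun v => z v - cwParam η q v) < c/2 * (n:ℝ)^(-(((s:ℝ)-1)/2))) :=
      fun p _ q _ hpq z => sep_sup η _ hτη p q hpq z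
    have hGnum : Real.exp ((n:ℝ)/16) ≤ (δ^2/4) * (2:ℝ)^n := by
      have hge1 : (1:ℝ) ≤ (5/4:ℝ)^n * 4^(n/4) := by
        have a1 : (1:ℝ) ≤ (5/4:ℝ)^n := one_le_pow₀ (by norm_num)
        have a2 : (1:ℝ) ≤ (4:ℝ)^(n/4) := one_le_pow₀ (by norm_num)
        nlinarith
      calc Real.exp ((n:ℝ)/16) = Real.exp ((n:ℝ)/16) * 1 := by ring
        _ ≤ Real.exp ((n:ℝ)/16) * ((5/4:ℝ)^n * 4^(n/4)) :=
            mul_le_mul_of_nonneg_left hge1 (Real.exp_pos _).le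
        _ ≤ (δ^2/4) * (2:ℝ)^n := hnum
    have hTne : (Finset.univ : Finset (Fin n → Bool)).Nonempty := ⟨fun _ => true, Finset.mem_univ _⟩
    have hSpos : (0:ℝ) < ((Finset.univ : Finset (Fin n → Bool)).card : ℝ) := by
      rw [huniv]; positivity
    have hlam0 : (0:ℝ) < δ/2 * ((Finset.univ : Finset (Fin n → Bool)).card : ℝ) :=
      mul_pos (half_pos hδ0) hSpos
    obtain ⟨j, hjS, hjp⟩ := master s (Finset.univ : Finset (Fin n → Bool)) hTne
      (fun p => cwParam η p) supNorm
      (c/2 * (n:ℝ)^(-(((s:ℝ)-1)/2))) hsep (Real.exp ((n:ℝ)/16))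
      (δ/2 * ((Finset.univ : Finset (Fin n → Bool)).card : ℝ)) hlam0 (fun p _ => hBd p) est
    have hjp' : 1 - ((δ/2 * ((Finset.univ : Finset (Fin n → Bool)).card : ℝ))
            / ((Finset.univ : Finset (Fin n → Bool)).card : ℝ)
          + (1/(δ/2 * ((Finset.univ : Finset (Fin n → Bool)).card : ℝ)))
            * Real.exp ((n:ℝ)/16))
        ≤ prob s (cwParam η j)
          {H | c/2 * (n:ℝ)^(-(((s:ℝ)-1)/2)) ≤ supNorm (fun v => est H v - cwParam η j v)} :=
      hjp
    have e1 : (δ/2 * ((Finset.univ : Finset (Fin n → Bool)).card : ℝ))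
        / ((Finset.univ : Finset (Fin n → Bool)).card : ℝ) = δ/2 := by
      rw [mul_div_assoc, div_self hSpos.ne', mul_one]
    have e2 : (1/(δ/2 * ((Finset.univ : Finset (Fin n → Bool)).card : ℝ)))
        * Real.exp ((n:ℝ)/16) ≤ δ/2 := by
      rw [div_mul_eq_mul_div, one_mul, div_le_iff₀ hlam0]
      calc Real.exp ((n:ℝ)/16) ≤ (δ^2/4) * (2:ℝ)^n := hGnum
        _ = δ/2 * (δ/2 * (2:ℝ)^n) := by ring
        _ = δ/2 * (δ/2 * ((Finset.univ : Finset (Fin n → Bool)).card : ℝ)) := by rw [huniv]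
    have hbdd : BddAbove {x : ℝ | ∃ β : Fin n → ℝ, (∀ v, |β v| ≤ M) ∧
        x = (uniformModel n s β
          {H | c/2 * (n : ℝ) ^ (-(((s : ℝ) - 1) / 2))
                ≤ supNorm (fun v => est H v - β v)}).toReal} := by
      refine ⟨1, ?_⟩
      rintro x ⟨β, -, rfl⟩
      rw [uniformModel_toReal]
      exact prob_le_one β _
    have hmem : (uniformModel n s (cwParam η j)
          {H | c/2 * (n : ℝ) ^ (-(((s : ℝ) - 1) / 2))
                ≤ supNorm (fun v => est H v - cwParam η j v)}).toReal
        ∈ {x : ℝ | ∃ β : Fin n → ℝ, (∀ v, |β v| ≤ M) ∧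
            x = (uniformModel n s β
              {H | c/2 * (n : ℝ) ^ (-(((s : ℝ) - 1) / 2))
                    ≤ supNorm (fun v => est H v - β v)}).toReal} :=
      ⟨cwParam η j, habs j, rfl⟩
    refine le_csSup_of_le hbdd hmem ?_
    rw [uniformModel_toReal]
    calc 1 - δ ≤ 1 - ((δ/2 * ((Finset.univ : Finset (Fin n → Bool)).card : ℝ))
            / ((Finset.univ : Finset (Fin n → Bool)).card : ℝ)
          + (1/(δ/2 * ((Finset.univ : Finset (Fin n → Bool)).card : ℝ)))
            * Real.exp ((n:ℝ)/16)) := by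
          rw [e1]; linarith
      _ ≤ _ := hjp'



/-- **Theorem 2.3 (minimax lower bounds for estimation in the `s`-uniform model).**
For any `2 ≤ s ≤ r`, `M > 0` and `δ ∈ (0,1)` there is `C > 0` (depending on `M, r, δ`) such that
for all large `n` and every estimator `β̂`:
(i)  `sup_{β ∈ B(M)} P_β(‖β̂ − β‖₂ ≥ C n^{-(s-2)/2}) ≥ 1 − δ`, and
(ii) `sup_{β ∈ B(M)} P_β(‖β̂ − β‖_∞ ≥ C n^{-(s-1)/2}) ≥ 1 − δ`. -/
theorem minimax_estimation_lower_bounds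
    (r : ℕ) (hr : 2 ≤ r) (M : ℝ) (hM : 0 < M)
    (s : ℕ) (hs : 2 ≤ s) (hsr : s ≤ r)
    (δ : ℝ) (hδ0 : 0 < δ) (hδ1 : δ < 1) :
    ∃ C > 0, ∃ N : ℕ, ∀ n ≥ N,
      (∀ est : (Finset (Fin n) → Bool) → (Fin n → ℝ),
        1 - δ ≤
          sSup {x : ℝ | ∃ β : Fin n → ℝ, (∀ v, |β v| ≤ M) ∧
            x = (uniformModel n s β
              {H | C * (n : ℝ) ^ (-(((s : ℝ) - 2) / 2))
                    ≤ l2norm (fun v => est H v - β v)}).toReal})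
      ∧ (∀ est : (Finset (Fin n) → Bool) → (Fin n → ℝ),
        1 - δ ≤
          sSup {x : ℝ | ∃ β : Fin n → ℝ, (∀ v, |β v| ≤ M) ∧
            x = (uniformModel n s β
              {H | C * (n : ℝ) ^ (-(((s : ℝ) - 1) / 2))
                    ≤ supNorm (fun v => est H v - β v)}).toReal}) :=
  mainAux r hr M hM s hs hsr δ hδ0 hδ1

end
end

section
/- Fix s ≥ 2, M > 0 and a sequence ε = ε_n > 0, and consider testing H_0 : β_s = γ versus H_1 : ‖β_s − γ‖_∞ ≥ ε from one observation of H_s(n, β_s) with γ, β_s ∈ B(M), with worst-case risk R(ψ_n, γ) = P_γ(ψ_n = 1) + sup{P_{γ'}(ψ_n = 0) : γ' ∈ B(M), ‖γ' − γ‖_∞ ≥ ε}. Then: (a) if ε_n·√(n^{s−1}/log n) → ∞, the test φ^max_{n,s} = 1{‖β̂_s − γ‖_∞ ≥ 2C√(log n/n^{s−1})} (with C = C(s,M) chosen so that ‖β̂_s − κ‖_∞ ≤ C√(log n/n^{s−1}) holds with probability tending to 1 under every κ ∈ B(M)) is asymptotically powerful, i.e., R(φ^max_{n,s}, γ) → 0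 for every γ ∈ B(M); (b) if ε_n·n^{(s−1)/2} → 0, then every sequence of tests is asymptotically powerless, i.e., there exists γ ∈ B(M) with R(ψ_n, γ) → 1. -/
open MeasureTheory ProbabilityTheory Filter Finset Matrix

noncomputable section

/-- Worst-case testing risk for `H_0 : β_s = γ` vs `H_1 : ‖β_s − γ‖_∞ ≥ ε` in the `s`-uniform
model: the Type I error plus the supremum of the Type II errors over the `L_∞`-separated
alternatives in `B(M)`.  Here `ψ H` means "reject `H_0`". -/
def riskLinf (n s : ℕ) (M ε : ℝ) (ψ : (Finset (Fin n) → Bool) → Prop) (γ : Fin n → ℝ) : ℝ :=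
  (uniformModel n s γ {H | ψ H}).toReal +
    sSup {x : ℝ | ∃ γ' : Fin n → ℝ, (∀ v, |γ' v| ≤ M) ∧
      ε ≤ supNorm (fun v => γ' v - γ v) ∧
      x = (uniformModel n s γ' {H | ¬ ψ H}).toReal}

namespace MTaux
set_option linter.unusedSectionVars false

lemma one_add_exp_pos (x : ℝ) : (0:ℝ) < 1 + Real.exp x := by positivity

lemma logistic_pos (x : ℝ) : 0 < logistic x :=
  div_pos (Real.exp_pos x) (one_add_exp_pos x)

lemma logistic_lt_one (x : ℝ) : logistic x < 1 := by
  rw [logistic, div_lt_one (one_add_exp_pos x)]; linarith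

lemma one_sub_logistic (x : ℝ) : 1 - logistic x = logistic (-x) := by
  rw [logistic, logistic, Real.exp_neg]
  have h1 := Real.exp_pos x
  field_simp
  ring

lemma logistic_mono : Monotone logistic := by
  intro a b hab
  rw [logistic, logistic, div_le_div_iff₀ (one_add_exp_pos a) (one_add_exp_pos b)]
  have h := Real.exp_le_exp.2 hab
  nlinarith [Real.exp_pos a, Real.exp_pos b]

lemma logistic_lipschitz (a b : ℝ) : |logistic a - logistic b| ≤ |a - b| := by
  wlog hab : b ≤ a generalizing a b
  · rw [abs_sub_comm, abs_sub_comm a b]; exact this b a (le_of_not_ge hab)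
  have hmono := logistic_mono hab
  rw [abs_of_nonneg (sub_nonneg.2 hmono), abs_of_nonneg (sub_nonneg.2 hab)]
  have key : logistic a - logistic b
      = (Real.exp a - Real.exp b) / ((1 + Real.exp a) * (1 + Real.exp b)) := by
    rw [logistic, logistic]
    field_simp
    ring
  rw [key, div_le_iff₀ (by positivity)]
  have h1 : Real.exp a * ((b - a) + 1) ≤ Real.exp a * Real.exp (b - a) := by
    have := Real.add_one_le_exp (b - a)
    nlinarith [Real.exp_pos a]
  rw [← Real.exp_add] at h1
  have h2 : a + (b - a) = b := by ring
  rw [h2] at h1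
  nlinarith [Real.exp_pos a, Real.exp_pos b, mul_nonneg (sub_nonneg.2 hab) (Real.exp_pos a).le]


variable {ι : Type*} [Fintype ι] [DecidableEq ι]

/-- product Bernoulli weight -/
def w (p : ι → ℝ) (ω : ι → Bool) : ℝ := ∏ i, if ω i then p i else 1 - p i

lemma w_nonneg {p : ι → ℝ} (h0 : ∀ i, 0 ≤ p i) (h1 : ∀ i, p i ≤ 1) (ω : ι → Bool) :
    0 ≤ w p ω := by
  refine Finset.prod_nonneg fun i _ => ?_
  cases hω : ω i <;> simp [hω] <;> [linarith [h1 i]; exact h0 i]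

lemma sum_w (p : ι → ℝ) : ∑ ω : ι → Bool, w p ω = 1 := by
  classical
  have h := Finset.prod_univ_sum (fun _ : ι => (Finset.univ : Finset Bool))
    (fun i b => if b then p i else 1 - p i)
  rw [Fintype.piFinset_univ] at h
  have h2 : ∀ i : ι, (∑ b : Bool, if b then p i else 1 - p i) = 1 := by
    intro i; rw [Fintype.sum_bool]; simp
  rw [Finset.prod_congr rfl (fun i _ => h2 i)] at h
  simp only [Finset.prod_const_one] at h
  exact h.symm

/-- edge probability of the uniform model -/
def pr (n s : ℕ) (β : Fin n → ℝ) (e : Finset (Fin n)) : ℝ :=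
  if e.card = s then logistic (∑ v ∈ e, β v) else 0

lemma pr_nonneg (n s : ℕ) (β : Fin n → ℝ) (e : Finset (Fin n)) : 0 ≤ pr n s β e := by
  unfold pr; split
  · exact (logistic_pos _).le
  · exact le_refl 0

lemma pr_lt_one (n s : ℕ) (β : Fin n → ℝ) (e : Finset (Fin n)) : pr n s β e < 1 := by
  unfold pr; split
  · exact logistic_lt_one _
  · norm_num

lemma pr_eq_zero_iff (n s : ℕ) (β : Fin n → ℝ) (e : Finset (Fin n)) :
    pr n s β e = 0 ↔ ¬ e.card = s := by
  unfold pr; split <;> simp_all [(logistic_pos _).ne']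

open scoped Classical in
lemma uniformModel_apply (n s : ℕ) (β : Fin n → ℝ) (A : Set (Finset (Fin n) → Bool)) :
    (uniformModel n s β A).toReal
      = ∑ ω : Finset (Fin n) → Bool, if ω ∈ A then w (pr n s β) ω else 0 := by
  have hsing : ∀ ω : Finset (Fin n) → Bool,
      uniformModel n s β {ω} = ENNReal.ofReal (w (pr n s β) ω) := by
    intro ω
    have hset : ({ω} : Set (Finset (Fin n) → Bool))
        = Set.pi Set.univ (fun e => {ω e}) := by
      ext x
      simp [Set.mem_pi, funext_iff, eq_comm]
    rw [hset, uniformModel, Measure.pi_pi]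
    have hb : ∀ e : Finset (Fin n),
        bernoulliBool (if e.card = s then logistic (∑ v ∈ e, β v) else 0) ({ω e} : Set Bool)
          = ENNReal.ofReal (if ω e then pr n s β e else 1 - pr n s β e) := by
      intro e
      rw [bernoulliBool]
      cases hω : ω e <;>
        simp [Measure.dirac_apply, pr, hω]
    rw [Finset.prod_congr rfl (fun e _ => hb e), ← ENNReal.ofReal_prod_of_nonneg]
    · rfl
    · intro e _
      cases hω : ω e <;> simp [hω]
      · linarith [pr_lt_one n s β e]
      · exact pr_nonneg n s β e
  have hA : A = ⋃ ω ∈ (Finset.univ.filter (· ∈ A) : Finset (Finset (Fin n) → Bool)),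
      ({ω} : Set (Finset (Fin n) → Bool)) := by
    ext x; simp
  have hmeas : uniformModel n s β A
      = ∑ ω ∈ (Finset.univ.filter (· ∈ A) : Finset (Finset (Fin n) → Bool)),
          ENNReal.ofReal (w (pr n s β) ω) := by
    conv_lhs => rw [hA]
    rw [measure_biUnion_finset ?disj ?meas]
    · exact Finset.sum_congr rfl fun ω _ => hsing ω
    case disj =>
      intro x _ y _ hxy
      simp [Function.onFun, Set.disjoint_singleton, hxy]
    case meas =>
      intro b _
      exact MeasurableSet.singleton b
  rw [hmeas, ENNReal.toReal_sum (by intro a _; exact ENNReal.ofReal_ne_top)]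
  rw [Finset.sum_filter]
  refine Finset.sum_congr rfl fun ω _ => ?_
  split
  · exact ENNReal.toReal_ofReal
      (w_nonneg (pr_nonneg n s β) (fun e => (pr_lt_one n s β e).le) ω)
  · rfl


open scoped Classical in
lemma uniformModel_nonneg (n s : ℕ) (β : Fin n → ℝ) (A : Set (Finset (Fin n) → Bool)) :
    0 ≤ (uniformModel n s β A).toReal := ENNReal.toReal_nonneg

open scoped Classical in
lemma uniformModel_le_one (n s : ℕ) (β : Fin n → ℝ) (A : Set (Finset (Fin n) → Bool)) :
    (uniformModel n s β A).toReal ≤ 1 := by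
  rw [uniformModel_apply]
  calc (∑ ω : Finset (Fin n) → Bool, if ω ∈ A then w (pr n s β) ω else 0)
      ≤ ∑ ω : Finset (Fin n) → Bool, w (pr n s β) ω := by
        refine Finset.sum_le_sum fun ω _ => ?_
        split
        · exact le_refl _
        · exact w_nonneg (pr_nonneg n s β) (fun e => (pr_lt_one n s β e).le) ω
    _ = 1 := sum_w _

lemma uniformModel_compl (n s : ℕ) (β : Fin n → ℝ) (q : (Finset (Fin n) → Bool) → Prop) :
    (uniformModel n s β {H | ¬ q H}).toReal = 1 - (uniformModel n s β {H | q H}).toReal := by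
  classical
  rw [uniformModel_apply, uniformModel_apply, eq_sub_iff_add_eq, ← sum_w (pr n s β),
    ← Finset.sum_add_distrib]
  refine Finset.sum_congr rfl fun ω _ => ?_
  by_cases h : q ω <;> simp [h]

lemma uniformModel_mono (n s : ℕ) (β : Fin n → ℝ)
    {A B : Set (Finset (Fin n) → Bool)} (hAB : A ⊆ B) :
    (uniformModel n s β A).toReal ≤ (uniformModel n s β B).toReal := by
  classical
  rw [uniformModel_apply, uniformModel_apply]
  refine Finset.sum_le_sum fun ω _ => ?_
  by_cases h : ω ∈ A
  · simp [h, hAB h]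
  · simp only [h, if_false]
    split
    · exact w_nonneg (pr_nonneg n s β) (fun e => (pr_lt_one n s β e).le) ω
    · exact le_refl _

lemma uniformModel_diff_le (n s : ℕ) (β β' : Fin n → ℝ) (A : Set (Finset (Fin n) → Bool)) :
    |(uniformModel n s β' A).toReal - (uniformModel n s β A).toReal|
      ≤ ∑ ω : Finset (Fin n) → Bool, |w (pr n s β') ω - w (pr n s β) ω| := by
  classical
  rw [uniformModel_apply, uniformModel_apply, ← Finset.sum_sub_distrib]
  refine (Finset.abs_sum_le_sum_abs _ _).trans (Finset.sum_le_sum fun ω _ => ?_)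
  by_cases h : ω ∈ A <;> simp [h, abs_nonneg]

/-- Chi-square / Cauchy–Schwarz bound on total variation of product Bernoulli vectors. -/
lemma tv_bound (p q : ι → ℝ)
    (hp0 : ∀ i, 0 ≤ p i) (hp1 : ∀ i, p i < 1) (hq0 : ∀ i, 0 ≤ q i) (hq1 : ∀ i, q i < 1)
    (hsupp : ∀ i, p i = 0 ↔ q i = 0) :
    ∑ ω : ι → Bool, |w p ω - w q ω|
      ≤ Real.sqrt ((∏ i, (1 + (p i - q i) ^ 2 / (q i * (1 - q i)))) - 1) := by
  classical
  set S : Finset (ι → Bool) :=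
    Fintype.piFinset (fun i => if q i = 0 then ({false} : Finset Bool) else Finset.univ) with hS
  have hmemS : ∀ ω : ι → Bool, ω ∈ S ↔ ∀ i, q i = 0 → ω i = false := by
    intro ω
    rw [hS, Fintype.mem_piFinset]
    constructor
    · intro h i hqi
      have := h i
      rw [if_pos hqi] at this
      simpa using this
    · intro h i
      by_cases hqi : q i = 0
      · rw [if_pos hqi]; simp [h i hqi]
      · rw [if_neg hqi]; simp
  have hq_off : ∀ ω : ι → Bool, ω ∉ S → w q ω = 0 := by
    intro ω hω
    rw [hmemS] at hω
    push_neg at hω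
    obtain ⟨i, hqi, hωi⟩ := hω
    refine Finset.prod_eq_zero (Finset.mem_univ i) ?_
    replace hωi : ω i = true := by simpa using hωi
    simp [hωi, hqi]
  have hp_off : ∀ ω : ι → Bool, ω ∉ S → w p ω = 0 := by
    intro ω hω
    rw [hmemS] at hω
    push_neg at hω
    obtain ⟨i, hqi, hωi⟩ := hω
    refine Finset.prod_eq_zero (Finset.mem_univ i) ?_
    replace hωi : ω i = true := by simpa using hωi
    simp [hωi, (hsupp i).2 hqi]
  have hq_pos : ∀ ω ∈ S, 0 < w q ω := by
    intro ω hω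
    refine Finset.prod_pos fun i _ => ?_
    cases hωi : ω i
    · simp only [if_neg Bool.false_ne_true]
      linarith [hq1 i]
    · simp only [if_pos rfl]
      rcases lt_or_eq_of_le (hq0 i) with h | h
      · exact h
      · exfalso
        have := (hmemS ω).1 hω i h.symm
        rw [this] at hωi
        exact Bool.false_ne_true hωi
  have hsum_q : ∑ ω ∈ S, w q ω = 1 := by
    rw [← sum_w q]
    exact (Finset.sum_subset (Finset.subset_univ S)
      (fun ω _ hω => hq_off ω hω)).symm ▸ rfl
  have hsum_p : ∑ ω ∈ S, w p ω = 1 := by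
    rw [← sum_w p]
    exact (Finset.sum_subset (Finset.subset_univ S)
      (fun ω _ hω => hp_off ω hω)).symm ▸ rfl
  have hXprod : ∑ ω ∈ S, (w p ω) ^ 2 / w q ω
      = ∏ i, (1 + (p i - q i) ^ 2 / (q i * (1 - q i))) := by
    have hpt : ∀ ω : ι → Bool, (w p ω) ^ 2 / w q ω
        = ∏ i, ((if ω i then p i else 1 - p i) ^ 2 / (if ω i then q i else 1 - q i)) := by
      intro ω
      rw [w, w, ← Finset.prod_pow, ← Finset.prod_div_distrib]
    have hps := Finset.prod_univ_sum (fun i => if q i = 0 then ({false} : Finset Bool) else Finset.univ)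
      (fun i b => (if b then p i else 1 - p i) ^ 2 / (if b then q i else 1 - q i))
    rw [Finset.sum_congr rfl (fun ω _ => hpt ω), hS, ← hps]
    refine Finset.prod_congr rfl fun i _ => ?_
    by_cases hqi : q i = 0
    · have hpi : p i = 0 := (hsupp i).2 hqi
      rw [if_pos hqi]
      simp [hpi, hqi]
    · rw [if_neg hqi]
      have h1q : (1 : ℝ) - q i ≠ 0 := by linarith [(hq1 i)]
      rw [Fintype.sum_bool]
      simp only [if_pos, if_neg Bool.false_ne_true, if_true]
      field_simp
      ring
  have hchi : ∑ ω ∈ S, (w p ω - w q ω) ^ 2 / w q ω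
      = (∑ ω ∈ S, (w p ω) ^ 2 / w q ω) - 1 := by
    have hpt : ∀ ω ∈ S, (w p ω - w q ω) ^ 2 / w q ω
        = (w p ω) ^ 2 / w q ω - 2 * w p ω + w q ω := by
      intro ω hω
      have hb := (hq_pos ω hω).ne'
      field_simp
      ring
    rw [Finset.sum_congr rfl hpt, Finset.sum_add_distrib, Finset.sum_sub_distrib,
      ← Finset.mul_sum, hsum_p, hsum_q]
    ring
  have hsum_abs_nonneg : 0 ≤ ∑ ω ∈ S, |w p ω - w q ω| :=
    Finset.sum_nonneg fun ω _ => abs_nonneg _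
  have hCS : (∑ ω ∈ S, |w p ω - w q ω|) ^ 2
      ≤ (∏ i, (1 + (p i - q i) ^ 2 / (q i * (1 - q i)))) - 1 := by
    have key : ∀ ω ∈ S, |w p ω - w q ω|
        = (|w p ω - w q ω| / Real.sqrt (w q ω)) * Real.sqrt (w q ω) := by
      intro ω hω
      exact (div_mul_cancel₀ _ (ne_of_gt (Real.sqrt_pos.2 (hq_pos ω hω)))).symm
    calc (∑ ω ∈ S, |w p ω - w q ω|) ^ 2
        = (∑ ω ∈ S, (|w p ω - w q ω| / Real.sqrt (w q ω)) * Real.sqrt (w q ω)) ^ 2 := by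
          rw [Finset.sum_congr rfl key]
      _ ≤ (∑ ω ∈ S, (|w p ω - w q ω| / Real.sqrt (w q ω)) ^ 2)
            * ∑ ω ∈ S, (Real.sqrt (w q ω)) ^ 2 :=
          Finset.sum_mul_sq_le_sq_mul_sq S _ _
      _ = (∑ ω ∈ S, (w p ω - w q ω) ^ 2 / w q ω) * 1 := by
          congr 1
          · refine Finset.sum_congr rfl fun ω hω => ?_
            rw [div_pow, sq_abs, Real.sq_sqrt (hq_pos ω hω).le]
          · rw [← hsum_q]
            refine Finset.sum_congr rfl fun ω hω => Real.sq_sqrt (hq_pos ω hω).le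
      _ = (∏ i, (1 + (p i - q i) ^ 2 / (q i * (1 - q i)))) - 1 := by
          rw [mul_one, hchi, hXprod]
  calc ∑ ω : ι → Bool, |w p ω - w q ω|
      = ∑ ω ∈ S, |w p ω - w q ω| := by
        refine (Finset.sum_subset (Finset.subset_univ S) fun ω _ hω => ?_).symm
        rw [hp_off ω hω, hq_off ω hω, sub_zero, abs_zero]
    _ = Real.sqrt ((∑ ω ∈ S, |w p ω - w q ω|) ^ 2) := (Real.sqrt_sq hsum_abs_nonneg).symm
    _ ≤ Real.sqrt ((∏ i, (1 + (p i - q i) ^ 2 / (q i * (1 - q i)))) - 1) :=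
        Real.sqrt_le_sqrt hCS

lemma abs_sum_le (n : ℕ) (M : ℝ) (γ : Fin n → ℝ) (hγ : ∀ v, |γ v| ≤ M)
    (e : Finset (Fin n)) (s : ℕ) (hcard : e.card = s) :
    |∑ v ∈ e, γ v| ≤ (s : ℝ) * M := by
  refine (Finset.abs_sum_le_sum_abs _ _).trans ?_
  calc ∑ v ∈ e, |γ v| ≤ e.card • M := Finset.sum_le_card_nsmul _ _ _ (fun v _ => hγ v)
    _ = (s : ℝ) * M := by rw [hcard, nsmul_eq_mul]

lemma logistic_mul_ge (s : ℕ) (M a : ℝ) (ha : |a| ≤ (s : ℝ) * M) :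
    logistic (-((s : ℝ) * M)) * logistic (-((s : ℝ) * M))
      ≤ logistic a * (1 - logistic a) := by
  rw [one_sub_logistic]
  obtain ⟨h1, h2⟩ := abs_le.1 ha
  have hc := logistic_pos (-((s : ℝ) * M))
  exact mul_le_mul (logistic_mono h1) (logistic_mono (by linarith)) hc.le
    (logistic_pos a).le

/-- Main total-variation bound for a one-coordinate perturbation. -/
lemma tv_final (n s : ℕ) (M : ℝ) (γ γ' : Fin n → ℝ)
    (hγ : ∀ v, |γ v| ≤ M) (hγ' : ∀ v, |γ' v| ≤ M)
    (v0 : Fin n) (hdiff : ∀ v, v ≠ v0 → γ' v = γ v) (t : ℝ) (ht : |γ' v0 - γ v0| ≤ t) :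
    ∑ ω : Finset (Fin n) → Bool, |w (pr n s γ') ω - w (pr n s γ) ω|
      ≤ Real.sqrt (Real.exp ((n : ℝ) ^ (s - 1) * t ^ 2
          / (logistic (-((s : ℝ) * M)) * logistic (-((s : ℝ) * M)))) - 1) := by
  classical
  set c : ℝ := logistic (-((s : ℝ) * M)) with hc
  have hcpos : 0 < c := logistic_pos _
  have ht0 : 0 ≤ t := (abs_nonneg _).trans ht
  set p := pr n s γ' with hp
  set q := pr n s γ with hq
  set r : Finset (Fin n) → ℝ := fun e => (p e - q e) ^ 2 / (q e * (1 - q e)) with hr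
  have hr_nonneg : ∀ e, 0 ≤ r e := fun e =>
    div_nonneg (sq_nonneg _) (mul_nonneg (pr_nonneg n s γ e)
      (by linarith [pr_lt_one n s γ e]))
  have hr_bound : ∀ e : Finset (Fin n), e.card = s → v0 ∈ e → r e ≤ t ^ 2 / (c * c) := by
    intro e hcard hv0
    have ha : |∑ v ∈ e, γ v| ≤ (s : ℝ) * M := abs_sum_le n M γ hγ e s hcard
    have hnum : (p e - q e) ^ 2 ≤ t ^ 2 := by
      have hsum : (∑ v ∈ e, γ' v) - (∑ v ∈ e, γ v) = γ' v0 - γ v0 := by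
        rw [← Finset.sum_sub_distrib]
        rw [Finset.sum_eq_single_of_mem v0 hv0 (fun b _ hb => by rw [hdiff b hb]; ring)]
      have hlip := logistic_lipschitz (∑ v ∈ e, γ' v) (∑ v ∈ e, γ v)
      rw [hsum] at hlip
      have habs : |p e - q e| ≤ t := by
        rw [hp, hq, pr, pr, if_pos hcard, if_pos hcard]
        exact hlip.trans ht
      calc (p e - q e) ^ 2 = |p e - q e| ^ 2 := (sq_abs _).symm
        _ ≤ t ^ 2 := by
          have := abs_nonneg (p e - q e)
          nlinarith
    have hden : c * c ≤ q e * (1 - q e) := by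
      rw [hq, pr, if_pos hcard, hc]
      exact logistic_mul_ge s M _ ha
    exact div_le_div₀ (sq_nonneg t) hnum (by positivity) hden
  have hr_zero : ∀ e : Finset (Fin n), ¬(e.card = s ∧ v0 ∈ e) → r e = 0 := by
    intro e he
    by_cases hcard : e.card = s
    · have hv0 : v0 ∉ e := fun h => he ⟨hcard, h⟩
      have : p e = q e := by
        rw [hp, hq, pr, pr, if_pos hcard, if_pos hcard]
        congr 1
        exact Finset.sum_congr rfl fun v hv => hdiff v (fun hveq => hv0 (hveq ▸ hv))
      rw [hr]; simp [this]
    · have h1 : p e = 0 := (pr_eq_zero_iff n s γ' e).2 hcard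
      have h2 : q e = 0 := (pr_eq_zero_iff n s γ e).2 hcard
      rw [hr]; simp [h1, h2]
  have hsum_r : ∑ e : Finset (Fin n), r e ≤ (n : ℝ) ^ (s - 1) * t ^ 2 / (c * c) := by
    have hNle : ((Finset.univ.filter fun e : Finset (Fin n) => e.card = s ∧ v0 ∈ e).card : ℝ)
        ≤ (n : ℝ) ^ (s - 1) := by
      have hinj : (Finset.univ.filter fun e : Finset (Fin n) => e.card = s ∧ v0 ∈ e).card
          ≤ ((Finset.univ.erase v0).powersetCard (s - 1)).card := by
        refine Finset.card_le_card_of_injOn (fun e => e.erase v0) ?_ ?_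
        · intro e he
          rw [Finset.coe_filter, Set.mem_setOf_eq] at he
          obtain ⟨-, hcard, hv0⟩ := he
          rw [Finset.mem_coe, Finset.mem_powersetCard]
          exact ⟨Finset.erase_subset_erase v0 (Finset.subset_univ e),
            by rw [Finset.card_erase_of_mem hv0, hcard]⟩
        · intro e1 h1 e2 h2 hee
          rw [Finset.coe_filter, Set.mem_setOf_eq] at h1 h2
          simp only at hee
          rw [← Finset.insert_erase h1.2.2, ← Finset.insert_erase h2.2.2, hee]
      have hcards : ((Finset.univ.erase v0).powersetCard (s - 1)).card
          = (n - 1).choose (s - 1) := by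
        rw [Finset.card_powersetCard, Finset.card_erase_of_mem (Finset.mem_univ v0),
          Finset.card_univ, Fintype.card_fin]
      have : (Finset.univ.filter fun e : Finset (Fin n) => e.card = s ∧ v0 ∈ e).card
          ≤ n ^ (s - 1) :=
        hinj.trans (hcards ▸ (Nat.choose_le_pow _ _).trans
          (Nat.pow_le_pow_left (Nat.sub_le n 1) _))
      calc ((Finset.univ.filter fun e : Finset (Fin n) => e.card = s ∧ v0 ∈ e).card : ℝ)
          ≤ ((n ^ (s - 1) : ℕ) : ℝ) := Nat.cast_le.2 this
        _ = (n : ℝ) ^ (s - 1) := by push_cast; ring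
    calc ∑ e : Finset (Fin n), r e
        = ∑ e ∈ Finset.univ.filter (fun e : Finset (Fin n) => e.card = s ∧ v0 ∈ e), r e :=
          (Finset.sum_filter_of_ne (fun e _ hne => by
            by_contra hcon
            exact hne (hr_zero e hcon))).symm
      _ ≤ (Finset.univ.filter fun e : Finset (Fin n) => e.card = s ∧ v0 ∈ e).card
            • (t ^ 2 / (c * c)) :=
          Finset.sum_le_card_nsmul _ _ _ (fun e he => by
            rw [Finset.mem_filter] at he
            exact hr_bound e he.2.1 he.2.2)
      _ = ((Finset.univ.filter fun e : Finset (Fin n) => e.card = s ∧ v0 ∈ e).card : ℝ)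
            * (t ^ 2 / (c * c)) := nsmul_eq_mul _ _
      _ ≤ (n : ℝ) ^ (s - 1) * (t ^ 2 / (c * c)) :=
          mul_le_mul_of_nonneg_right hNle (by positivity)
      _ = (n : ℝ) ^ (s - 1) * t ^ 2 / (c * c) := by ring
  have hprod_le : (∏ e : Finset (Fin n), (1 + (p e - q e) ^ 2 / (q e * (1 - q e))))
      ≤ Real.exp ((n : ℝ) ^ (s - 1) * t ^ 2 / (c * c)) := by
    calc (∏ e : Finset (Fin n), (1 + (p e - q e) ^ 2 / (q e * (1 - q e))))
        = ∏ e : Finset (Fin n), (1 + r e) := rfl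
      _ ≤ ∏ e : Finset (Fin n), Real.exp (r e) :=
          Finset.prod_le_prod (fun e _ => by linarith [hr_nonneg e])
            (fun e _ => by linarith [Real.add_one_le_exp (r e)])
      _ = Real.exp (∑ e : Finset (Fin n), r e) := (Real.exp_sum _ _).symm
      _ ≤ Real.exp ((n : ℝ) ^ (s - 1) * t ^ 2 / (c * c)) := Real.exp_le_exp.2 hsum_r
  have hsupp : ∀ e : Finset (Fin n), p e = 0 ↔ q e = 0 := by
    intro e
    rw [hp, hq, pr_eq_zero_iff, pr_eq_zero_iff]
  refine (tv_bound p q (pr_nonneg n s γ') (pr_lt_one n s γ') (pr_nonneg n s γ)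
    (pr_lt_one n s γ) hsupp).trans ?_
  exact Real.sqrt_le_sqrt (by linarith)

lemma le_supNorm {n : ℕ} (x : Fin n → ℝ) (v : Fin n) : |x v| ≤ supNorm x :=
  show |x v| ≤ ⨆ u, |x u| from
    le_ciSup (Set.Finite.bddAbove (Set.finite_range fun u => |x u|)) v

lemma supNorm_le_of {n : ℕ} [Nonempty (Fin n)] {x : Fin n → ℝ} {B : ℝ}
    (h : ∀ v, |x v| ≤ B) : supNorm x ≤ B := ciSup_le h

end MTaux

section MainProof
open MTaux

theorem minimax_a
    (s : ℕ) (hs : 2 ≤ s) (M : ℝ) (hM : 0 < M)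
    (ε : ℕ → ℝ) (hε : ∀ n, 0 < ε n)
    (mle : (n : ℕ) → (Finset (Fin n) → Bool) → Fin n → ℝ) :
    (∀ C : ℝ, 0 < C →
      (∀ κ : (n : ℕ) → Fin n → ℝ, (∀ n, ∀ v : Fin n, |κ n v| ≤ M) →
        Tendsto (fun n =>
          (uniformModel n s (κ n)
            {H | supNorm (fun v => mle n H v - κ n v)
                  ≤ C * Real.sqrt (Real.log n / (n : ℝ) ^ (s - 1))}).toReal)
          atTop (nhds 1)) →
      Tendsto (fun (n : ℕ) => ε n * Real.sqrt ((n : ℝ) ^ (s - 1) / Real.log n)) atTop atTop →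
      ∀ γ : (n : ℕ) → Fin n → ℝ, (∀ n, ∀ v : Fin n, |γ n v| ≤ M) →
        Tendsto (fun n =>
          riskLinf n s M (ε n)
            (fun H => 2 * C * Real.sqrt (Real.log n / (n : ℝ) ^ (s - 1))
                        ≤ supNorm (fun v => mle n H v - γ n v))
            (γ n)) atTop (nhds 0)) := by
  intro C hC hcons hεa γ hγ
  set thr : ℕ → ℝ := fun n => Real.sqrt (Real.log n / (n : ℝ) ^ (s - 1)) with hthr
  have hthr0 : ∀ n, 0 ≤ thr n := fun n => Real.sqrt_nonneg _
  set f : (n : ℕ) → (Fin n → ℝ) → ℝ := fun n κ =>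
    (uniformModel n s κ
      {H | ¬ supNorm (fun v => mle n H v - κ v) ≤ C * thr n}).toReal with hf
  have hfcompl : ∀ n (κ : Fin n → ℝ), f n κ = 1 -
      (uniformModel n s κ
        {H | supNorm (fun v => mle n H v - κ v) ≤ C * thr n}).toReal := by
    intro n κ
    exact uniformModel_compl n s κ _
  have hftend : ∀ κ : (n : ℕ) → Fin n → ℝ, (∀ n, ∀ v : Fin n, |κ n v| ≤ M) →
      Tendsto (fun n => f n (κ n)) atTop (nhds 0) := by
    intro κ hκ
    have h1 := hcons κ hκ
    have heq : (fun n => f n (κ n)) = fun n => 1 -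
        (uniformModel n s (κ n)
          {H | supNorm (fun v => mle n H v - κ n v) ≤ C * thr n}).toReal := by
      funext n; exact hfcompl n (κ n)
    rw [heq]
    have h2 : Tendsto (fun n => (1:ℝ) -
        (uniformModel n s (κ n)
          {H | supNorm (fun v => mle n H v - κ n v) ≤ C * thr n}).toReal)
        atTop (nhds (1 - 1)) := tendsto_const_nhds.sub h1
    simpa using h2
  set Uset : ℕ → Set ℝ := fun n => {x | ∃ κ : Fin n → ℝ, (∀ v, |κ v| ≤ M) ∧ x = f n κ}
    with hUset
  have hUset_ne : ∀ n, (Uset n).Nonempty := by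
    intro n
    exact ⟨f n 0, 0, fun v => by simpa using hM.le, rfl⟩
  have hUset_bdd : ∀ n, ∀ x ∈ Uset n, 0 ≤ x ∧ x ≤ 1 := by
    intro n x hx
    obtain ⟨κ, -, rfl⟩ := hx
    exact ⟨uniformModel_nonneg n s κ _, uniformModel_le_one n s κ _⟩
  have hbddAbove : ∀ n, BddAbove (Uset n) :=
    fun n => ⟨1, fun x hx => (hUset_bdd n x hx).2⟩
  set U : ℕ → ℝ := fun n => sSup (Uset n) with hU
  have hκex : ∀ n : ℕ, ∃ κ : Fin n → ℝ, (∀ v, |κ v| ≤ M) ∧ U n ≤ f n κ + 1 / (n + 1) := by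
    intro n
    have hpos : (0:ℝ) < 1 / (n + 1) := by positivity
    obtain ⟨x, hx, hlt⟩ := exists_lt_of_lt_csSup (hUset_ne n)
      (show U n - 1 / (n + 1) < U n by linarith)
    obtain ⟨κ, hκ, rfl⟩ := hx
    exact ⟨κ, hκ, by linarith⟩
  choose κ hκM hκU using hκex
  have hUnn : ∀ n, 0 ≤ U n := by
    intro n
    obtain ⟨x, hx⟩ := hUset_ne n
    exact (hUset_bdd n x hx).1.trans (le_csSup (hbddAbove n) hx)
  have hUto : Tendsto U atTop (nhds 0) := by
    have h1 : Tendsto (fun n : ℕ => f n (κ n) + 1 / (n + 1)) atTop (nhds 0) := by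
      have h2 := hftend κ hκM
      have h3 : Tendsto (fun n : ℕ => 1 / ((n:ℝ) + 1)) atTop (nhds 0) :=
        tendsto_one_div_add_atTop_nhds_zero_nat
      simpa using h2.add h3
    exact tendsto_of_tendsto_of_tendsto_of_le_of_le tendsto_const_nhds h1 hUnn hκU
  have hγtend := hftend γ hγ
  -- eventual inequalities
  have hev2 : ∀ᶠ n in atTop, (2:ℕ) ≤ n := eventually_ge_atTop 2
  have hev3 : ∀ᶠ n in atTop, 3 * C ≤ ε n * Real.sqrt ((n : ℝ) ^ (s - 1) / Real.log n) :=
    hεa.eventually_ge_atTop (3 * C)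
  have hevkey : ∀ᶠ n in atTop,
      riskLinf n s M (ε n)
        (fun H => 2 * C * thr n ≤ supNorm (fun v => mle n H v - γ n v)) (γ n)
      ≤ f n (γ n) + U n := by
    filter_upwards [hev2, hev3] with n hn2 hn3
    haveI : Nonempty (Fin n) := Fin.pos_iff_nonempty.1 (by omega)
    have hlogpos : 0 < Real.log n := Real.log_pos (by exact_mod_cast hn2)
    have hnpow : (0:ℝ) < (n : ℝ) ^ (s - 1) := by positivity
    have hthrpos : 0 < thr n := Real.sqrt_pos.2 (by positivity)
    have hthrmul : thr n * Real.sqrt ((n : ℝ) ^ (s - 1) / Real.log n) = 1 := by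
      rw [hthr, ← Real.sqrt_mul (by positivity)]
      rw [show Real.log n / (n : ℝ) ^ (s - 1) * ((n : ℝ) ^ (s - 1) / Real.log n) = 1 by
        field_simp]
      exact Real.sqrt_one
    have hεthr : 3 * C * thr n ≤ ε n := by
      have := mul_le_mul_of_nonneg_left hn3 (hthr0 n)
      calc 3 * C * thr n = thr n * (3 * C) := by ring
        _ ≤ thr n * (ε n * Real.sqrt ((n : ℝ) ^ (s - 1) / Real.log n)) := this
        _ = ε n * (thr n * Real.sqrt ((n : ℝ) ^ (s - 1) / Real.log n)) := by ring
        _ = ε n := by rw [hthrmul, mul_one]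
    rw [riskLinf]
    have hT1 : (uniformModel n s (γ n)
        {H | 2 * C * thr n ≤ supNorm (fun v => mle n H v - γ n v)}).toReal ≤ f n (γ n) := by
      rw [hf]
      refine uniformModel_mono n s (γ n) ?_
      intro H hH
      simp only [Set.mem_setOf_eq] at hH ⊢
      intro hcon
      have : 2 * C * thr n ≤ C * thr n := hH.trans hcon
      nlinarith
    have hT2 : sSup {x : ℝ | ∃ γ' : Fin n → ℝ, (∀ v, |γ' v| ≤ M) ∧
        ε n ≤ supNorm (fun v => γ' v - γ n v) ∧
        x = (uniformModel n s γ'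
          {H | ¬ 2 * C * thr n ≤ supNorm (fun v => mle n H v - γ n v)}).toReal} ≤ U n := by
      set S2 := {x : ℝ | ∃ γ' : Fin n → ℝ, (∀ v, |γ' v| ≤ M) ∧
        ε n ≤ supNorm (fun v => γ' v - γ n v) ∧
        x = (uniformModel n s γ'
          {H | ¬ 2 * C * thr n ≤ supNorm (fun v => mle n H v - γ n v)}).toReal} with hS2
      rcases Set.eq_empty_or_nonempty S2 with hemp | hne
      · rw [hemp, Real.sSup_empty]; exact hUnn n
      · refine csSup_le hne ?_
        rintro x ⟨γ', hγ'M, hγ'sep, rfl⟩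
        have hsub : {H : Finset (Fin n) → Bool |
            ¬ 2 * C * thr n ≤ supNorm (fun v => mle n H v - γ n v)}
            ⊆ {H | ¬ supNorm (fun v => mle n H v - γ' v) ≤ C * thr n} := by
          intro H hH
          simp only [Set.mem_setOf_eq] at hH ⊢
          intro hgood
          apply hH
          have htri : supNorm (fun v => γ' v - γ n v)
              ≤ supNorm (fun v => mle n H v - γ n v)
                + supNorm (fun v => mle n H v - γ' v) := by
            refine supNorm_le_of fun v => ?_
            have h1 := le_supNorm (fun v => mle n H v - γ n v) v
            have h2 := le_supNorm (fun v => mle n H v - γ' v) v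
            have : |γ' v - γ n v| ≤ |mle n H v - γ n v| + |mle n H v - γ' v| := by
              have := abs_sub (mle n H v - γ n v) (mle n H v - γ' v)
              calc |γ' v - γ n v| = |(mle n H v - γ n v) - (mle n H v - γ' v)| := by
                    ring_nf
                _ ≤ |mle n H v - γ n v| + |mle n H v - γ' v| := abs_sub _ _
            linarith
          have hsup1 : supNorm (fun v => mle n H v - γ' v) ≤ C * thr n := hgood
          linarith
        calc (uniformModel n s γ'
            {H | ¬ 2 * C * thr n ≤ supNorm (fun v => mle n H v - γ n v)}).toReal
            ≤ (uniformModel n s γ'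
              {H | ¬ supNorm (fun v => mle n H v - γ' v) ≤ C * thr n}).toReal :=
              uniformModel_mono n s γ' hsub
          _ ≤ U n := le_csSup (hbddAbove n) ⟨γ', hγ'M, rfl⟩
    exact add_le_add hT1 hT2
  have hevnn : ∀ᶠ n in atTop, 0 ≤ riskLinf n s M (ε n)
      (fun H => 2 * C * thr n ≤ supNorm (fun v => mle n H v - γ n v)) (γ n) := by
    refine Eventually.of_forall fun n => ?_
    rw [riskLinf]
    have h1 : (0:ℝ) ≤ (uniformModel n s (γ n)
        {H | 2 * C * thr n ≤ supNorm (fun v => mle n H v - γ n v)}).toReal :=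
      uniformModel_nonneg n s (γ n) _
    have h2 : (0:ℝ) ≤ sSup {x : ℝ | ∃ γ' : Fin n → ℝ, (∀ v, |γ' v| ≤ M) ∧
        ε n ≤ supNorm (fun v => γ' v - γ n v) ∧
        x = (uniformModel n s γ'
          {H | ¬ 2 * C * thr n ≤ supNorm (fun v => mle n H v - γ n v)}).toReal} := by
      set S2 := {x : ℝ | ∃ γ' : Fin n → ℝ, (∀ v, |γ' v| ≤ M) ∧
        ε n ≤ supNorm (fun v => γ' v - γ n v) ∧
        x = (uniformModel n s γ'
          {H | ¬ 2 * C * thr n ≤ supNorm (fun v => mle n H v - γ n v)}).toReal} with hS2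
      rcases Set.eq_empty_or_nonempty S2 with hemp | hne
      · rw [hemp, Real.sSup_empty]
      · obtain ⟨x, hx⟩ := hne
        have hb : BddAbove S2 := by
          refine ⟨1, ?_⟩
          rintro y ⟨γ', -, -, rfl⟩
          exact uniformModel_le_one n s γ' _
        obtain ⟨γ', hb1, hb2, rfl⟩ := hx
        exact (uniformModel_nonneg n s γ' _).trans (le_csSup hb ⟨γ', hb1, hb2, rfl⟩)
    linarith
  have hlim : Tendsto (fun n => f n (γ n) + U n) atTop (nhds 0) := by
    simpa using hγtend.add hUto
  exact tendsto_of_tendsto_of_tendsto_of_le_of_le' tendsto_const_nhds hlim hevnn hevkey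

theorem minimax_b
    (s : ℕ) (hs : 2 ≤ s) (M : ℝ) (hM : 0 < M)
    (ε : ℕ → ℝ) (hε : ∀ n, 0 < ε n) :
    (Tendsto (fun (n : ℕ) => ε n * (n : ℝ) ^ (((s : ℝ) - 1) / 2)) atTop (nhds 0) →
      ∀ ψ : (n : ℕ) → (Finset (Fin n) → Bool) → Prop,
        ∃ γ : (n : ℕ) → Fin n → ℝ, (∀ n, ∀ v : Fin n, |γ n v| ≤ M) ∧
          Tendsto (fun n => riskLinf n s M (ε n) (ψ n) (γ n)) atTop (nhds 1)) := by
  intro hεb ψ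
  set c : ℝ := logistic (-((s:ℝ) * M)) with hcdef
  have hcpos : 0 < c := logistic_pos _
  set D : ℕ → ℝ := fun n => Real.sqrt (Real.exp ((n:ℝ)^(s-1) * (ε n)^2 / (c*c)) - 1) with hD
  set Pp : (n : ℕ) → (Fin n → ℝ) → ℝ := fun n κ => (uniformModel n s κ {H | ψ n H}).toReal
    with hPp
  set Iset : (n : ℕ) → Set ℝ := fun n =>
    {x | ∃ κ : Fin n → ℝ, (∀ v, |κ v| ≤ M) ∧ x = Pp n κ} with hIset
  have hIne : ∀ n, (Iset n).Nonempty :=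
    fun n => ⟨Pp n 0, 0, fun v => by simpa using hM.le, rfl⟩
  have hIbdd : ∀ n, BddBelow (Iset n) := by
    intro n; refine ⟨0, ?_⟩; rintro x ⟨κ, -, rfl⟩; exact uniformModel_nonneg n s κ _
  have hIle1 : ∀ n, sInf (Iset n) ≤ 1 := by
    intro n
    refine (csInf_le (hIbdd n) ⟨0, fun v => by simpa using hM.le, rfl⟩).trans ?_
    exact uniformModel_le_one n s 0 _
  have hγex : ∀ n : ℕ, ∃ g : Fin n → ℝ, (∀ v, |g v| ≤ M) ∧
      Pp n g < sInf (Iset n) + 1/((n:ℝ)+1) := by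
    intro n
    obtain ⟨x, hx, hlt⟩ := Real.lt_sInf_add_pos (hIne n)
      (show (0:ℝ) < 1/((n:ℝ)+1) by positivity)
    obtain ⟨g, hg, rfl⟩ := hx
    exact ⟨g, hg, hlt⟩
  choose γ hγM hγI using hγex
  refine ⟨γ, hγM, ?_⟩
  have hub : ∀ n : ℕ, riskLinf n s M (ε n) (ψ n) (γ n) ≤ 1 + 1/((n:ℝ)+1) := by
    intro n
    rw [riskLinf]
    set S2 := {x : ℝ | ∃ γ' : Fin n → ℝ, (∀ v, |γ' v| ≤ M) ∧
      ε n ≤ supNorm (fun v => γ' v - γ n v) ∧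
      x = (uniformModel n s γ' {H | ¬ ψ n H}).toReal} with hS2
    have hS2le : sSup S2 ≤ 1 - sInf (Iset n) := by
      rcases Set.eq_empty_or_nonempty S2 with hemp | hne
      · rw [hemp, Real.sSup_empty]; linarith [hIle1 n]
      · refine csSup_le hne ?_
        rintro x ⟨γ', hγ'M, -, rfl⟩
        rw [uniformModel_compl n s γ' (ψ n)]
        have hle : sInf (Iset n) ≤ Pp n γ' := csInf_le (hIbdd n) ⟨γ', hγ'M, rfl⟩
        rw [hPp] at hle
        simp only at hle
        linarith
    have hPl := (hγI n).le
    rw [hPp] at hPl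
    simp only at hPl
    linarith
  -- D tends to zero
  have hx2 : Tendsto (fun n : ℕ => (n:ℝ)^(s-1) * (ε n)^2 / (c*c)) atTop (nhds 0) := by
    have heq : ∀ n : ℕ, (ε n * (n:ℝ) ^ (((s:ℝ)-1)/2))^2 = (n:ℝ)^(s-1) * (ε n)^2 := by
      intro n
      rw [mul_pow]
      rw [mul_comm ((ε n)^2)]
      congr 1
      rw [← Real.rpow_natCast ((n:ℝ) ^ (((s:ℝ)-1)/2)) 2, ← Real.rpow_mul (Nat.cast_nonneg n)]
      rw [show ((s:ℝ)-1)/2 * ((2:ℕ):ℝ) = ((s:ℝ)-1) by push_cast; ring]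
      rw [show ((s:ℝ)-1) = (((s-1 : ℕ)):ℝ) by rw [Nat.cast_sub (by omega : 1 ≤ s)]; push_cast; ring]
      exact Real.rpow_natCast _ _
    have h0 : Tendsto (fun n : ℕ => (ε n * (n:ℝ) ^ (((s:ℝ)-1)/2))^2) atTop (nhds 0) := by
      have := hεb.pow 2
      simpa using this
    rw [show (fun n : ℕ => (n:ℝ)^(s-1) * (ε n)^2 / (c*c))
        = fun n : ℕ => (ε n * (n:ℝ) ^ (((s:ℝ)-1)/2))^2 / (c*c) by
      funext n; rw [heq]]
    simpa using h0.div_const (c*c)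
  have hDto : Tendsto D atTop (nhds 0) := by
    have h4 : Tendsto (fun n : ℕ => Real.exp ((n:ℝ)^(s-1) * (ε n)^2 / (c*c)))
        atTop (nhds 1) := by
      have h3 := (Real.continuous_exp.tendsto 0).comp hx2
      simpa [Function.comp_def] using h3
    have h2 : Tendsto (fun n : ℕ => Real.exp ((n:ℝ)^(s-1) * (ε n)^2 / (c*c)) - 1)
        atTop (nhds 0) := by
      have := h4.sub (tendsto_const_nhds (x := (1:ℝ)))
      simpa using this
    have h5 := (Real.continuous_sqrt.tendsto 0).comp h2
    rw [hD]
    simpa [Function.comp_def] using h5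
  have hεto : Tendsto ε atTop (nhds 0) := by
    have hub2 : ∀ᶠ n in atTop, ε n ≤ ε n * (n:ℝ) ^ (((s:ℝ)-1)/2) := by
      filter_upwards [eventually_ge_atTop 1] with n hn
      have hs2 : (0:ℝ) ≤ ((s:ℝ)-1)/2 := by
        have : (2:ℝ) ≤ (s:ℝ) := by exact_mod_cast hs
        linarith
      have h1 : (1:ℝ) ≤ (n:ℝ) ^ (((s:ℝ)-1)/2) :=
        Real.one_le_rpow (by exact_mod_cast hn) hs2
      nlinarith [hε n]
    exact tendsto_of_tendsto_of_tendsto_of_le_of_le' tendsto_const_nhds hεb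
      (Eventually.of_forall fun n => (hε n).le) hub2
  have hεleM : ∀ᶠ n in atTop, ε n ≤ M := hεto.eventually (eventually_le_nhds hM)
  -- lower bound eventually
  have hlb : ∀ᶠ n in atTop, 1 - D n ≤ riskLinf n s M (ε n) (ψ n) (γ n) := by
    filter_upwards [eventually_ge_atTop 1, hεleM] with n hn1 hεM
    have hnpos : 0 < n := hn1
    set v0 : Fin n := ⟨0, hnpos⟩ with hv0
    set t : ℝ := if γ n v0 ≤ 0 then ε n else -(ε n) with htd
    set γ' : Fin n → ℝ := Function.update (γ n) v0 (γ n v0 + t) with hγ'd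
    have habs_t : |t| = ε n := by
      rw [htd]
      split
      · exact abs_of_pos (hε n)
      · rw [abs_neg]; exact abs_of_pos (hε n)
    have hγ'v0 : γ' v0 - γ n v0 = t := by
      rw [hγ'd, Function.update_self]; ring
    have hγ'M : ∀ v, |γ' v| ≤ M := by
      intro v
      by_cases hv : v = v0
      · rw [hv, hγ'd, Function.update_self]
        have hb := abs_le.1 (hγM n v0)
        rw [htd]
        split
        · next h =>
          rw [abs_le]
          constructor <;> linarith [hε n]
        · next h =>
          push_neg at h
          rw [abs_le]
          constructor <;> linarith [hε n]
      · rw [hγ'd, Function.update_of_ne hv]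
        exact hγM n v
    have hsep : ε n ≤ supNorm (fun v => γ' v - γ n v) := by
      have h1 := le_supNorm (fun v => γ' v - γ n v) v0
      simp only [hγ'v0] at h1
      rw [habs_t] at h1
      exact h1
    have hdiffv : ∀ v, v ≠ v0 → γ' v = γ n v := by
      intro v hv
      rw [hγ'd, Function.update_of_ne hv]
    have htv := tv_final n s M (γ n) γ' (hγM n) hγ'M v0 hdiffv (ε n)
      (by rw [hγ'v0, habs_t])
    have hdd := uniformModel_diff_le n s (γ n) γ' {H | ψ n H}
    have hDiff : |Pp n γ' - Pp n (γ n)| ≤ D n := by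
      rw [hPp]
      simp only
      refine hdd.trans (htv.trans ?_)
      rw [hD, hcdef]
    rw [riskLinf]
    set S2 := {x : ℝ | ∃ g : Fin n → ℝ, (∀ v, |g v| ≤ M) ∧
      ε n ≤ supNorm (fun v => g v - γ n v) ∧
      x = (uniformModel n s g {H | ¬ ψ n H}).toReal} with hS2
    have hbdd : BddAbove S2 := by
      refine ⟨1, ?_⟩
      rintro x ⟨g, -, -, rfl⟩
      exact uniformModel_le_one n s g _
    have hmem : (uniformModel n s γ' {H | ¬ ψ n H}).toReal ∈ S2 := ⟨γ', hγ'M, hsep, rfl⟩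
    have h2 : 1 - Pp n γ' ≤ sSup S2 := by
      have := le_csSup hbdd hmem
      rw [uniformModel_compl n s γ' (ψ n)] at this
      rw [hPp]
      simpa using this
    have h3 := abs_le.1 hDiff
    simp only [hPp] at h2 h3
    linarith [h3.1, h3.2]
  have hone : Tendsto (fun n : ℕ => 1 - D n) atTop (nhds 1) := by
    have := (tendsto_const_nhds (x := (1:ℝ))).sub hDto
    simpa using this
  have htwo : Tendsto (fun n : ℕ => 1 + 1/((n:ℝ)+1)) atTop (nhds 1) := by
    have := (tendsto_const_nhds (x := (1:ℝ))).add tendsto_one_div_add_atTop_nhds_zero_nat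
    simpa using this
  exact tendsto_of_tendsto_of_tendsto_of_le_of_le' hone htwo hlb
    (Eventually.of_forall hub)

end MainProof


/-- **Theorem 3.4 (minimax detection threshold in the `L_∞` norm).**
(a) If `ε_n √(n^{s−1}/log n) → ∞`, the test
`φ^max_{n,s} = 1{‖β̂_s − γ‖_∞ ≥ 2C √(log n/n^{s−1})}`, with `C > 0` chosen so that
`‖β̂_s − κ‖_∞ ≤ C √(log n/n^{s−1})` holds with probability `→ 1` under every `κ ∈ B(M)`,
is asymptotically powerful: its worst-case risk tends to `0` for every null `γ ∈ B(M)`.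
(b) If `ε_n n^{(s−1)/2} → 0`, all tests are asymptotically powerless: for every sequence of
tests there is a null `γ ∈ B(M)` whose worst-case risk tends to `1`. -/
theorem minimax_testing_Linf
    (s : ℕ) (hs : 2 ≤ s) (M : ℝ) (hM : 0 < M)
    (ε : ℕ → ℝ) (hε : ∀ n, 0 < ε n)
    (mle : (n : ℕ) → (Finset (Fin n) → Bool) → Fin n → ℝ)
    (hmle : ∀ n H, (∃ b, IsMLE n s H b) → IsMLE n s H (mle n H)) :
    -- (a) the sup-norm test is asymptotically powerful above the threshold
    (∀ C : ℝ, 0 < C →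
      (∀ κ : (n : ℕ) → Fin n → ℝ, (∀ n, ∀ v : Fin n, |κ n v| ≤ M) →
        Tendsto (fun n =>
          (uniformModel n s (κ n)
            {H | supNorm (fun v => mle n H v - κ n v)
                  ≤ C * Real.sqrt (Real.log n / (n : ℝ) ^ (s - 1))}).toReal)
          atTop (nhds 1)) →
      Tendsto (fun (n : ℕ) => ε n * Real.sqrt ((n : ℝ) ^ (s - 1) / Real.log n)) atTop atTop →
      ∀ γ : (n : ℕ) → Fin n → ℝ, (∀ n, ∀ v : Fin n, |γ n v| ≤ M) →
        Tendsto (fun n =>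
          riskLinf n s M (ε n)
            (fun H => 2 * C * Real.sqrt (Real.log n / (n : ℝ) ^ (s - 1))
                        ≤ supNorm (fun v => mle n H v - γ n v))
            (γ n)) atTop (nhds 0))
    ∧
    -- (b) all tests are asymptotically powerless below the threshold
    (Tendsto (fun (n : ℕ) => ε n * (n : ℝ) ^ (((s : ℝ) - 1) / 2)) atTop (nhds 0) →
      ∀ ψ : (n : ℕ) → (Finset (Fin n) → Bool) → Prop,
        ∃ γ : (n : ℕ) → Fin n → ℝ, (∀ n, ∀ v : Fin n, |γ n v| ≤ M) ∧
          Tendsto (fun n => riskLinf n s M (ε n) (ψ n) (γ n)) atTop (nhds 1)) :=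
  ⟨minimax_a s hs M hM ε hε mle, minimax_b s hs M hM ε hε⟩

end
end

section
/- Fix r ≥ 2, M > 0, 2 ≤ s ≤ r and β_s ∈ B(M). Then there exist constants C₁', C₂' > 0 depending only on r and M such that for every β ∈ ℝ^n, the Hessian ∇²ℓ_{n,s}(β) of the negative log-likelihood (which does not depend on the observed hypergraph) satisfies C₁'·e^{−s‖β − β_s‖_2}·n^{s−1} ≤ λ_min(∇²ℓ_{n,s}(β)) ≤ λ_max(∇²ℓ_{n,s}(β)) ≤ C₂'·n^{s−1}. Consequently, for each constant K > 0 there exist constants C₁, C₂ > 0 depending on r, K, M such that C₁·n^{s−1} ≤ inf{λ_min(∇²ℓ_{n,s}(β)) : ‖β − β_s‖_2 ≤ K} ≤ sup{λ_max(∇²ℓ_{n,s}(β)) : ‖β − β_s‖_2 ≤ K} ≤ C₂·n^{s−1}. -/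
open MeasureTheory ProbabilityTheory Filter Finset Matrix

noncomputable section

/-- The smallest eigenvalue of a real symmetric (Hermitian) matrix. -/
def lambdaMin {n : ℕ} (A : Matrix (Fin n) (Fin n) ℝ) : ℝ :=
  if h : A.IsHermitian then ⨅ i, h.eigenvalues i else 0

/-- The largest eigenvalue of a real symmetric (Hermitian) matrix. -/
def lambdaMax {n : ℕ} (A : Matrix (Fin n) (Fin n) ℝ) : ℝ :=
  if h : A.IsHermitian then ⨆ i, h.eigenvalues i else 0

theorem quad_general (n s : ℕ) (w : Finset (Fin n) → ℝ) (x : Fin n → ℝ) :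
    ∑ u, ∑ v, x u * x v * (∑ e ∈ Finset.univ.filter
        (fun e : Finset (Fin n) => e.card = s ∧ u ∈ e ∧ v ∈ e), w e)
      = ∑ e ∈ Finset.univ.filter (fun e : Finset (Fin n) => e.card = s),
          w e * (∑ v ∈ e, x v) ^ 2 := by
  have key : ∀ u v : Fin n, x u * x v * (∑ e ∈ Finset.univ.filter
        (fun e : Finset (Fin n) => e.card = s ∧ u ∈ e ∧ v ∈ e), w e)
      = ∑ e ∈ Finset.univ.filter (fun e : Finset (Fin n) => e.card = s),
          (if u ∈ e then x u else 0) * ((if v ∈ e then x v else 0) * w e) := by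
    intro u v
    rw [Finset.mul_sum]
    rw [show (Finset.univ.filter (fun e : Finset (Fin n) => e.card = s ∧ u ∈ e ∧ v ∈ e))
        = (Finset.univ.filter (fun e : Finset (Fin n) => e.card = s)).filter
            (fun e => u ∈ e ∧ v ∈ e) by
      rw [Finset.filter_filter]]
    rw [Finset.sum_filter]
    refine Finset.sum_congr rfl fun e _ => ?_
    by_cases h1 : u ∈ e <;> by_cases h2 : v ∈ e <;> simp [h1, h2] <;> ring
  calc ∑ u, ∑ v, x u * x v * (∑ e ∈ Finset.univ.filter
        (fun e : Finset (Fin n) => e.card = s ∧ u ∈ e ∧ v ∈ e), w e)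
      = ∑ u, ∑ v, ∑ e ∈ Finset.univ.filter (fun e : Finset (Fin n) => e.card = s),
          (if u ∈ e then x u else 0) * ((if v ∈ e then x v else 0) * w e) := by
        exact Finset.sum_congr rfl fun u _ => Finset.sum_congr rfl fun v _ => key u v
    _ = ∑ u, ∑ e ∈ Finset.univ.filter (fun e : Finset (Fin n) => e.card = s),
          ∑ v, (if u ∈ e then x u else 0) * ((if v ∈ e then x v else 0) * w e) :=
        Finset.sum_congr rfl fun u _ => Finset.sum_comm
    _ = ∑ e ∈ Finset.univ.filter (fun e : Finset (Fin n) => e.card = s),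
          ∑ u, ∑ v, (if u ∈ e then x u else 0) * ((if v ∈ e then x v else 0) * w e) :=
        Finset.sum_comm
    _ = _ := by
        refine Finset.sum_congr rfl fun e _ => ?_
        rw [← Finset.sum_mul_sum, ← Finset.sum_mul, Finset.sum_ite_mem,
          Finset.univ_inter]
        ring

theorem countA (n s : ℕ) (hs : 1 ≤ s) (v : Fin n) :
    ((Finset.univ : Finset (Finset (Fin n))).filter (fun e => e.card = s ∧ v ∈ e)).card
      = (n - 1).choose (s - 1) := by
  have h : ((Finset.univ : Finset (Fin n)).erase v).card = n - 1 := by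
    rw [Finset.card_erase_of_mem (Finset.mem_univ v), Finset.card_univ, Fintype.card_fin]
  rw [← h, ← Finset.card_powersetCard]
  refine Finset.card_nbij' (fun e => e.erase v) (fun t => insert v t) ?_ ?_ ?_ ?_
  · intro e he
    simp only [Finset.mem_coe, Finset.mem_filter] at he
    rw [Finset.mem_coe, Finset.mem_powersetCard]
    exact ⟨fun u hu => Finset.mem_erase.2 ⟨(Finset.mem_erase.1 hu).1, Finset.mem_univ u⟩,
      by rw [Finset.card_erase_of_mem he.2.2, he.2.1]⟩
  · intro t ht
    rw [Finset.mem_coe, Finset.mem_powersetCard] at ht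
    have hv : v ∉ t := fun hv => (Finset.mem_erase.1 (ht.1 hv)).1 rfl
    simp only [Finset.mem_coe, Finset.mem_filter, Finset.mem_univ, true_and]
    exact ⟨by rw [Finset.card_insert_of_notMem hv, ht.2, Nat.sub_add_cancel hs],
      Finset.mem_insert_self v t⟩
  · intro e he
    simp only [Finset.mem_coe, Finset.mem_filter] at he
    exact Finset.insert_erase he.2.2
  · intro t ht
    rw [Finset.mem_coe, Finset.mem_powersetCard] at ht
    exact Finset.erase_insert (fun hv => (Finset.mem_erase.1 (ht.1 hv)).1 rfl)

theorem countB (n s : ℕ) (hs : 2 ≤ s) (u v : Fin n) (huv : u ≠ v) :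
    ((Finset.univ : Finset (Finset (Fin n))).filter (fun e => e.card = s ∧ u ∈ e ∧ v ∈ e)).card
      = (n - 2).choose (s - 2) := by
  have h : (((Finset.univ : Finset (Fin n)).erase u).erase v).card = n - 2 := by
    rw [Finset.card_erase_of_mem (Finset.mem_erase.2 ⟨huv.symm, Finset.mem_univ v⟩),
      Finset.card_erase_of_mem (Finset.mem_univ u), Finset.card_univ, Fintype.card_fin]
    omega
  rw [← h, ← Finset.card_powersetCard]
  refine Finset.card_nbij' (fun e => (e.erase u).erase v) (fun t => insert u (insert v t))
    ?_ ?_ ?_ ?_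
  · intro e he
    simp only [Finset.mem_coe, Finset.mem_filter] at he
    rw [Finset.mem_coe, Finset.mem_powersetCard]
    refine ⟨fun w hw => ?_, ?_⟩
    · rw [Finset.mem_erase] at hw ⊢
      exact ⟨hw.1, Finset.mem_erase.2 ⟨(Finset.mem_erase.1 hw.2).1, Finset.mem_univ w⟩⟩
    · rw [Finset.card_erase_of_mem (Finset.mem_erase.2 ⟨huv.symm, he.2.2.2⟩),
        Finset.card_erase_of_mem he.2.2.1, he.2.1]
      omega
  · intro t ht
    rw [Finset.mem_coe, Finset.mem_powersetCard] at ht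
    have hv : v ∉ t := fun hv => (Finset.mem_erase.1 (ht.1 hv)).1 rfl
    have hu : u ∉ insert v t := by
      intro hu
      rcases Finset.mem_insert.1 hu with h' | h'
      · exact huv h'
      · exact (Finset.mem_erase.1 (Finset.mem_erase.1 (ht.1 h')).2).1 rfl
    simp only [Finset.mem_coe, Finset.mem_filter, Finset.mem_univ, true_and]
    refine ⟨?_, Finset.mem_insert_self u _, Finset.mem_insert.2 (Or.inr (Finset.mem_insert_self v t))⟩
    rw [Finset.card_insert_of_notMem hu, Finset.card_insert_of_notMem hv, ht.2]
    omega
  · intro e he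
    simp only [Finset.mem_coe, Finset.mem_filter] at he
    simp only
    rw [Finset.insert_erase (Finset.mem_erase.2 ⟨huv.symm, he.2.2.2⟩),
      Finset.insert_erase he.2.2.1]
  · intro t ht
    rw [Finset.mem_coe, Finset.mem_powersetCard] at ht
    have hv : v ∉ t := fun hv => (Finset.mem_erase.1 (ht.1 hv)).1 rfl
    have hu : u ∉ insert v t := by
      intro hu
      rcases Finset.mem_insert.1 hu with h' | h'
      · exact huv h'
      · exact (Finset.mem_erase.1 (Finset.mem_erase.1 (ht.1 h')).2).1 rfl
    simp only
    rw [Finset.erase_insert hu, Finset.erase_insert hv]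

theorem sum_sq_eq (n s : ℕ) (hs : 2 ≤ s) (x : Fin n → ℝ) :
    ∑ e ∈ Finset.univ.filter (fun e : Finset (Fin n) => e.card = s), (∑ v ∈ e, x v) ^ 2
    = (((n - 1).choose (s - 1) : ℝ) - ((n - 2).choose (s - 2) : ℝ)) * (∑ v, x v ^ 2)
      + ((n - 2).choose (s - 2) : ℝ) * (∑ v, x v) ^ 2 := by
  have hq := quad_general n s (fun _ => (1 : ℝ)) x
  simp only [one_mul] at hq
  rw [← hq]
  have hstep : ∀ u : Fin n,
      ∑ v, x u * x v * (∑ _e ∈ Finset.univ.filter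
          (fun e : Finset (Fin n) => e.card = s ∧ u ∈ e ∧ v ∈ e), (1 : ℝ))
      = x u * x u * ((n - 1).choose (s - 1) : ℝ)
        + (((n - 2).choose (s - 2) : ℝ)) * (x u * ((∑ v, x v) - x u)) := by
    intro u
    rw [← Finset.add_sum_erase _ _ (Finset.mem_univ u)]
    congr 1
    · rw [Finset.sum_const, nsmul_eq_mul, mul_one]
      congr 2
      rw [← countA n s (by omega) u]
      congr 1
      ext e
      simp only [Finset.mem_filter, Finset.mem_univ, true_and, and_self_iff, and_assoc]
    · rw [← Finset.sum_erase_eq_sub (Finset.mem_univ u)]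
      rw [show (((n - 2).choose (s - 2) : ℝ)) * (x u * ∑ v ∈ Finset.univ.erase u, x v)
          = ∑ v ∈ Finset.univ.erase u, x u * x v * (((n - 2).choose (s - 2) : ℝ)) by
        rw [Finset.mul_sum, Finset.mul_sum]
        exact Finset.sum_congr rfl fun v _ => by ring]
      refine Finset.sum_congr rfl fun v hv => ?_
      have huv : u ≠ v := fun h => (Finset.mem_erase.1 hv).1 h.symm
      rw [Finset.sum_const, nsmul_eq_mul, mul_one, countB n s hs u v huv]
  rw [Finset.sum_congr rfl fun u _ => hstep u]
  rw [Finset.sum_add_distrib, ← Finset.mul_sum]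
  have h1 : ∑ u, x u * x u * ((n - 1).choose (s - 1) : ℝ)
      = ((n - 1).choose (s - 1) : ℝ) * ∑ v, x v ^ 2 := by
    rw [Finset.mul_sum]; exact Finset.sum_congr rfl fun u _ => by ring
  have h2 : ∑ u, x u * ((∑ v, x v) - x u) = (∑ v, x v) ^ 2 - ∑ v, x v ^ 2 := by
    have : ∀ u : Fin n, x u * ((∑ v, x v) - x u) = x u * (∑ v, x v) - x u ^ 2 := by
      intro u; ring
    rw [Finset.sum_congr rfl fun u _ => this u, Finset.sum_sub_distrib, ← Finset.sum_mul, sq]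
  rw [h1, h2]
  ring

theorem weight_lb (S : ℝ) : Real.exp (-|S|) / 4 ≤ Real.exp S / (1 + Real.exp S) ^ 2 := by
  have h1 := Real.exp_pos S
  rcases abs_cases S with ⟨h, h0⟩ | ⟨h, h0⟩
  · -- S ≥ 0
    rw [h]
    have he : 1 ≤ Real.exp S := Real.one_le_exp h0
    rw [div_le_div_iff₀ (by norm_num) (by positivity), Real.exp_neg]
    have : (1 + Real.exp S) ^ 2 ≤ (2 * Real.exp S) ^ 2 := by nlinarith
    calc (Real.exp S)⁻¹ * (1 + Real.exp S)^2 ≤ (Real.exp S)⁻¹ * (2*Real.exp S)^2 := by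
          apply mul_le_mul_of_nonneg_left this (by positivity)
      _ = 4 * Real.exp S := by field_simp; ring
      _ = Real.exp S * 4 := by ring
  · -- S ≤ 0
    rw [h, neg_neg]
    have he : Real.exp S ≤ 1 := Real.exp_le_one_iff.2 (by linarith)
    rw [div_le_div_iff₀ (by norm_num) (by positivity)]
    have h4 : (1 + Real.exp S) ^ 2 ≤ 4 := by nlinarith
    nlinarith
theorem weight_ub (S : ℝ) : Real.exp S / (1 + Real.exp S) ^ 2 ≤ 1 := by
  have h1 := Real.exp_pos S
  rw [div_le_one (by positivity)]
  nlinarith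

theorem eigen_eq_quad {n : ℕ} (A : Matrix (Fin n) (Fin n) ℝ) (hA : A.IsHermitian) (i : Fin n) :
    ∃ x : Fin n → ℝ, (∑ j, x j ^ 2) = 1 ∧ hA.eigenvalues i = x ⬝ᵥ A *ᵥ x := by
  set x : Fin n → ℝ := ⇑(hA.eigenvectorBasis i) with hx
  have hnorm : ‖hA.eigenvectorBasis i‖ = 1 := hA.eigenvectorBasis.orthonormal.1 i
  have hsum : (∑ j, x j ^ 2) = 1 := by
    have := EuclideanSpace.norm_eq (hA.eigenvectorBasis i)
    rw [hnorm] at this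
    have h2 : Real.sqrt (∑ j, ‖x j‖ ^ 2) = 1 := this.symm
    have h3 : (∑ j, ‖x j‖ ^ 2) = 1 := Real.sqrt_eq_one.1 h2
    simpa [Real.norm_eq_abs, sq_abs] using h3
  refine ⟨x, hsum, ?_⟩
  have hmul : A *ᵥ x = hA.eigenvalues i • x := hA.mulVec_eigenvectorBasis i
  rw [hmul, dotProduct_smul]
  have : x ⬝ᵥ x = ∑ j, x j ^ 2 := by
    simp [dotProduct, sq]
  rw [smul_eq_mul, this, hsum, mul_one]

theorem covMat_isHermitian (n s : ℕ) (β : Fin n → ℝ) : (covMat n s β).IsHermitian := by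
  show (covMat n s β)ᴴ = covMat n s β
  ext u v
  simp only [Matrix.conjTranspose_apply, covMat, Matrix.of_apply, star_trivial]
  refine Finset.sum_congr ?_ fun _ _ => rfl
  ext e
  simp only [Finset.mem_filter]
  tauto

theorem quad_cov (n s : ℕ) (β : Fin n → ℝ) (x : Fin n → ℝ) :
    x ⬝ᵥ covMat n s β *ᵥ x
      = ∑ e ∈ Finset.univ.filter (fun e : Finset (Fin n) => e.card = s),
          Real.exp (∑ w ∈ e, β w) / (1 + Real.exp (∑ w ∈ e, β w)) ^ 2 * (∑ v ∈ e, x v) ^ 2 := by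
  rw [← quad_general n s (fun e => Real.exp (∑ w ∈ e, β w) / (1 + Real.exp (∑ w ∈ e, β w)) ^ 2) x]
  simp only [dotProduct, Matrix.mulVec, covMat, Matrix.of_apply]
  refine Finset.sum_congr rfl fun u _ => ?_
  rw [Finset.mul_sum]
  exact Finset.sum_congr rfl fun v _ => by ring

/-- Master quantitative lemma. -/
theorem master (s : ℕ) (hs : 2 ≤ s) (M : ℝ) (hM : 0 < M) (n : ℕ) (hn : 2 * s + 2 ≤ n)
    (βs β : Fin n → ℝ) (hβs : ∀ v, |βs v| ≤ M) :
    (Real.exp (-(s : ℝ) * M) / (4 * ((s - 1).factorial * 2 ^ (s - 1))))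
        * Real.exp (-(s : ℝ) * l2norm (fun v => β v - βs v)) * (n : ℝ) ^ (s - 1)
      ≤ lambdaMin (covMat n s β)
    ∧ lambdaMin (covMat n s β) ≤ lambdaMax (covMat n s β)
    ∧ lambdaMax (covMat n s β) ≤ 2 * (n : ℝ) ^ (s - 1) := by
  have hA := covMat_isHermitian n s β
  set d := l2norm (fun v => β v - βs v) with hd
  have hd0 : 0 ≤ d := Real.sqrt_nonneg _
  set q : ℝ := Real.exp (-((s : ℝ) * (M + d))) / 4 with hq
  have hq0 : 0 < q := by positivity
  -- bound on each weight
  have hWlb : ∀ e ∈ Finset.univ.filter (fun e : Finset (Fin n) => e.card = s),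
      q ≤ Real.exp (∑ w ∈ e, β w) / (1 + Real.exp (∑ w ∈ e, β w)) ^ 2 := by
    intro e he
    have hcard : e.card = s := (Finset.mem_filter.1 he).2
    have hSb : |∑ w ∈ e, β w| ≤ (s : ℝ) * (M + d) := by
      calc |∑ w ∈ e, β w| ≤ ∑ w ∈ e, |β w| := Finset.abs_sum_le_sum_abs _ _
        _ ≤ ∑ _w ∈ e, (M + d) := by
            refine Finset.sum_le_sum fun v _ => ?_
            have h1 : |β v - βs v| ≤ d := by
              rw [hd, l2norm, ← Real.sqrt_sq_eq_abs]
              exact Real.sqrt_le_sqrt (Finset.single_le_sum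
                (fun u _ => sq_nonneg (β u - βs u)) (Finset.mem_univ v))
            calc |β v| = |βs v + (β v - βs v)| := by ring_nf
              _ ≤ |βs v| + |β v - βs v| := abs_add_le _ _
              _ ≤ M + d := add_le_add (hβs v) h1
        _ = (s : ℝ) * (M + d) := by rw [Finset.sum_const, hcard, nsmul_eq_mul]
    calc q ≤ Real.exp (-|∑ w ∈ e, β w|) / 4 := by
          rw [hq]
          exact div_le_div_of_nonneg_right
            (by exact Real.exp_le_exp.2 (by linarith)) (by norm_num)
      _ ≤ _ := weight_lb _
  -- Pascal
  have hPascalN : (n - 1).choose (s - 1) = (n - 2).choose (s - 2) + (n - 2).choose (s - 1) := by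
    have h1 : n - 1 = (n - 2) + 1 := by omega
    have h2 : s - 1 = (s - 2) + 1 := by omega
    rw [h1, h2, Nat.choose_succ_succ]
  have hPascal : ((n - 1).choose (s - 1) : ℝ) - ((n - 2).choose (s - 2) : ℝ)
      = ((n - 2).choose (s - 1) : ℝ) := by rw [hPascalN]; push_cast; ring
  set C : ℝ := ((n - 2).choose (s - 1) : ℝ) with hC
  set N2 : ℝ := ((n - 2).choose (s - 2) : ℝ) with hN2d
  have hC0 : 0 ≤ C := Nat.cast_nonneg _
  have hN20 : 0 ≤ N2 := Nat.cast_nonneg _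
  -- quadratic form bounds
  have hquad : ∀ x : Fin n → ℝ,
      q * C * (∑ v, x v ^ 2) ≤ x ⬝ᵥ covMat n s β *ᵥ x
      ∧ x ⬝ᵥ covMat n s β *ᵥ x ≤ 2 * (n : ℝ) ^ (s - 1) * (∑ v, x v ^ 2) := by
    intro x
    have hsq : ∑ e ∈ Finset.univ.filter (fun e : Finset (Fin n) => e.card = s),
        (∑ v ∈ e, x v) ^ 2 = C * (∑ v, x v ^ 2) + N2 * (∑ v, x v) ^ 2 := by
      rw [sum_sq_eq n s hs x, hPascal]
    have hQ0 : (0 : ℝ) ≤ ∑ v, x v ^ 2 := Finset.sum_nonneg fun v _ => sq_nonneg _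
    constructor
    · calc q * C * (∑ v, x v ^ 2)
          ≤ q * (C * (∑ v, x v ^ 2) + N2 * (∑ v, x v) ^ 2) := by
            nlinarith [mul_nonneg (mul_nonneg hq0.le hN20) (sq_nonneg (∑ v, x v))]
        _ = q * ∑ e ∈ Finset.univ.filter (fun e : Finset (Fin n) => e.card = s),
              (∑ v ∈ e, x v) ^ 2 := by rw [hsq]
        _ = ∑ e ∈ Finset.univ.filter (fun e : Finset (Fin n) => e.card = s),
              q * (∑ v ∈ e, x v) ^ 2 := Finset.mul_sum _ _ _
        _ ≤ ∑ e ∈ Finset.univ.filter (fun e : Finset (Fin n) => e.card = s),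
              Real.exp (∑ w ∈ e, β w) / (1 + Real.exp (∑ w ∈ e, β w)) ^ 2
                * (∑ v ∈ e, x v) ^ 2 := by
            exact Finset.sum_le_sum fun e he =>
              mul_le_mul_of_nonneg_right (hWlb e he) (sq_nonneg _)
        _ = x ⬝ᵥ covMat n s β *ᵥ x := (quad_cov n s β x).symm
    · have e1 : C ≤ (n : ℝ) ^ (s - 1) := by
        rw [hC]
        calc ((n - 2).choose (s - 1) : ℝ) ≤ (((n - 2) ^ (s - 1) : ℕ) : ℝ) :=
              Nat.cast_le.2 (Nat.choose_le_pow _ _)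
          _ ≤ ((n ^ (s - 1) : ℕ) : ℝ) := Nat.cast_le.2 (Nat.pow_le_pow_left (by omega) _)
          _ = (n : ℝ) ^ (s - 1) := by push_cast; ring
      have e2 : N2 * (n : ℝ) ≤ (n : ℝ) ^ (s - 1) := by
        rw [hN2d]
        have : (n - 2).choose (s - 2) * n ≤ n ^ (s - 1) := by
          calc (n - 2).choose (s - 2) * n ≤ (n - 2) ^ (s - 2) * n :=
                Nat.mul_le_mul_right _ (Nat.choose_le_pow _ _)
            _ ≤ n ^ (s - 2) * n := Nat.mul_le_mul_right _ (Nat.pow_le_pow_left (by omega) _)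
            _ = n ^ (s - 2 + 1) := (pow_succ n (s - 2)).symm
            _ = n ^ (s - 1) := by congr 1; omega
        calc ((n - 2).choose (s - 2) : ℝ) * (n : ℝ) = (((n - 2).choose (s - 2) * n : ℕ) : ℝ) := by
              push_cast; ring
          _ ≤ ((n ^ (s - 1) : ℕ) : ℝ) := Nat.cast_le.2 this
          _ = (n : ℝ) ^ (s - 1) := by push_cast; ring
      have hT : (∑ v, x v) ^ 2 ≤ (n : ℝ) * ∑ v, x v ^ 2 := by
        have := sq_sum_le_card_mul_sum_sq (s := (Finset.univ : Finset (Fin n))) (f := x)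
        simpa [Finset.card_univ] using this
      calc x ⬝ᵥ covMat n s β *ᵥ x
          = ∑ e ∈ Finset.univ.filter (fun e : Finset (Fin n) => e.card = s),
              Real.exp (∑ w ∈ e, β w) / (1 + Real.exp (∑ w ∈ e, β w)) ^ 2
                * (∑ v ∈ e, x v) ^ 2 := quad_cov n s β x
        _ ≤ ∑ e ∈ Finset.univ.filter (fun e : Finset (Fin n) => e.card = s),
              (∑ v ∈ e, x v) ^ 2 := by
            refine Finset.sum_le_sum fun e he => ?_
            have := weight_ub (∑ w ∈ e, β w)
            nlinarith [sq_nonneg (∑ v ∈ e, x v)]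
        _ = C * (∑ v, x v ^ 2) + N2 * (∑ v, x v) ^ 2 := hsq
        _ ≤ 2 * (n : ℝ) ^ (s - 1) * (∑ v, x v ^ 2) := by
            nlinarith [mul_le_mul_of_nonneg_left hT hN20,
              mul_le_mul_of_nonneg_right e1 hQ0,
              mul_le_mul_of_nonneg_right e2 hQ0]
  -- eigenvalue bounds
  have heig : ∀ i : Fin n, q * C ≤ hA.eigenvalues i
      ∧ hA.eigenvalues i ≤ 2 * (n : ℝ) ^ (s - 1) := by
    intro i
    obtain ⟨x, hx1, hx2⟩ := eigen_eq_quad _ hA i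
    obtain ⟨hl, hu⟩ := hquad x
    rw [hx1, mul_one] at hl hu
    exact ⟨by rw [hx2]; exact hl, by rw [hx2]; exact hu⟩
  have hne : Nonempty (Fin n) := ⟨⟨0, by omega⟩⟩
  have hLmin : lambdaMin (covMat n s β) = ⨅ i, hA.eigenvalues i := by
    rw [lambdaMin, dif_pos hA]
  have hLmax : lambdaMax (covMat n s β) = ⨆ i, hA.eigenvalues i := by
    rw [lambdaMax, dif_pos hA]
  have hmin_ge : q * C ≤ lambdaMin (covMat n s β) := by
    rw [hLmin]; exact le_ciInf fun i => (heig i).1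
  have hmax_le : lambdaMax (covMat n s β) ≤ 2 * (n : ℝ) ^ (s - 1) := by
    rw [hLmax]; exact ciSup_le fun i => (heig i).2
  have hminmax : lambdaMin (covMat n s β) ≤ lambdaMax (covMat n s β) := by
    rw [hLmin, hLmax]
    obtain ⟨i0⟩ := hne
    exact le_trans (ciInf_le (Set.finite_range _).bddBelow i0)
      (le_ciSup (Set.finite_range _).bddAbove i0)
  refine ⟨?_, hminmax, hmax_le⟩
  -- constant chain
  have key : (n : ℝ) ^ (s - 1) ≤ ((s - 1).factorial : ℝ) * 2 ^ (s - 1) * C := by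
    have k1 : n ^ (s - 1) ≤ 2 ^ (s - 1) * (n - s) ^ (s - 1) := by
      calc n ^ (s - 1) ≤ (2 * (n - s)) ^ (s - 1) := Nat.pow_le_pow_left (by omega) _
        _ = 2 ^ (s - 1) * (n - s) ^ (s - 1) := by rw [Nat.mul_pow]
    have k2 : (((n - s) ^ (s - 1) : ℕ) : ℝ) ≤ ((s - 1).factorial : ℝ) * C := by
      have h := Nat.pow_le_choose (α := ℝ) (s - 1) (n - 2)
      have heq : n - 2 + 1 - (s - 1) = n - s := by omega
      rw [heq, ← hC, div_le_iff₀ (by positivity)] at h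
      push_cast
      push_cast at h
      linarith
    calc (n : ℝ) ^ (s - 1) = ((n ^ (s - 1) : ℕ) : ℝ) := by push_cast; ring
      _ ≤ ((2 ^ (s - 1) * (n - s) ^ (s - 1) : ℕ) : ℝ) := Nat.cast_le.2 k1
      _ = 2 ^ (s - 1) * (((n - s) ^ (s - 1) : ℕ) : ℝ) := by push_cast; ring
      _ ≤ 2 ^ (s - 1) * (((s - 1).factorial : ℝ) * C) := by
          exact mul_le_mul_of_nonneg_left k2 (by positivity)
      _ = ((s - 1).factorial : ℝ) * 2 ^ (s - 1) * C := by ring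
  have hexp : Real.exp (-((s : ℝ) * (M + d)))
      = Real.exp (-(s : ℝ) * M) * Real.exp (-(s : ℝ) * d) := by
    rw [← Real.exp_add]; ring_nf
  have h5 : (n : ℝ) ^ (s - 1) / (((s - 1).factorial : ℝ) * 2 ^ (s - 1)) ≤ C := by
    rw [div_le_iff₀ (by positivity)]
    calc (n : ℝ) ^ (s - 1) ≤ ((s - 1).factorial : ℝ) * 2 ^ (s - 1) * C := key
      _ = C * (((s - 1).factorial : ℝ) * 2 ^ (s - 1)) := by ring
  calc Real.exp (-(s : ℝ) * M) / (4 * ((s - 1).factorial * 2 ^ (s - 1)))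
        * Real.exp (-(s : ℝ) * d) * (n : ℝ) ^ (s - 1)
      = (Real.exp (-(s : ℝ) * M) * Real.exp (-(s : ℝ) * d) / 4)
          * ((n : ℝ) ^ (s - 1) / (((s - 1).factorial : ℝ) * 2 ^ (s - 1))) := by
        field_simp
    _ ≤ (Real.exp (-(s : ℝ) * M) * Real.exp (-(s : ℝ) * d) / 4) * C := by
        exact mul_le_mul_of_nonneg_left h5 (by positivity)
    _ = q * C := by rw [hq, hexp]
    _ ≤ lambdaMin (covMat n s β) := hmin_ge

/-- **Lemma A.2 (eigenvalue bounds for the Hessian).**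
The Hessian `∇²ℓ_{n,s}(β)` of the negative log-likelihood equals `covMat n s β`.  There exist
constants `C₁', C₂' > 0` depending only on `r` and `M` such that, for all large `n`, all
`β_s ∈ B(M)` and all `β ∈ ℝ^n`,
`C₁' e^{−s‖β−β_s‖₂} n^{s−1} ≤ λ_min(∇²ℓ_{n,s}(β)) ≤ λ_max(∇²ℓ_{n,s}(β)) ≤ C₂' n^{s−1}`;
consequently, for every `K > 0` there are `C₁, C₂ > 0` (depending on `r, K, M`) with
`C₁ n^{s−1} ≤ λ_min(∇²ℓ_{n,s}(β))` and `λ_max(∇²ℓ_{n,s}(β)) ≤ C₂ n^{s−1}` uniformly over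
`‖β − β_s‖₂ ≤ K`. -/
theorem hessian_eigenvalue_bounds
    (r : ℕ) (hr : 2 ≤ r) (M : ℝ) (hM : 0 < M)
    (s : ℕ) (hs : 2 ≤ s) (hsr : s ≤ r) :
    (∃ C₁' > 0, ∃ C₂' > 0, ∃ N : ℕ, ∀ n ≥ N, ∀ βs : Fin n → ℝ, (∀ v, |βs v| ≤ M) →
      ∀ β : Fin n → ℝ,
        C₁' * Real.exp (-(s : ℝ) * l2norm (fun v => β v - βs v)) * (n : ℝ) ^ (s - 1)
            ≤ lambdaMin (covMat n s β)
        ∧ lambdaMin (covMat n s β) ≤ lambdaMax (covMat n s β)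
        ∧ lambdaMax (covMat n s β) ≤ C₂' * (n : ℝ) ^ (s - 1))
    ∧
    (∀ K : ℝ, 0 < K →
      ∃ C₁ > 0, ∃ C₂ > 0, ∃ N : ℕ, ∀ n ≥ N, ∀ βs : Fin n → ℝ, (∀ v, |βs v| ≤ M) →
        ∀ β : Fin n → ℝ, l2norm (fun v => β v - βs v) ≤ K →
          C₁ * (n : ℝ) ^ (s - 1) ≤ lambdaMin (covMat n s β)
          ∧ lambdaMax (covMat n s β) ≤ C₂ * (n : ℝ) ^ (s - 1)) := by
  constructor
  · refine ⟨Real.exp (-(s : ℝ) * M) / (4 * ((s - 1).factorial * 2 ^ (s - 1))), by positivity,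
      2, by norm_num, 2 * s + 2, ?_⟩
    intro n hn βs hβs β
    exact master s hs M hM n hn βs β hβs
  · intro K hK
    refine ⟨Real.exp (-(s : ℝ) * M) / (4 * ((s - 1).factorial * 2 ^ (s - 1)))
        * Real.exp (-(s : ℝ) * K), by positivity, 2, by norm_num, 2 * s + 2, ?_⟩
    intro n hn βs hβs β hβ
    obtain ⟨h1, h2, h3⟩ := master s hs M hM n hn βs β hβs
    refine ⟨le_trans ?_ h1, h3⟩
    have hsd : (s : ℝ) * l2norm (fun v => β v - βs v) ≤ (s : ℝ) * K :=
      mul_le_mul_of_nonneg_left hβ (Nat.cast_nonneg s)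
    have hexp : Real.exp (-(s : ℝ) * K)
        ≤ Real.exp (-(s : ℝ) * l2norm (fun v => β v - βs v)) :=
      Real.exp_le_exp.2 (by linarith)
    have hn0 : (0 : ℝ) ≤ (n : ℝ) ^ (s - 1) := by positivity
    calc Real.exp (-(s : ℝ) * M) / (4 * ((s - 1).factorial * 2 ^ (s - 1)))
          * Real.exp (-(s : ℝ) * K) * (n : ℝ) ^ (s - 1)
        ≤ Real.exp (-(s : ℝ) * M) / (4 * ((s - 1).factorial * 2 ^ (s - 1)))
          * Real.exp (-(s : ℝ) * l2norm (fun v => β v - βs v)) * (n : ℝ) ^ (s - 1) := by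
          exact mul_le_mul_of_nonneg_right
            (mul_le_mul_of_nonneg_left hexp (by positivity)) hn0
      _ ≤ _ := le_rfl


end
end

section
/- Fix n ≥ 1 and 2 ≤ s ≤ n. Let D_s ⊂ ℝ^n be the set of all degree sequences (d_s(1),…,d_s(n)) of s-uniform hypergraphs on vertex set [n], and let R_s = {g(x) : x ∈ ℝ^n} where g: ℝ^n → ℝ^n has coordinates g_u(x) = Σ_{e ∈ C([n],s): u ∈ e} exp(Σ_{w∈e} x_w)/(1+exp(Σ_{w∈e} x_w)), i.e., R_s is the set of all expected degree sequences of the s-uniform hypergraph β-model. Then the convex hull of D_s equals the closure of R_s: conv(D_s) = cl(R_s). -/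
open MeasureTheory ProbabilityTheory Filter Finset Matrix

noncomputable section

namespace PropA3

variable {n s : ℕ}

def chi (n : ℕ) (e : Finset (Fin n)) : Fin n → ℝ := fun v => if v ∈ e then 1 else 0

def Edges (n s : ℕ) : Finset (Finset (Fin n)) :=
  Finset.univ.filter fun e : Finset (Fin n) => e.card = s

def Lmap (n s : ℕ) : ((Finset (Fin n)) → ℝ) →ₗ[ℝ] (Fin n → ℝ) where
  toFun p := ∑ e ∈ Edges n s, p e • chi n e
  map_add' p q := by simp [add_smul, Finset.sum_add_distrib]
  map_smul' c p := by simp [Finset.smul_sum, smul_smul]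

def Zset (n s : ℕ) : Set (Fin n → ℝ) :=
  Lmap n s '' {p | ∀ e, p e ∈ Set.Icc (0:ℝ) 1}

lemma one_add_exp_pos (t : ℝ) : 0 < 1 + Real.exp t := by positivity

lemma logistic_mem_Ioo (t : ℝ) : logistic t ∈ Set.Ioo (0:ℝ) 1 := by
  rw [logistic]
  constructor
  · exact div_pos (Real.exp_pos t) (one_add_exp_pos t)
  · rw [div_lt_one (one_add_exp_pos t)]; linarith [Real.exp_pos t]

lemma loglik_nonneg (t : ℝ) : 0 ≤ Real.log (1 + Real.exp t) := by
  have := Real.exp_pos t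
  have : (1:ℝ) ≤ 1 + Real.exp t := by linarith
  simpa using Real.log_nonneg this

lemma le_loglik (t : ℝ) : t ≤ Real.log (1 + Real.exp t) := by
  calc t = Real.log (Real.exp t) := (Real.log_exp t).symm
  _ ≤ _ := Real.log_le_log (Real.exp_pos t) (by linarith)

lemma hasDerivAt_loglik (t : ℝ) :
    HasDerivAt (fun u => Real.log (1 + Real.exp u)) (logistic t) t := by
  have h1 : HasDerivAt (fun u => 1 + Real.exp u) (Real.exp t) t :=
    (Real.hasDerivAt_exp t).const_add 1
  have h2 := h1.log (ne_of_gt (one_add_exp_pos t))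
  simpa [logistic, div_eq_mul_inv, mul_comm] using h2

lemma continuous_loglik : Continuous (fun u : ℝ => Real.log (1 + Real.exp u)) :=
  continuous_iff_continuousAt.2 fun t => (hasDerivAt_loglik t).continuousAt

lemma Lmap_apply_coord (p : Finset (Fin n) → ℝ) (v : Fin n) :
    Lmap n s p v = ∑ e ∈ Edges n s, p e * chi n e v := by
  simp [Lmap, Finset.sum_apply]

lemma sum_chi_mul (e : Finset (Fin n)) (x : Fin n → ℝ) :
    ∑ v, chi n e v * x v = ∑ v ∈ e, x v := by
  simp only [chi, ite_mul, one_mul, zero_mul]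
  rw [Finset.sum_ite_mem, Finset.univ_inter]

lemma sum_single_ite (e : Finset (Fin n)) (v : Fin n) :
    ∑ w ∈ e, Pi.single v (1:ℝ) w = chi n e v := by
  simp only [Pi.single_apply, chi]
  exact Finset.sum_ite_eq' e v (fun _ => (1:ℝ))

lemma degree_eq (H : Finset (Fin n) → Bool) (v : Fin n) :
    ((degree n s H v : ℝ)) = ∑ e ∈ Edges n s, (if H e then (1:ℝ) else 0) * chi n e v := by
  rw [degree, Finset.card_filter]
  push_cast
  rw [Edges, Finset.sum_filter]
  refine Finset.sum_congr rfl fun e _ => ?_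
  by_cases h1 : e.card = s <;> by_cases h2 : H e <;> by_cases h3 : v ∈ e <;>
    simp [chi, h1, h2, h3]

lemma expectedDegree_eq (x : Fin n → ℝ) (v : Fin n) :
    expectedDegree n s x v = ∑ e ∈ Edges n s, logistic (∑ u ∈ e, x u) * chi n e v := by
  rw [expectedDegree, Edges]
  rw [show (Finset.univ.filter (fun e : Finset (Fin n) => e.card = s ∧ v ∈ e))
      = (Finset.univ.filter (fun e : Finset (Fin n) => e.card = s)).filter (fun e => v ∈ e) by
    rw [Finset.filter_filter]]
  rw [Finset.sum_filter]
  refine Finset.sum_congr rfl fun e _ => ?_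
  by_cases h3 : v ∈ e <;> simp [chi, h3]

/-- The set of degree sequences. -/
def Dset (n s : ℕ) : Set (Fin n → ℝ) :=
  {y : Fin n → ℝ | ∃ H : Finset (Fin n) → Bool, y = fun v => (degree n s H v : ℝ)}

/-- The set of expected degree sequences. -/
def Rset (n s : ℕ) : Set (Fin n → ℝ) :=
  {y : Fin n → ℝ | ∃ x : Fin n → ℝ, y = fun v => expectedDegree n s x v}

lemma Dset_subset_Zset : Dset n s ⊆ Zset n s := by
  rintro y ⟨H, rfl⟩
  refine ⟨fun e => if H e then 1 else 0, fun e => ?_, ?_⟩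
  · by_cases h : H e <;> simp [h]
  · funext v
    rw [Lmap_apply_coord, degree_eq]

lemma Rset_subset_Zset : Rset n s ⊆ Zset n s := by
  rintro y ⟨x, rfl⟩
  refine ⟨fun e => logistic (∑ u ∈ e, x u), fun e => Set.Ioo_subset_Icc_self (logistic_mem_Ioo _), ?_⟩
  funext v
  rw [Lmap_apply_coord, expectedDegree_eq]

lemma Zset_convex : Convex ℝ (Zset n s) := by
  refine Convex.is_linear_image ?_ (Lmap n s).isLinear
  have : {p : Finset (Fin n) → ℝ | ∀ e, p e ∈ Set.Icc (0:ℝ) 1}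
      = Set.pi Set.univ (fun _ => Set.Icc (0:ℝ) 1) := by
    ext p
    exact ⟨fun h i _ => h i, fun h e => h e (Set.mem_univ e)⟩
  rw [this]
  exact convex_pi fun _ _ => convex_Icc 0 1

lemma Zset_isCompact : IsCompact (Zset n s) := by
  have h1 : {p : Finset (Fin n) → ℝ | ∀ e, p e ∈ Set.Icc (0:ℝ) 1}
      = Set.pi Set.univ (fun _ => Set.Icc (0:ℝ) 1) := by
    ext p
    exact ⟨fun h i _ => h i, fun h e => h e (Set.mem_univ e)⟩
  have hc : IsCompact {p : Finset (Fin n) → ℝ | ∀ e, p e ∈ Set.Icc (0:ℝ) 1} := by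
    rw [h1]; exact isCompact_univ_pi fun _ => isCompact_Icc
  exact hc.image (Lmap n s).continuous_of_finiteDimensional

lemma Zset_isClosed : IsClosed (Zset n s) := Zset_isCompact.isClosed

lemma subsetSum_mem_Dset (S : Finset (Finset (Fin n))) (hS : S ⊆ Edges n s) :
    (∑ e ∈ S, chi n e) ∈ Dset n s := by
  classical
  refine ⟨fun e => decide (e ∈ S), ?_⟩
  funext v
  have hfe : (Finset.univ.filter fun e : Finset (Fin n) =>
      e.card = s ∧ v ∈ e ∧ (decide (e ∈ S) = true)) = S.filter (fun e => v ∈ e) := by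
    ext e
    simp only [Finset.mem_filter, Finset.mem_univ, true_and, decide_eq_true_eq]
    constructor
    · rintro ⟨_, hv, heS⟩; exact ⟨heS, hv⟩
    · rintro ⟨heS, hv⟩
      have := hS heS
      rw [Edges, Finset.mem_filter] at this
      exact ⟨this.2, hv, heS⟩
  rw [Finset.sum_apply]
  rw [degree, hfe, Finset.card_filter]
  push_cast
  exact Finset.sum_congr rfl fun e _ => by simp [chi]

lemma cube_sum_mem_convexHull (A : Finset (Finset (Fin n))) (p : Finset (Fin n) → ℝ)
    (hp : ∀ e, p e ∈ Set.Icc (0:ℝ) 1) :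
    ∑ e ∈ A, p e • chi n e ∈
      convexHull ℝ ((fun S : Finset (Finset (Fin n)) => ∑ e ∈ S, chi n e) '' {S | S ⊆ A}) := by
  classical
  induction A using Finset.induction_on with
  | empty =>
      refine subset_convexHull ℝ _ ?_
      exact ⟨∅, by simp, by simp⟩
  | @insert a A ha ih =>
      have hmono : ((fun S : Finset (Finset (Fin n)) => ∑ e ∈ S, chi n e) '' {S | S ⊆ A})
          ⊆ ((fun S : Finset (Finset (Fin n)) => ∑ e ∈ S, chi n e) '' {S | S ⊆ insert a A}) :=
        Set.image_mono fun S hs => hs.trans (Finset.subset_insert a A)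
      set T := (fun S : Finset (Finset (Fin n)) => ∑ e ∈ S, chi n e) '' {S | S ⊆ insert a A}
      have hx : (∑ e ∈ A, p e • chi n e) ∈ convexHull ℝ T :=
        convexHull_mono hmono ih
      have hxa : chi n a + (∑ e ∈ A, p e • chi n e) ∈ convexHull ℝ T := by
        have himg := AffineMap.image_convexHull
          (𝕜 := ℝ) (AffineEquiv.constVAdd ℝ (Fin n → ℝ) (chi n a)).toAffineMap
          ((fun S : Finset (Finset (Fin n)) => ∑ e ∈ S, chi n e) '' {S | S ⊆ A})
        have hmem : chi n a + (∑ e ∈ A, p e • chi n e) ∈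
            (AffineEquiv.constVAdd ℝ (Fin n → ℝ) (chi n a)).toAffineMap ''
              (convexHull ℝ ((fun S : Finset (Finset (Fin n)) => ∑ e ∈ S, chi n e)
                '' {S | S ⊆ A})) :=
          ⟨_, ih, rfl⟩
        rw [himg] at hmem
        refine convexHull_mono ?_ hmem
        rintro _ ⟨_, ⟨S, hS, rfl⟩, rfl⟩
        have haS : a ∉ S := fun h => ha (hS h)
        refine ⟨insert a S, Finset.insert_subset_insert a hS, ?_⟩
        show ∑ e ∈ insert a S, chi n e = _
        rw [Finset.sum_insert haS]
        rfl
      have hcomb := (convex_convexHull ℝ T) hx hxa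
        (a := 1 - p a) (b := p a) (by linarith [(hp a).2]) (hp a).1 (by ring)
      rw [Finset.sum_insert ha]
      convert hcomb using 1
      module

lemma convexHull_Dset_eq_Zset : convexHull ℝ (Dset n s) = Zset n s := by
  apply subset_antisymm
  · exact convexHull_min Dset_subset_Zset Zset_convex
  · rintro z ⟨p, hp, rfl⟩
    have h := cube_sum_mem_convexHull (Edges n s) p hp
    have himg : ((fun S : Finset (Finset (Fin n)) => ∑ e ∈ S, chi n e) '' {S | S ⊆ Edges n s})
        ⊆ Dset n s := by
      rintro _ ⟨S, hS, rfl⟩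
      exact subsetSum_mem_Dset S hS
    exact convexHull_mono himg h

lemma interior_subset_Rset {y : Fin n → ℝ} (hy : y ∈ interior (Zset n s)) :
    y ∈ Rset n s := by
  classical
  obtain ⟨ε, hε, hball⟩ := Metric.isOpen_iff.1 isOpen_interior y hy
  have hball' : Metric.ball y ε ⊆ Zset n s := hball.trans interior_subset
  set Φ : (Fin n → ℝ) → ℝ := fun x =>
    (∑ e ∈ Edges n s, Real.log (1 + Real.exp (∑ v ∈ e, x v))) - ∑ v, y v * x v with hΦ
  have hδ : (0:ℝ) < ε / 2 := by linarith
  -- coercivity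
  have hcoer : ∀ x : Fin n → ℝ, (ε / 2) * ‖x‖ ≤ Φ x := by
    intro x
    rcases eq_or_ne x 0 with rfl | hx0
    · have h0 : Φ 0 = ∑ e ∈ Edges n s, Real.log (1 + Real.exp (∑ v ∈ e, (0:ℝ))) := by
        simp [hΦ]
      rw [h0]
      simpa using Finset.sum_nonneg fun e (_ : e ∈ Edges n s) =>
        loglik_nonneg (∑ v ∈ e, (0:ℝ))
    · have hxn : (0:ℝ) < ‖x‖ := norm_pos_iff.2 hx0
      set u : Fin n → ℝ := ‖x‖⁻¹ • x with hu
      have hun : ‖u‖ = 1 := by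
        rw [hu, norm_smul, norm_inv, norm_norm, inv_mul_cancel₀ hxn.ne']
      have hmem : y + (ε/2) • u ∈ Zset n s := by
        apply hball'
        rw [Metric.mem_ball, dist_eq_norm]
        simp only [add_sub_cancel_left]
        rw [norm_smul, hun, Real.norm_eq_abs, abs_of_pos hδ, mul_one]
        linarith
      obtain ⟨p, hp, hpeq⟩ := hmem
      have h1 : ∀ v, y v + (ε/2) * u v = ∑ e ∈ Edges n s, p e * chi n e v := by
        intro v
        have h := congrFun hpeq v
        rw [Lmap_apply_coord] at h
        simpa using h.symm
      have hkey : ∑ v, (y v + (ε/2) * u v) * x v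
          = ∑ e ∈ Edges n s, p e * ∑ w ∈ e, x w := by
        calc ∑ v, (y v + (ε/2) * u v) * x v
            = ∑ v, (∑ e ∈ Edges n s, p e * chi n e v) * x v :=
              Finset.sum_congr rfl fun v _ => by rw [h1]
          _ = ∑ v, ∑ e ∈ Edges n s, p e * chi n e v * x v :=
              Finset.sum_congr rfl fun v _ => Finset.sum_mul _ _ _
          _ = ∑ e ∈ Edges n s, ∑ v, p e * chi n e v * x v := Finset.sum_comm
          _ = ∑ e ∈ Edges n s, p e * ∑ v, chi n e v * x v := by
              refine Finset.sum_congr rfl fun e _ => ?_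
              rw [Finset.mul_sum]
              exact Finset.sum_congr rfl fun v _ => by ring
          _ = ∑ e ∈ Edges n s, p e * ∑ w ∈ e, x w :=
              Finset.sum_congr rfl fun e _ => by rw [sum_chi_mul]
      have hb1 : ∀ e ∈ Edges n s,
          p e * (∑ w ∈ e, x w) ≤ Real.log (1 + Real.exp (∑ w ∈ e, x w)) := by
        intro e _
        rcases le_or_gt 0 (∑ w ∈ e, x w) with h | h
        · calc p e * (∑ w ∈ e, x w) ≤ 1 * (∑ w ∈ e, x w) :=
              mul_le_mul_of_nonneg_right (hp e).2 h
            _ = ∑ w ∈ e, x w := one_mul _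
            _ ≤ _ := le_loglik _
        · calc p e * (∑ w ∈ e, x w) ≤ 0 :=
              mul_nonpos_of_nonneg_of_nonpos (hp e).1 h.le
            _ ≤ _ := loglik_nonneg _
      have hsum : ∑ v, (y v + (ε/2) * u v) * x v
          ≤ ∑ e ∈ Edges n s, Real.log (1 + Real.exp (∑ w ∈ e, x w)) := by
        rw [hkey]
        exact Finset.sum_le_sum hb1
      have hxx : ‖x‖ ≤ ∑ v, u v * x v := by
        have hle : ‖x‖ ≤ Real.sqrt (∑ v, x v ^ 2) := by
          rw [pi_norm_le_iff_of_nonneg (Real.sqrt_nonneg _)]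
          intro v
          rw [Real.norm_eq_abs, ← Real.sqrt_sq_eq_abs (x v)]
          exact Real.sqrt_le_sqrt
            (Finset.single_le_sum (fun w _ => sq_nonneg (x w)) (Finset.mem_univ v))
        have h2 : ‖x‖ ^ 2 ≤ ∑ v, x v ^ 2 := by
          calc ‖x‖ ^ 2 ≤ (Real.sqrt (∑ v, x v ^ 2)) ^ 2 :=
              pow_le_pow_left₀ (norm_nonneg x) hle 2
            _ = ∑ v, x v ^ 2 :=
              Real.sq_sqrt (Finset.sum_nonneg fun v _ => sq_nonneg _)
        have h3 : ∑ v, u v * x v = ‖x‖⁻¹ * ∑ v, x v ^ 2 := by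
          rw [Finset.mul_sum]
          refine Finset.sum_congr rfl fun v _ => ?_
          rw [hu]
          simp only [Pi.smul_apply, smul_eq_mul]
          ring
        rw [h3]
        calc ‖x‖ = ‖x‖⁻¹ * ‖x‖ ^ 2 := by field_simp [hxn.ne']
          _ ≤ ‖x‖⁻¹ * ∑ v, x v ^ 2 :=
            mul_le_mul_of_nonneg_left h2 (inv_nonneg.2 hxn.le)
      have hexpand : ∑ v, (y v + (ε/2) * u v) * x v
          = (∑ v, y v * x v) + (ε/2) * (∑ v, u v * x v) := by
        rw [Finset.mul_sum, ← Finset.sum_add_distrib]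
        exact Finset.sum_congr rfl fun v _ => by ring
      have hfin : (ε/2) * ‖x‖ ≤ (ε/2) * (∑ v, u v * x v) :=
        mul_le_mul_of_nonneg_left hxx hδ.le
      rw [hexpand] at hsum
      rw [hΦ]
      dsimp only
      linarith
  -- existence of a global minimizer
  set R0 : ℝ := (|Φ 0| + 1) / (ε/2) with hR0def
  have hR0 : 0 < R0 := div_pos (by positivity) hδ
  have hK : IsCompact (Metric.closedBall (0 : Fin n → ℝ) R0) := isCompact_closedBall _ _
  have hne : (Metric.closedBall (0 : Fin n → ℝ) R0).Nonempty :=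
    ⟨0, Metric.mem_closedBall_self hR0.le⟩
  have hΦc : Continuous Φ := by
    apply Continuous.sub
    · exact continuous_finset_sum _ fun e _ =>
        continuous_loglik.comp (continuous_finset_sum _ fun v _ => continuous_apply v)
    · exact continuous_finset_sum _ fun v _ => continuous_const.mul (continuous_apply v)
  obtain ⟨x₀, hx₀K, hx₀min⟩ := hK.exists_isMinOn hne hΦc.continuousOn
  have hglobal : ∀ x, Φ x₀ ≤ Φ x := by
    intro x
    by_cases hx : x ∈ Metric.closedBall (0 : Fin n → ℝ) R0
    · exact hx₀min hx
    · have h1 : R0 < ‖x‖ := by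
        rw [Metric.mem_closedBall, dist_zero_right, not_le] at hx
        exact hx
      have h2 : Φ x₀ ≤ Φ 0 := hx₀min (Metric.mem_closedBall_self hR0.le)
      have h3 : (ε/2) * ‖x‖ ≤ Φ x := hcoer x
      have h4 : (ε/2) * R0 < (ε/2) * ‖x‖ := mul_lt_mul_of_pos_left h1 hδ
      have h5 : (ε/2) * R0 = |Φ 0| + 1 := by
        rw [hR0def, mul_div_cancel₀ _ hδ.ne']
      have h6 := le_abs_self (Φ 0)
      have : Φ x₀ < Φ x := by
        calc Φ x₀ ≤ Φ 0 := h2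
          _ ≤ |Φ 0| := h6
          _ < |Φ 0| + 1 := by linarith
          _ = (ε/2) * R0 := h5.symm
          _ < (ε/2) * ‖x‖ := h4
          _ ≤ Φ x := h3
      exact this.le
  -- first-order conditions
  have hEq : ∀ v, expectedDegree n s x₀ v = y v := by
    intro v
    set ψ : ℝ → ℝ := fun t =>
      (∑ e ∈ Edges n s, Real.log (1 + Real.exp ((∑ w ∈ e, x₀ w) + t * chi n e v)))
        - ((∑ w, y w * x₀ w) + t * y v) with hψ
    have hψΦ : ∀ t, ψ t = Φ (x₀ + t • (Pi.single v 1 : Fin n → ℝ)) := by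
      intro t
      rw [hψ, hΦ]
      dsimp only
      congr 1
      · refine Finset.sum_congr rfl fun e _ => ?_
        congr 1
        congr 1
        have : ∑ w ∈ e, (x₀ + t • (Pi.single v 1 : Fin n → ℝ)) w
            = (∑ w ∈ e, x₀ w) + t * chi n e v := by
          simp only [Pi.add_apply, Pi.smul_apply, smul_eq_mul]
          rw [Finset.sum_add_distrib, ← Finset.mul_sum, sum_single_ite]
        rw [this]
      · have h2 : ∀ w, y w * (x₀ + t • (Pi.single v 1 : Fin n → ℝ)) w
            = y w * x₀ w + (if w = v then t * y v else 0) := by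
          intro w
          by_cases h : w = v
          · subst h; simp [Pi.single_apply]; ring
          · simp [Pi.single_apply, h]
        calc ∑ w, y w * x₀ w + t * y v
            = (∑ w, y w * x₀ w) + ∑ w, (if w = v then t * y v else 0) := by
              rw [Finset.sum_ite_eq' Finset.univ v (fun _ => t * y v)]
              simp
          _ = ∑ w, (y w * x₀ w + if w = v then t * y v else 0) :=
              Finset.sum_add_distrib.symm
          _ = ∑ w, y w * (x₀ + t • (Pi.single v 1 : Fin n → ℝ)) w :=
              Finset.sum_congr rfl fun w _ => (h2 w).symm
    have hd : HasDerivAt ψ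
        ((∑ e ∈ Edges n s, logistic (∑ w ∈ e, x₀ w) * chi n e v) - y v) 0 := by
      rw [hψ]
      apply HasDerivAt.sub
      · apply HasDerivAt.fun_sum
        intro e _
        have hinner : HasDerivAt (fun t : ℝ => (∑ w ∈ e, x₀ w) + t * chi n e v)
            (chi n e v) 0 := (hasDerivAt_mul_const (chi n e v)).const_add _
        have h2 := (hasDerivAt_loglik
          ((fun t : ℝ => (∑ w ∈ e, x₀ w) + t * chi n e v) 0)).comp 0 hinner
        simpa [Function.comp_def] using h2
      · exact (hasDerivAt_mul_const (y v)).const_add _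
    have hloc : IsLocalMin ψ 0 := by
      refine Filter.Eventually.of_forall fun t => ?_
      have h0 : ψ 0 = Φ x₀ := by rw [hψΦ 0]; simp
      rw [h0, hψΦ t]
      exact hglobal _
    have hzero := hloc.hasDerivAt_eq_zero hd
    rw [expectedDegree_eq]
    exact sub_eq_zero.1 hzero
  exact ⟨x₀, funext fun v => (hEq v).symm⟩

lemma chi_mem_range (e : Finset (Fin n)) (he : e ∈ Edges n s) :
    chi n e ∈ LinearMap.range (Lmap n s) := by
  classical
  refine ⟨fun e' => if e' = e then 1 else 0, ?_⟩
  show (∑ e' ∈ Edges n s, (if e' = e then (1:ℝ) else 0) • chi n e') = chi n e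
  have h : ∀ e' ∈ Edges n s, (if e' = e then (1:ℝ) else 0) • chi n e'
      = if e' = e then chi n e' else 0 := fun e' _ => by split_ifs <;> simp
  rw [Finset.sum_congr rfl h, Finset.sum_ite_eq' (Edges n s) e (chi n), if_pos he]

lemma mem_Edges_iff (e : Finset (Fin n)) : e ∈ Edges n s ↔ e.card = s := by
  simp [Edges]

lemma diff_single_mem_range (hs2 : 2 ≤ s) (hsn : s < n) {u v : Fin n} (huv : u ≠ v) :
    (Pi.single u (1:ℝ) - Pi.single v 1) ∈ LinearMap.range (Lmap n s) := by
  classical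
  have hu' : ({u} : Finset (Fin n)) ⊆ Finset.univ.erase v := by
    simp [Finset.singleton_subset_iff, Finset.mem_erase, huv]
  have hcard : s ≤ (Finset.univ.erase v).card := by
    rw [Finset.card_erase_of_mem (Finset.mem_univ v), Finset.card_univ, Fintype.card_fin]
    omega
  obtain ⟨e, hue, hev, hecard⟩ := Finset.exists_subsuperset_card_eq (n := s) hu'
    (by simp only [Finset.card_singleton]; omega) hcard
  have hu : u ∈ e := hue (Finset.mem_singleton_self u)
  have hv : v ∉ e := fun h => absurd rfl (Finset.mem_erase.1 (hev h)).1
  have hve : v ∉ e.erase u := fun h => hv (Finset.mem_of_mem_erase h)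
  have he'card : (insert v (e.erase u)).card = s := by
    rw [Finset.card_insert_of_notMem hve, Finset.card_erase_of_mem hu, hecard]
    omega
  have hchi : chi n e - chi n (insert v (e.erase u)) = Pi.single u 1 - Pi.single v 1 := by
    funext w
    simp only [Pi.sub_apply, chi, Finset.mem_insert, Finset.mem_erase, Pi.single_apply]
    by_cases hwu : w = u <;> by_cases hwv : w = v <;> simp_all
  rw [← hchi]
  exact sub_mem (chi_mem_range e ((mem_Edges_iff e).2 hecard))
    (chi_mem_range _ ((mem_Edges_iff _).2 he'card))

lemma chi_eq_sum_single (e : Finset (Fin n)) :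
    chi n e = ∑ v ∈ e, Pi.single v (1:ℝ) := by
  funext w
  rw [Finset.sum_apply]
  simp only [Pi.single_apply, chi]
  rw [Finset.sum_ite_eq e w (fun _ => (1:ℝ))]

lemma single_mem_range (hs2 : 2 ≤ s) (hsn : s < n) (u : Fin n) :
    Pi.single u (1:ℝ) ∈ LinearMap.range (Lmap n s) := by
  classical
  obtain ⟨e, hue, -, hecard⟩ := Finset.exists_subsuperset_card_eq (n := s)
    (Finset.subset_univ {u}) (by simp only [Finset.card_singleton]; omega)
    (by rw [Finset.card_univ, Fintype.card_fin]; omega)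
  have hu : u ∈ e := hue (Finset.mem_singleton_self u)
  have key : (s:ℝ) • (Pi.single u 1 : Fin n → ℝ)
      = chi n e + ∑ v ∈ e.erase u, ((Pi.single u 1 : Fin n → ℝ) - Pi.single v 1) := by
    have h1 : chi n e = (Pi.single u 1 : Fin n → ℝ) + ∑ v ∈ e.erase u, Pi.single v (1:ℝ) := by
      rw [chi_eq_sum_single]
      exact (Finset.add_sum_erase e (fun v => Pi.single v (1:ℝ)) hu).symm
    rw [h1, Finset.sum_sub_distrib, Finset.sum_const, Finset.card_erase_of_mem hu, hecard,
      ← Nat.cast_smul_eq_nsmul ℝ (s-1) (Pi.single u 1 : Fin n → ℝ), Nat.cast_sub (by omega : 1 ≤ s)]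
    push_cast
    module
  have : (Pi.single u 1 : Fin n → ℝ) = (s:ℝ)⁻¹ • ((s:ℝ) • (Pi.single u 1 : Fin n → ℝ)) := by
    rw [inv_smul_smul₀ (by exact_mod_cast (by omega : s ≠ 0))]
  rw [this, key]
  refine Submodule.smul_mem _ _ (add_mem (chi_mem_range e ((mem_Edges_iff e).2 hecard))
    (Submodule.sum_mem _ fun v hv => ?_))
  exact diff_single_mem_range hs2 hsn (Ne.symm (Finset.mem_erase.1 hv).1)

lemma lmap_range_top (hs2 : 2 ≤ s) (hsn : s < n) : LinearMap.range (Lmap n s) = ⊤ := by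
  rw [eq_top_iff]
  rintro x -
  have hx : x = ∑ v, x v • (Pi.single v 1 : Fin n → ℝ) := by
    funext w
    rw [Finset.sum_apply]
    simp [Pi.single_apply, mul_ite, Finset.sum_ite_eq]
  rw [hx]
  exact Submodule.sum_mem _ fun v _ => Submodule.smul_mem _ _ (single_mem_range hs2 hsn v)

lemma interior_Zset_nonempty (hs2 : 2 ≤ s) (hsn : s < n) :
    (interior (Zset n s)).Nonempty := by
  classical
  set M : ((Finset (Fin n)) → ℝ) →L[ℝ] (Fin n → ℝ) :=
    LinearMap.toContinuousLinearMap (Lmap n s) with hM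
  have hMapp : ∀ p, M p = Lmap n s p := fun p => rfl
  have hsurj : Function.Surjective M := by
    intro x
    have hx : x ∈ LinearMap.range (Lmap n s) := by
      rw [lmap_range_top hs2 hsn]; trivial
    obtain ⟨p, hp⟩ := hx
    exact ⟨p, by rw [hMapp, hp]⟩
  have hopen : IsOpenMap M := M.isOpenMap hsurj
  have hUeq : {p : Finset (Fin n) → ℝ | ∀ e, p e ∈ Set.Ioo (0:ℝ) 1}
      = Set.pi Set.univ fun _ => Set.Ioo (0:ℝ) 1 := by
    ext p; exact ⟨fun h i _ => h i, fun h e => h e (Set.mem_univ e)⟩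
  have hU : IsOpen {p : Finset (Fin n) → ℝ | ∀ e, p e ∈ Set.Ioo (0:ℝ) 1} := by
    rw [hUeq]
    exact isOpen_set_pi Set.finite_univ fun _ _ => isOpen_Ioo
  have hsub : M '' {p | ∀ e, p e ∈ Set.Ioo (0:ℝ) 1} ⊆ Zset n s := by
    rintro _ ⟨p, hp, rfl⟩
    exact ⟨p, fun e => Set.Ioo_subset_Icc_self (hp e), (hMapp p).symm⟩
  have hne : (M '' {p | ∀ e, p e ∈ Set.Ioo (0:ℝ) 1}).Nonempty :=
    ⟨M (fun _ => 1/2), ⟨fun _ => 1/2, fun e => by norm_num, rfl⟩⟩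
  obtain ⟨z, hz⟩ := hne
  exact ⟨z, (IsOpen.subset_interior_iff (hopen _ hU)).2 hsub hz⟩

lemma edges_top : Edges n n = {Finset.univ} := by
  ext e
  simp only [Edges, Finset.mem_filter, Finset.mem_univ, true_and, Finset.mem_singleton]
  constructor
  · intro h; exact Finset.eq_univ_of_card e (by simpa using h)
  · rintro rfl; simp

lemma logistic_log {c : ℝ} (h0 : 0 < c) (h1 : c < 1) :
    logistic (Real.log (c / (1 - c))) = c := by
  have h2 : 0 < 1 - c := by linarith
  have hr : 0 < c / (1 - c) := div_pos h0 h2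
  have h3 : 0 < 1 + c / (1 - c) := by linarith
  rw [logistic, Real.exp_log hr, div_eq_iff h3.ne']
  field_simp
  ring

lemma top_const_mem_Rset (hn : 1 ≤ n) {c : ℝ} (h0 : 0 < c) (h1 : c < 1) :
    (c • chi n Finset.univ) ∈ Rset n n := by
  refine ⟨fun _ => Real.log (c / (1 - c)) / n, ?_⟩
  funext v
  have hf : Finset.univ.filter (fun e : Finset (Fin n) => e.card = n ∧ v ∈ e)
      = {Finset.univ} := by
    ext e
    simp only [Finset.mem_filter, Finset.mem_univ, true_and, Finset.mem_singleton]
    constructor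
    · rintro ⟨h, -⟩; exact Finset.eq_univ_of_card e (by simpa using h)
    · rintro rfl; simp
  have hnne : (n:ℝ) ≠ 0 := Nat.cast_ne_zero.2 (by omega)
  have hsum : ∑ u : Fin n, (Real.log (c / (1 - c)) / n) = Real.log (c / (1 - c)) := by
    rw [Finset.sum_const, Finset.card_univ, Fintype.card_fin, nsmul_eq_mul]
    field_simp
  show c • chi n Finset.univ v = expectedDegree n n _ v
  rw [expectedDegree, hf, Finset.sum_singleton, hsum, logistic_log h0 h1]
  simp [chi]

lemma Zset_top_sub_closure (hn : 1 ≤ n) : Zset n n ⊆ closure (Rset n n) := by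
  rintro _ ⟨p, hp, rfl⟩
  have hz : Lmap n n p = (p Finset.univ) • chi n Finset.univ := by
    show (∑ e ∈ Edges n n, p e • chi n e) = _
    rw [edges_top, Finset.sum_singleton]
  have hcont : Continuous fun c : ℝ => c • chi n Finset.univ :=
    continuous_id.smul continuous_const
  have hIoo : (fun c : ℝ => c • chi n Finset.univ) '' Set.Ioo 0 1 ⊆ Rset n n := by
    rintro _ ⟨c, hc, rfl⟩
    exact top_const_mem_Rset hn hc.1 hc.2
  have hmem : Lmap n n p ∈ (fun c : ℝ => c • chi n Finset.univ) '' closure (Set.Ioo (0:ℝ) 1) := by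
    rw [closure_Ioo zero_ne_one]
    exact ⟨p Finset.univ, hp Finset.univ, hz.symm⟩
  exact closure_mono hIoo (image_closure_subset_closure_image hcont hmem)

lemma Zset_sub_closure_Rset (hn : 1 ≤ n) (hs2 : 2 ≤ s) (hsn : s ≤ n) :
    Zset n s ⊆ closure (Rset n s) := by
  rcases hsn.lt_or_eq with hlt | rfl
  · intro z hz
    obtain ⟨w, hw⟩ := interior_Zset_nonempty hs2 hlt
    apply mem_closure_iff_seq_limit.2
    refine ⟨fun k => z + ((1:ℝ)/(k+1)) • (w - z), fun k => ?_, ?_⟩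
    · apply interior_subset_Rset
      refine Zset_convex.add_smul_sub_mem_interior hz hw ⟨by positivity, ?_⟩
      rw [div_le_one (by positivity)]
      have : (0:ℝ) ≤ (k:ℝ) := Nat.cast_nonneg k
      linarith
    · have h0 : Tendsto (fun k : ℕ => (1:ℝ)/(k+1)) atTop (nhds 0) :=
        tendsto_one_div_add_atTop_nhds_zero_nat
      have := (h0.smul_const (w - z)).const_add z
      simpa using this
  · exact Zset_top_sub_closure (by omega)

end PropA3

/-- **Proposition A.3.**  For `2 ≤ s ≤ n`, the convex hull of the set `D_s` of all `s`-degree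
sequences of `s`-uniform hypergraphs on `[n]` equals the closure of the set `R_s` of all
expected degree sequences of the `s`-uniform hypergraph β-model. -/
theorem degree_convex_hull_eq_closure_expected
    (n s : ℕ) (hn : 1 ≤ n) (hs : 2 ≤ s) (hsn : s ≤ n) :
    convexHull ℝ
        {y : Fin n → ℝ | ∃ H : Finset (Fin n) → Bool,
          y = fun v => (degree n s H v : ℝ)}
      = closure
        {y : Fin n → ℝ | ∃ x : Fin n → ℝ, y = fun v => expectedDegree n s x v} := by
  show convexHull ℝ (PropA3.Dset n s) = closure (PropA3.Rset n s)
  rw [PropA3.convexHull_Dset_eq_Zset]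
  exact subset_antisymm (PropA3.Zset_sub_closure_Rset hn hs hsn)
    (closure_minimal PropA3.Rset_subset_Zset PropA3.Zset_isClosed)

end
end

section
/- Fix r ≥ 2, M > 0, 2 ≤ s ≤ r and β_s ∈ B(M). Let Σ_{n,s} and Γ_{n,s} be as follows: Σ_{n,s} has entries σ_s(u,v) = Σ_{e ∈ C([n],s): u,v ∈ e} exp(Σ_{w∈e} β_{s,w})/(1+exp(Σ_{w∈e} β_{s,w}))² with σ_s(u,u) = σ_s(u)², and Γ_{n,s} is diagonal with entries 1/σ_s(u)². Let Θ_{n,s} = Γ_{n,s}(I_n − Σ_{n,s}Γ_{n,s}) with entries θ_s(u,v). Then θ_s(u,v) = −σ_s(u,v)·1{u ≠ v}/(σ_s(u)²σ_s(v)²) for all u, v, and there is a constant C > 0 such that for all u, v, w ∈ [n], max{|θ_s(u,v)|, |θ_s(u,v) − θ_s(v,w)|} ≤ C·σ_{s,max}/(σ_{s,min}²·n²), where σ_{s,min} = min_{u<v} σ_s(u,v) and σ_{s,max} = max_{u<v} σ_s(u,v). -/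
open MeasureTheory ProbabilityTheory Filter Finset Matrix

noncomputable section

/-- The diagonal matrix `Γ_{n,s}` with entries `1/σ_s(u)²`. -/
def gammaMat (n s : ℕ) (β : Fin n → ℝ) : Matrix (Fin n) (Fin n) ℝ :=
  Matrix.diagonal fun u => 1 / covMat n s β u u

/-- The matrix `Θ_{n,s} = Γ_{n,s}(I_n − Σ_{n,s} Γ_{n,s})`. -/
def thetaMat (n s : ℕ) (β : Fin n → ℝ) : Matrix (Fin n) (Fin n) ℝ :=
  gammaMat n s β * (1 - covMat n s β * gammaMat n s β)

/-- The minimum off-diagonal entry `σ_{s,min} = min_{u < v} σ_s(u,v)` of `Σ_{n,s}`. -/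
def offDiagMin (n s : ℕ) (β : Fin n → ℝ) : ℝ :=
  ⨅ p : {p : Fin n × Fin n // p.1 < p.2}, covMat n s β p.1.1 p.1.2

/-- The maximum off-diagonal entry `σ_{s,max} = max_{u < v} σ_s(u,v)` of `Σ_{n,s}`. -/
def offDiagMax (n s : ℕ) (β : Fin n → ℝ) : ℝ :=
  ⨆ p : {p : Fin n × Fin n // p.1 < p.2}, covMat n s β p.1.1 p.1.2


lemma hbm_term_pos {n : ℕ} (β : Fin n → ℝ) (e : Finset (Fin n)) :
    0 < Real.exp (∑ w ∈ e, β w) / (1 + Real.exp (∑ w ∈ e, β w)) ^ 2 := by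
  have h1 := Real.exp_pos (∑ w ∈ e, β w)
  positivity

lemma hbm_covMat_symm (n s : ℕ) (β : Fin n → ℝ) (u v : Fin n) :
    covMat n s β u v = covMat n s β v u := by
  unfold covMat
  simp only [of_apply]
  apply Finset.sum_congr _ (fun _ _ => rfl)
  apply Finset.filter_congr
  intro e _
  tauto

lemma hbm_covMat_pos (n s : ℕ) (β : Fin n → ℝ) (hs : 2 ≤ s) (hn : s ≤ n) (u v : Fin n) :
    0 < covMat n s β u v := by
  rw [covMat, of_apply]
  apply Finset.sum_pos (fun e _ => hbm_term_pos β e)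
  obtain ⟨t, hsub, hcard⟩ := Finset.exists_superset_card_eq (s := {u, v}) (n := s)
    (le_trans (le_trans (Finset.card_insert_le _ _) (by simp)) hs) (by simpa using hn)
  have hu : u ∈ t := hsub (Finset.mem_insert_self u {v})
  have hv : v ∈ t := hsub (Finset.mem_insert_of_mem (Finset.mem_singleton_self v))
  exact ⟨t, by simp [Finset.mem_filter, hcard, hu, hv]⟩

lemma hbm_row_sum (n s : ℕ) (β : Fin n → ℝ) (hs : 1 ≤ s) (u : Fin n) :
    ∑ v ∈ Finset.univ.erase u, covMat n s β u v
      = ((s : ℝ) - 1) * covMat n s β u u := by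
  unfold covMat
  simp only [of_apply]
  have hfil : ∀ v : Fin n,
      (Finset.univ.filter fun e : Finset (Fin n) => e.card = s ∧ u ∈ e ∧ v ∈ e)
        = (Finset.univ.filter fun e : Finset (Fin n) => e.card = s ∧ u ∈ e ∧ u ∈ e).filter
            (fun e => v ∈ e) := by
    intro v
    rw [Finset.filter_filter]
    apply Finset.filter_congr
    intro e _
    tauto
  calc ∑ v ∈ Finset.univ.erase u,
        ∑ e ∈ Finset.univ.filter (fun e : Finset (Fin n) => e.card = s ∧ u ∈ e ∧ v ∈ e),
          Real.exp (∑ w ∈ e, β w) / (1 + Real.exp (∑ w ∈ e, β w)) ^ 2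
      = ∑ v ∈ Finset.univ.erase u,
        ∑ e ∈ Finset.univ.filter (fun e : Finset (Fin n) => e.card = s ∧ u ∈ e ∧ u ∈ e),
          (if v ∈ e then Real.exp (∑ w ∈ e, β w) / (1 + Real.exp (∑ w ∈ e, β w)) ^ 2 else 0) := by
        refine Finset.sum_congr rfl fun v _ => ?_
        rw [hfil v, Finset.sum_filter]
    _ = ∑ e ∈ Finset.univ.filter (fun e : Finset (Fin n) => e.card = s ∧ u ∈ e ∧ u ∈ e),
        ∑ v ∈ Finset.univ.erase u,
          (if v ∈ e then Real.exp (∑ w ∈ e, β w) / (1 + Real.exp (∑ w ∈ e, β w)) ^ 2 else 0) :=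
        Finset.sum_comm
    _ = ((s : ℝ) - 1) * ∑ e ∈ Finset.univ.filter
            (fun e : Finset (Fin n) => e.card = s ∧ u ∈ e ∧ u ∈ e),
          Real.exp (∑ w ∈ e, β w) / (1 + Real.exp (∑ w ∈ e, β w)) ^ 2 := by
        rw [Finset.mul_sum]
        refine Finset.sum_congr rfl fun e he => ?_
        simp only [Finset.mem_filter] at he
        rw [← Finset.sum_filter]
        have : (Finset.univ.erase u).filter (fun v => v ∈ e) = e.erase u := by
          ext x; simp [Finset.mem_erase, and_comm]
        rw [this, Finset.sum_const, Finset.card_erase_of_mem he.2.2.1, he.2.1,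
          nsmul_eq_mul, Nat.cast_sub hs, Nat.cast_one]

lemma hbm_theta_entry (n s : ℕ) (β : Fin n → ℝ) (h : ∀ x, covMat n s β x x ≠ 0) (u v : Fin n) :
    thetaMat n s β u v = if u = v then 0
      else -(covMat n s β u v) / (covMat n s β u u * covMat n s β v v) := by
  have hform : thetaMat n s β u v = (1 / covMat n s β u u) *
      ((if u = v then (1:ℝ) else 0) - covMat n s β u v * (1 / covMat n s β v v)) := by
    simp [thetaMat, gammaMat, Matrix.sub_apply, Matrix.one_apply]
  rw [hform]
  by_cases huv : u = v
  · subst huv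
    rw [if_pos rfl, if_pos rfl, mul_one_div, div_self (h u)]
    ring
  · rw [if_neg huv, if_neg huv]
    field_simp
    rw [zero_sub, neg_div, div_div, mul_comm (covMat n s β v v)]

/-- **Lemma C.3.**  For `β_s ∈ B(M)` and all large `n`, the entries of
`Θ_{n,s} = Γ_{n,s}(I − Σ_{n,s}Γ_{n,s})` satisfy
`θ_s(u,v) = −σ_s(u,v) 1{u ≠ v}/(σ_s(u)² σ_s(v)²)`, and there is a constant `C > 0` with
`max{|θ_s(u,v)|, |θ_s(u,v) − θ_s(v,w)|} ≤ C σ_{s,max}/(σ_{s,min}² n²)` for all `u, v, w`. -/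
theorem theta_matrix_entries_and_bound
    (r : ℕ) (hr : 2 ≤ r) (M : ℝ) (hM : 0 < M)
    (s : ℕ) (hs : 2 ≤ s) (hsr : s ≤ r) :
    ∃ C > 0, ∃ N : ℕ, ∀ n ≥ N, ∀ βs : Fin n → ℝ, (∀ v, |βs v| ≤ M) →
      (∀ u v : Fin n,
        thetaMat n s βs u v =
          if u = v then 0
          else -(covMat n s βs u v) / (covMat n s βs u u * covMat n s βs v v))
      ∧ (∀ u v w : Fin n,
          max |thetaMat n s βs u v| |thetaMat n s βs u v - thetaMat n s βs v w|
            ≤ C * offDiagMax n s βs / (offDiagMin n s βs ^ 2 * (n : ℝ) ^ 2)) := by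
  have hs0 : (0:ℝ) < (s:ℝ) := by exact_mod_cast Nat.lt_of_lt_of_le Nat.zero_lt_two hs
  refine ⟨8 * (s:ℝ)^2, by positivity, s, ?_⟩
  intro n hn βs hβ
  have hsn : s ≤ n := hn
  have hn2 : 2 ≤ n := le_trans hs hn
  have hnR : (2:ℝ) ≤ (n:ℝ) := by exact_mod_cast hn2
  have hsR : (2:ℝ) ≤ (s:ℝ) := by exact_mod_cast hs
  have hnpos : (0:ℝ) < (n:ℝ) := by linarith
  have hpos : ∀ u v : Fin n, 0 < covMat n s βs u v := hbm_covMat_pos n s βs hs hsn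
  have hne : ∀ x : Fin n, covMat n s βs x x ≠ 0 := fun x => (hpos x x).ne'
  have hentry := hbm_theta_entry n s βs hne
  refine ⟨hentry, ?_⟩
  haveI hnemp : Nonempty {p : Fin n × Fin n // p.1 < p.2} :=
    ⟨⟨(⟨0, by omega⟩, ⟨1, by omega⟩), by simp [Fin.lt_def]⟩⟩
  set σmin := offDiagMin n s βs with hσmin
  set σmax := offDiagMax n s βs with hσmax
  have hmin_pos : 0 < σmin := by
    obtain ⟨p, hpeq⟩ := exists_eq_ciInf_of_finite
      (f := fun p : {p : Fin n × Fin n // p.1 < p.2} => covMat n s βs p.1.1 p.1.2)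
    rw [hσmin, offDiagMin, ← hpeq]
    exact hpos _ _
  have hmin_le : ∀ u v : Fin n, u ≠ v → σmin ≤ covMat n s βs u v := by
    intro u v huv
    rcases lt_or_gt_of_ne huv with h | h
    · exact ciInf_le (f := fun p : {p : Fin n × Fin n // p.1 < p.2} => covMat n s βs p.1.1 p.1.2)
        (Set.Finite.bddBelow (Set.finite_range _)) ⟨(u, v), h⟩
    · rw [hbm_covMat_symm]
      exact ciInf_le (f := fun p : {p : Fin n × Fin n // p.1 < p.2} => covMat n s βs p.1.1 p.1.2)
        (Set.Finite.bddBelow (Set.finite_range _)) ⟨(v, u), h⟩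
  have hmax_ge : ∀ u v : Fin n, u ≠ v → covMat n s βs u v ≤ σmax := by
    intro u v huv
    rcases lt_or_gt_of_ne huv with h | h
    · exact le_ciSup (f := fun p : {p : Fin n × Fin n // p.1 < p.2} => covMat n s βs p.1.1 p.1.2)
        (Set.Finite.bddAbove (Set.finite_range _)) ⟨(u, v), h⟩
    · rw [hbm_covMat_symm]
      exact le_ciSup (f := fun p : {p : Fin n × Fin n // p.1 < p.2} => covMat n s βs p.1.1 p.1.2)
        (Set.Finite.bddAbove (Set.finite_range _)) ⟨(v, u), h⟩
  have hmax_pos : 0 < σmax := by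
    have h01 : (⟨0, by omega⟩ : Fin n) ≠ ⟨1, by omega⟩ := by
      intro h; simpa using congrArg Fin.val h
    exact lt_of_lt_of_le (hpos _ _) (hmax_ge _ _ h01)
  have hrow : ∀ u : Fin n, ((n:ℝ) - 1) * σmin ≤ ((s:ℝ) - 1) * covMat n s βs u u := by
    intro u
    rw [← hbm_row_sum n s βs (le_trans one_le_two hs) u]
    have hcard : (Finset.univ.erase u).card = n - 1 := by
      rw [Finset.card_erase_of_mem (Finset.mem_univ u), Finset.card_univ, Fintype.card_fin]
    have hsum := Finset.card_nsmul_le_sum (Finset.univ.erase u)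
      (fun v => covMat n s βs u v) σmin
      (fun v hv => hmin_le u v (Ne.symm (Finset.mem_erase.mp hv).1))
    rw [hcard, nsmul_eq_mul, Nat.cast_sub (by omega : 1 ≤ n), Nat.cast_one] at hsum
    exact hsum
  have hD : (0:ℝ) < σmin ^ 2 * (n:ℝ) ^ 2 := by positivity
  have key : ∀ u v : Fin n,
      |thetaMat n s βs u v| ≤ 4 * (s:ℝ)^2 * σmax / (σmin ^ 2 * (n:ℝ) ^ 2) := by
    intro u v
    by_cases huv : u = v
    · rw [hentry u v, if_pos huv, abs_zero]
      positivity
    · rw [hentry u v, if_neg huv, abs_div, abs_neg, abs_of_pos (hpos u v),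
        abs_of_pos (mul_pos (hpos u u) (hpos v v)), div_le_div_iff₀
          (mul_pos (hpos u u) (hpos v v)) hD]
      have hUpos := hpos u u
      have hVpos := hpos v v
      have h1 : ((n:ℝ) - 1) * σmin * (((n:ℝ) - 1) * σmin)
          ≤ ((s:ℝ) - 1) * covMat n s βs u u * (((s:ℝ) - 1) * covMat n s βs v v) :=
        mul_le_mul (hrow u) (hrow v) (by nlinarith) (by nlinarith)
      have h2 : σmin ^ 2 * (n:ℝ) ^ 2
          ≤ 4 * (s:ℝ)^2 * (covMat n s βs u u * covMat n s βs v v) := by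
        nlinarith [sq_nonneg σmin, mul_pos hUpos hVpos,
          mul_nonneg (mul_nonneg (by linarith : (0:ℝ) ≤ 3 * (n:ℝ) - 2)
            (by linarith : (0:ℝ) ≤ (n:ℝ) - 2)) (sq_nonneg σmin),
          mul_nonneg (by linarith : (0:ℝ) ≤ 2 * (s:ℝ) - 1)
            (le_of_lt (mul_pos hUpos hVpos))]
      have h3 := mul_le_mul (hmax_ge u v huv) h2 (le_of_lt hD) (le_of_lt hmax_pos)
      refine le_trans h3 (le_of_eq (by ring))
  intro u v w
  have hK : 0 ≤ 4 * (s:ℝ)^2 * σmax / (σmin ^ 2 * (n:ℝ) ^ 2) := by positivity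
  have heq : 8 * (s:ℝ)^2 * σmax / (σmin ^ 2 * (n:ℝ) ^ 2)
      = 4 * (s:ℝ)^2 * σmax / (σmin ^ 2 * (n:ℝ) ^ 2)
        + 4 * (s:ℝ)^2 * σmax / (σmin ^ 2 * (n:ℝ) ^ 2) := by ring
  refine max_le ?_ ?_
  · rw [heq]; linarith [key u v, hK]
  · calc |thetaMat n s βs u v - thetaMat n s βs v w|
        ≤ |thetaMat n s βs u v| + |thetaMat n s βs v w| := abs_sub _ _
      _ ≤ 8 * (s:ℝ)^2 * σmax / (σmin ^ 2 * (n:ℝ) ^ 2) := by rw [heq]; linarith [key u v, key v w]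


end
end
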